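/- arXiv:2412.17178 — 7 statements merged into one kernel-verified Lean document; each statement's English description precedes it below -/
import Mathlib

section
/- Let n ≥ 1 and u, v : {1,…,n} → ℝ. The factorizable matrix Q(u,v) is positive definite if and only if u_i v_i > 0 for all i ∈ {1,…,n} and u_i v_j (u_j v_i − u_i v_j) > 0 for all 1 ≤ i < j ≤ n. -/
open Matrix BigOperators

/-- The factorizable matrix `Q(u,v)` with entries `Q i j = u i * v j` for `i ≤ j`
and `Q i j = u j * v i` for `i > j`. -/
noncomputable def facQ (n : ℕ) (u v : Fin n → ℝ) : Matrix (Fin n) (Fin n) ℝ :=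
  Matrix.of fun i j => if i ≤ j then u i * v j else u j * v i

open Finset

lemma weakAbel (f g : ℕ → ℝ) :
    ∀ n : ℕ, 0 ≤ f 0 → (∀ k, k + 1 < n → f k ≤ f (k + 1)) →
    0 ≤ f (n - 1) * g n ^ 2 + ∑ k ∈ Finset.range n, f k * (g k ^ 2 - g (k + 1) ^ 2)
  | 0, h0, _ => by simpa using mul_nonneg h0 (sq_nonneg _)
  | (n + 1), h0, hm => by
    have IH := weakAbel f g n h0 (fun k hk => hm k (by omega))
    have hle : f (n - 1) ≤ f n := by
      rcases Nat.eq_zero_or_pos n with h | h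
      · simp [h]
      · have := hm (n - 1) (by omega)
        rwa [Nat.sub_add_cancel h] at this
    rw [Finset.sum_range_succ]
    simp only [Nat.add_sub_cancel]
    have h2 := mul_le_mul_of_nonneg_right hle (sq_nonneg (g n))
    nlinarith [IH]

lemma strictAbel (f g : ℕ → ℝ) :
    ∀ n : ℕ, 0 < f 0 → (∀ k, k + 1 < n → f k < f (k + 1)) → (∃ j, j < n ∧ g j ≠ 0) →
    0 < f (n - 1) * g n ^ 2 + ∑ k ∈ Finset.range n, f k * (g k ^ 2 - g (k + 1) ^ 2)
  | 0, h0, _, hj => by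
    obtain ⟨j, hj, _⟩ := hj; omega
  | (n + 1), h0, hm, hj => by
    have hle : f (n - 1) ≤ f n := by
      rcases Nat.eq_zero_or_pos n with h | h
      · simp [h]
      · have := hm (n - 1) (by omega)
        rw [Nat.sub_add_cancel h] at this
        exact this.le
    rw [Finset.sum_range_succ]
    simp only [Nat.add_sub_cancel]
    obtain ⟨j, hjn, hgj⟩ := hj
    rcases Nat.lt_or_ge j n with hlt | hge
    · have IH := strictAbel f g n h0 (fun k hk => hm k (by omega)) ⟨j, hlt, hgj⟩
      have h2 := mul_le_mul_of_nonneg_right hle (sq_nonneg (g n))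
      nlinarith [IH]
    · obtain rfl : j = n := by omega
      have hW := weakAbel f g j h0.le (fun k hk => (hm k (by omega)).le)
      have hg2 : 0 < g j ^ 2 := pow_two_pos_of_ne_zero hgj
      rcases Nat.eq_zero_or_pos j with h | h
      · rw [h] at hW hg2 ⊢
        simp only [Finset.range_zero, Finset.sum_empty] at *
        nlinarith
      · have hlt2 : f (j - 1) < f j := by
          have := hm (j - 1) (by omega)
          rwa [Nat.sub_add_cancel h] at this
        nlinarith [hW]

lemma gstep (n : ℕ) (v x : Fin n → ℝ) (i : Fin n) :
    (∑ j : Fin n, if (i : ℕ) ≤ (j : ℕ) then v j * x j else 0)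
      = v i * x i + ∑ j : Fin n, if (i : ℕ) + 1 ≤ (j : ℕ) then v j * x j else 0 := by
  have hpt : ∀ j : Fin n, (if (i : ℕ) ≤ (j : ℕ) then v j * x j else 0)
      = (if j = i then v j * x j else 0)
        + (if (i : ℕ) + 1 ≤ (j : ℕ) then v j * x j else 0) := by
    intro j
    rcases lt_trichotomy j i with h | h | h
    · have h' : (j : ℕ) < (i : ℕ) := h
      rw [if_neg (by omega), if_neg (ne_of_lt h), if_neg (by omega)]
      ring1
    · subst h
      rw [if_pos le_rfl, if_pos rfl, if_neg (by omega)]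
      ring1
    · have h' : (i : ℕ) < (j : ℕ) := h
      rw [if_pos (by omega), if_neg (ne_of_gt h), if_pos (by omega)]
      ring1
  rw [Finset.sum_congr rfl (fun j _ => hpt j), Finset.sum_add_distrib]
  congr 1
  simp

lemma facQ_form (n : ℕ) (u v x : Fin n → ℝ) :
    x ⬝ᵥ (facQ n u v *ᵥ x) =
      ∑ i : Fin n, (u i * v i * x i ^ 2
        + 2 * ∑ j : Fin n, if i < j then u i * v j * (x i * x j) else 0) := by
  have hL : x ⬝ᵥ (facQ n u v *ᵥ x)
      = ∑ i : Fin n, ∑ j : Fin n, x i * ((if i ≤ j then u i * v j else u j * v i) * x j) := by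
    simp [dotProduct, mulVec, facQ, Finset.mul_sum]
  rw [hL]
  have hsplit : ∀ i j : Fin n,
      x i * ((if i ≤ j then u i * v j else u j * v i) * x j)
        = (if j = i then u i * v i * x i ^ 2 else 0)
          + ((if i < j then u i * v j * (x i * x j) else 0)
          + (if j < i then u j * v i * (x j * x i) else 0)) := by
    intro i j
    rcases lt_trichotomy j i with h | h | h
    · rw [if_neg (not_le.mpr h), if_neg (ne_of_lt h), if_neg (asymm h), if_pos h]
      ring1
    · subst h
      simp only [le_refl, lt_irrefl, if_true, if_false, if_pos rfl]
      ring1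
    · rw [if_pos h.le, if_neg (ne_of_gt h), if_pos h, if_neg (asymm h)]
      ring1
  have hD : ∑ i : Fin n, ∑ j : Fin n, (if j = i then u i * v i * x i ^ 2 else 0)
      = ∑ i : Fin n, u i * v i * x i ^ 2 := by
    refine Finset.sum_congr rfl (fun i _ => ?_)
    simp
  have hB : ∑ i : Fin n, ∑ j : Fin n, (if j < i then u j * v i * (x j * x i) else 0)
      = ∑ i : Fin n, ∑ j : Fin n, (if i < j then u i * v j * (x i * x j) else 0) :=
    Finset.sum_comm
  simp only [hsplit, Finset.sum_add_distrib, two_mul]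
  rw [hD, hB]

lemma facQ_form2 (n : ℕ) (u v x : Fin n → ℝ) (hv : ∀ i, v i ≠ 0) :
    x ⬝ᵥ (facQ n u v *ᵥ x) =
      ∑ k ∈ Finset.range n,
        (if h : k < n then u ⟨k, h⟩ / v ⟨k, h⟩ else 0) *
          ((∑ i : Fin n, if k ≤ (i : ℕ) then v i * x i else 0) ^ 2 -
           (∑ i : Fin n, if k + 1 ≤ (i : ℕ) then v i * x i else 0) ^ 2) := by
  rw [facQ_form,
    ← Fin.sum_univ_eq_sum_range (fun k =>
      (if h : k < n then u ⟨k, h⟩ / v ⟨k, h⟩ else 0) *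
        ((∑ i : Fin n, if k ≤ (i : ℕ) then v i * x i else 0) ^ 2 -
         (∑ i : Fin n, if k + 1 ≤ (i : ℕ) then v i * x i else 0) ^ 2)) n]
  refine Finset.sum_congr rfl (fun i _ => ?_)
  rw [dif_pos i.isLt]
  have hS : (∑ j : Fin n, if i < j then u i * v j * (x i * x j) else 0)
      = (u i * x i) * ∑ j : Fin n, if (i : ℕ) + 1 ≤ (j : ℕ) then v j * x j else 0 := by
    rw [Finset.mul_sum]
    refine Finset.sum_congr rfl (fun j _ => ?_)
    rcases lt_or_ge i j with h | h
    · have h' : (i : ℕ) < (j : ℕ) := h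
      rw [if_pos h, if_pos (by omega)]
      ring1
    · have h' : (j : ℕ) ≤ (i : ℕ) := h
      rw [if_neg (not_lt.mpr h), if_neg (by omega), mul_zero]
  rw [gstep n v x i, hS]
  have hvi := hv i
  field_simp
  ring

lemma facQ_herm (n : ℕ) (u v : Fin n → ℝ) : (facQ n u v).IsHermitian := by
  unfold Matrix.IsHermitian
  ext i j
  simp only [conjTranspose_apply, facQ, Matrix.of_apply, star_trivial]
  rcases lt_trichotomy i j with h | h | h
  · rw [if_neg (not_le.mpr h), if_pos h.le]
  · subst h; simp
  · rw [if_pos h.le, if_neg (not_le.mpr h)]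

theorem stmt_0 (n : ℕ) (hn : 1 ≤ n) (u v : Fin n → ℝ) :
    (facQ n u v).PosDef ↔
      ((∀ i : Fin n, 0 < u i * v i) ∧
        ∀ i j : Fin n, i < j → 0 < u i * v j * (u j * v i - u i * v j)) := by
  constructor
  · intro h
    have hd : ∀ i : Fin n, 0 < u i * v i := by
      intro i
      have hx : (Pi.single i 1 : Fin n → ℝ) ≠ 0 := by
        intro H
        have := congrFun H i
        simp at this
      have h2 := h.dotProduct_mulVec_pos hx
      rw [star_trivial] at h2
      simpa [mulVec_single, single_dotProduct, facQ] using h2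
    refine ⟨hd, ?_⟩
    intro i j hij
    have hij' : i ≠ j := ne_of_lt hij
    have hxne : (Pi.single i (-(u i * v j)) + Pi.single j (u i * v i) : Fin n → ℝ) ≠ 0 := by
      intro H
      have hj := congrFun H j
      simp [Pi.single_eq_of_ne hij'.symm, Pi.single_eq_same] at hj
      rcases hj with h' | h' <;> [skip; skip] <;>
        exact absurd (by rw [h']; ring : u i * v i = 0) (ne_of_gt (hd i))
    have h2 := h.dotProduct_mulVec_pos hxne
    rw [star_trivial] at h2
    simp only [mulVec_add, mulVec_single, dotProduct_add, add_dotProduct,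
      single_dotProduct, Pi.add_apply, Pi.smul_apply, op_smul_eq_mul,
      Matrix.col_apply] at h2
    simp only [facQ, Matrix.of_apply, le_refl, if_true, if_pos hij.le,
      if_neg (not_le.mpr hij)] at h2
    nlinarith [hd i, hd j, h2]
  · rintro ⟨hd, ho⟩
    have hv : ∀ i : Fin n, v i ≠ 0 := fun i => right_ne_zero_of_mul (ne_of_gt (hd i))
    refine PosDef.of_dotProduct_mulVec_pos (facQ_herm n u v) ?_
    intro x hx
    rw [star_trivial, facQ_form2 n u v x hv]
    have hdiv : ∀ i : Fin n, u i / v i = (u i * v i) / (v i ^ 2) := by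
      intro i
      have hvi := hv i
      field_simp
    have h0 : 0 < (if h : 0 < n then u ⟨0, h⟩ / v ⟨0, h⟩ else 0) := by
      rw [dif_pos (by omega : 0 < n), hdiv]
      exact div_pos (hd _) (pow_two_pos_of_ne_zero (hv _))
    have hmono : ∀ k, k + 1 < n →
        (if h : k < n then u ⟨k, h⟩ / v ⟨k, h⟩ else 0)
          < (if h : k + 1 < n then u ⟨k + 1, h⟩ / v ⟨k + 1, h⟩ else 0) := by
      intro k hk
      have hk' : k < n := by omega
      rw [dif_pos hk', dif_pos hk]
      set i : Fin n := ⟨k, hk'⟩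
      set j : Fin n := ⟨k + 1, hk⟩
      rw [hdiv i, hdiv j, div_lt_div_iff₀ (pow_two_pos_of_ne_zero (hv i))
        (pow_two_pos_of_ne_zero (hv j))]
      have hP := ho i j (by simp [i, j, Fin.lt_def])
      nlinarith [mul_pos hP (pow_two_pos_of_ne_zero (hv i)), hd i, hd j]
    have hGz : ∀ m, n ≤ m → (∑ i : Fin n, if m ≤ (i : ℕ) then v i * x i else 0) = 0 :=
      fun m hm => Finset.sum_eq_zero fun i _ => if_neg (by omega)
    have hwit : ∃ j, j < n ∧ (∑ i : Fin n, if j ≤ (i : ℕ) then v i * x i else 0) ≠ 0 := by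
      by_contra hcon
      push_neg at hcon
      apply hx
      funext i
      have hstep := gstep n v x i
      have h1 : (∑ j : Fin n, if (i : ℕ) ≤ (j : ℕ) then v j * x j else 0) = 0 :=
        hcon _ i.isLt
      have h2 : (∑ j : Fin n, if (i : ℕ) + 1 ≤ (j : ℕ) then v j * x j else 0) = 0 := by
        rcases Nat.lt_or_ge ((i : ℕ) + 1) n with h' | h'
        · exact hcon _ h'
        · exact hGz _ h'
      rw [hstep, h2] at h1
      have hvx : v i * x i = 0 := by linarith
      rcases mul_eq_zero.mp hvx with h' | h'
      · exact absurd h' (hv i)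
      · exact h'
    have key := strictAbel
      (fun k => if h : k < n then u ⟨k, h⟩ / v ⟨k, h⟩ else 0)
      (fun k => ∑ i : Fin n, if k ≤ (i : ℕ) then v i * x i else 0)
      n h0 hmono hwit
    have hGn := hGz n le_rfl
    simp only [hGn] at key
    simpa using key
end

section
/- Let n ≥ 1 and u, v : {1,…,n} → ℝ satisfy u_i ≠ 0 for all i ∈ {1,…,n}, u_{i+1} v_i − u_i v_{i+1} ≠ 0 for all 1 ≤ i ≤ n−1, and u_n v_n ≠ 0. Then the factorizable matrix Q(u,v) is invertible and Q(u,v)⁻¹ = Σ_{i=1}^{n} δ_i γ_i γ_iᵀ. -/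
open Matrix BigOperators

/-- `δ_i = u_{i+1}/(u_i (u_{i+1} v_i − u_i v_{i+1}))` for `i ≤ n-1` and `δ_n = 1/(u_n v_n)`
(0-indexed: the last index uses the second formula). -/
noncomputable def facDelta (n : ℕ) (u v : Fin n → ℝ) (i : Fin n) : ℝ :=
  if h : (i : ℕ) + 1 < n then
    u ⟨(i : ℕ) + 1, h⟩ / (u i * (u ⟨(i : ℕ) + 1, h⟩ * v i - u i * v ⟨(i : ℕ) + 1, h⟩))
  else 1 / (u i * v i)

/-- `γ_i = e_i − θ_{i+1} e_{i+1}` with `θ_{i+1} = u_i / u_{i+1}` for `i ≤ n-1`, and `γ_n = e_n`. -/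
noncomputable def facGamma (n : ℕ) (u : Fin n → ℝ) (i : Fin n) : Fin n → ℝ := fun a =>
  if h : (i : ℕ) + 1 < n then
    (if a = i then 1 else 0) - (u i / u ⟨(i : ℕ) + 1, h⟩) * (if a = ⟨(i : ℕ) + 1, h⟩ then 1 else 0)
  else if a = i then 1 else 0

/-- auxiliary scalar `c_i` -/
noncomputable def facC (n : ℕ) (u v : Fin n → ℝ) (i : Fin n) : ℝ :=
  if h : (i : ℕ) + 1 < n then
    (u ⟨(i : ℕ) + 1, h⟩ * v i - u i * v ⟨(i : ℕ) + 1, h⟩) / u ⟨(i : ℕ) + 1, h⟩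
  else v i

lemma colQ (n : ℕ) (u v : Fin n → ℝ) (hu : ∀ i : Fin n, u i ≠ 0) (a i : Fin n) :
    ∑ k, facQ n u v a k * facGamma n u i k =
      if a ≤ i then u a * facC n u v i else 0 := by
  unfold facQ facGamma facC
  by_cases h : (i : ℕ) + 1 < n
  · simp only [dif_pos h, Matrix.of_apply, mul_sub, Finset.sum_sub_distrib,
      mul_ite, mul_one, mul_zero, Finset.sum_ite_eq', Finset.mem_univ, if_true,
      mul_comm]
    by_cases ha : a ≤ i
    · have ha1 : a ≤ (⟨(i : ℕ) + 1, h⟩ : Fin n) := by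
        simp only [Fin.le_def] at ha ⊢; omega
      rw [if_pos ha, if_pos ha1, if_pos ha]
      have := hu ⟨(i : ℕ) + 1, h⟩
      field_simp
    · rw [if_neg ha, if_neg ha]
      by_cases ha1 : a ≤ (⟨(i : ℕ) + 1, h⟩ : Fin n)
      · have hae : a = ⟨(i : ℕ) + 1, h⟩ := by
          simp only [Fin.le_def] at ha ha1
          exact Fin.ext (show (a : ℕ) = (i : ℕ) + 1 by omega)
        rw [if_pos ha1, hae]
        have := hu ⟨(i : ℕ) + 1, h⟩
        field_simp
        ring
      · rw [if_neg ha1]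
        have := hu ⟨(i : ℕ) + 1, h⟩
        field_simp
        ring
  · simp only [dif_neg h, Matrix.of_apply, mul_ite, mul_one, mul_zero,
      Finset.sum_ite_eq', Finset.mem_univ, if_true]
    have ha : a ≤ i := by simp only [Fin.le_def]; omega
    rw [if_pos ha, if_pos ha]

lemma deltaC (n : ℕ) (hn : 1 ≤ n) (u v : Fin n → ℝ)
    (hu : ∀ i : Fin n, u i ≠ 0)
    (h2 : ∀ (i : Fin n) (h : (i : ℕ) + 1 < n),
      u ⟨(i : ℕ) + 1, h⟩ * v i - u i * v ⟨(i : ℕ) + 1, h⟩ ≠ 0)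
    (h3 : u ⟨n - 1, Nat.sub_lt hn Nat.one_pos⟩ * v ⟨n - 1, Nat.sub_lt hn Nat.one_pos⟩ ≠ 0) (i : Fin n) :
    facDelta n u v i * facC n u v i = 1 / u i := by
  unfold facDelta facC
  by_cases h : (i : ℕ) + 1 < n
  · rw [dif_pos h, dif_pos h]
    have h1 := hu ⟨(i : ℕ) + 1, h⟩
    have hD := h2 i h
    have := hu i
    field_simp
  · rw [dif_neg h, dif_neg h]
    have hi : i = ⟨n - 1, by omega⟩ := Fin.ext (show (i : ℕ) = n - 1 by omega)
    have hv : v i ≠ 0 := by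
      rw [hi]; exact fun hz => h3 (by rw [hz, mul_zero])
    have := hu i
    field_simp

theorem stmt_1 (n : ℕ) (hn : 1 ≤ n) (u v : Fin n → ℝ)
    (hu : ∀ i : Fin n, u i ≠ 0)
    (h2 : ∀ (i : Fin n) (h : (i : ℕ) + 1 < n),
      u ⟨(i : ℕ) + 1, h⟩ * v i - u i * v ⟨(i : ℕ) + 1, h⟩ ≠ 0)
    (h3 : u ⟨n - 1, by omega⟩ * v ⟨n - 1, by omega⟩ ≠ 0) :
    IsUnit (facQ n u v) ∧
      (facQ n u v)⁻¹ =
        ∑ i : Fin n, facDelta n u v i •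
          Matrix.of (fun a b => facGamma n u i a * facGamma n u i b) := by
  set S := ∑ i : Fin n, facDelta n u v i •
      Matrix.of (fun a b => facGamma n u i a * facGamma n u i b) with hS
  have key : facQ n u v * S = 1 := by
    ext a b
    rw [Matrix.one_apply]
    have hrw : (facQ n u v * S) a b =
        ∑ i : Fin n, facDelta n u v i * facGamma n u i b *
          ∑ k, facQ n u v a k * facGamma n u i k := by
      rw [Matrix.mul_apply]
      simp only [hS, Matrix.sum_apply, Matrix.smul_apply, Matrix.of_apply,
        smul_eq_mul, Finset.mul_sum]
      rw [Finset.sum_comm]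
      exact Finset.sum_congr rfl fun i _ =>
        Finset.sum_congr rfl fun k _ => by ring
    rw [hrw]
    have hterm : ∀ i : Fin n,
        facDelta n u v i * facGamma n u i b * ∑ k, facQ n u v a k * facGamma n u i k
          = facGamma n u i b * (if a ≤ i then u a / u i else 0) := by
      intro i
      rw [colQ n u v hu a i]
      by_cases ha : a ≤ i
      · rw [if_pos ha, if_pos ha]
        have hdc := deltaC n hn u v hu h2 h3 i
        calc facDelta n u v i * facGamma n u i b * (u a * facC n u v i)
            = facGamma n u i b * (u a * (facDelta n u v i * facC n u v i)) := by ring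
          _ = _ := by rw [hdc]; ring
      · rw [if_neg ha, if_neg ha, mul_zero, mul_zero]
    rw [Finset.sum_congr rfl fun i _ => hterm i]
    have hgamma : ∀ i : Fin n, facGamma n u i b =
        (if b = i then 1 else 0) -
          (if h : (i : ℕ) + 1 < n then
            (u i / u ⟨(i : ℕ) + 1, h⟩) * (if b = ⟨(i : ℕ) + 1, h⟩ then 1 else 0)
          else 0) := by
      intro i
      unfold facGamma
      by_cases h : (i : ℕ) + 1 < n
      · rw [dif_pos h, dif_pos h]
      · rw [dif_neg h, dif_neg h, sub_zero]
    simp only [hgamma, sub_mul, Finset.sum_sub_distrib, ite_mul, one_mul, zero_mul,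
      Finset.sum_ite_eq, Finset.mem_univ, if_true]
    have hsecond : (∑ i : Fin n,
        (if h : (i : ℕ) + 1 < n then
          (u i / u ⟨(i : ℕ) + 1, h⟩) * (if b = ⟨(i : ℕ) + 1, h⟩ then 1 else 0)
        else 0) * (if a ≤ i then u a / u i else 0))
        = if hb : 1 ≤ (b : ℕ) then
            (u ⟨(b : ℕ) - 1, by omega⟩ / u b) *
              (if a ≤ (⟨(b : ℕ) - 1, by omega⟩ : Fin n) then
                u a / u ⟨(b : ℕ) - 1, by omega⟩ else 0)
          else 0 := by
      by_cases hb : 1 ≤ (b : ℕ)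
      · rw [dif_pos hb]
        rw [Finset.sum_eq_single (⟨(b : ℕ) - 1, by omega⟩ : Fin n)]
        · have h : ((⟨(b : ℕ) - 1, by omega⟩ : Fin n) : ℕ) + 1 < n := by
            simp only []; omega
          rw [dif_pos h]
          have hbe : b = (⟨((⟨(b : ℕ) - 1, by omega⟩ : Fin n) : ℕ) + 1, h⟩ : Fin n) :=
            Fin.ext (show (b : ℕ) = ((b : ℕ) - 1) + 1 by omega)
          rw [if_pos hbe, mul_one, ← hbe]
        · intro i _ hi
          by_cases h : (i : ℕ) + 1 < n
          · rw [dif_pos h]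
            have hne : b ≠ (⟨(i : ℕ) + 1, h⟩ : Fin n) := by
              intro hbe
              have hval : (b : ℕ) = (i : ℕ) + 1 := congrArg Fin.val hbe
              exact hi (Fin.ext (show (i : ℕ) = (b : ℕ) - 1 by omega))
            rw [if_neg hne, mul_zero, zero_mul]
          · rw [dif_neg h, zero_mul]
        · intro hmem; exact absurd (Finset.mem_univ _) hmem
      · rw [dif_neg hb]
        apply Finset.sum_eq_zero
        intro i _
        by_cases h : (i : ℕ) + 1 < n
        · rw [dif_pos h]
          have hne : b ≠ (⟨(i : ℕ) + 1, h⟩ : Fin n) := by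
            intro hbe
            have hval : (b : ℕ) = (i : ℕ) + 1 := congrArg Fin.val hbe
            omega
          rw [if_neg hne, mul_zero, zero_mul]
        · rw [dif_neg h, zero_mul]
    rw [hsecond]
    by_cases hb1 : 1 ≤ (b : ℕ)
    · rw [dif_pos hb1]
      by_cases hab : a ≤ (⟨(b : ℕ) - 1, by omega⟩ : Fin n)
      · have hab' : a ≤ b := by simp only [Fin.le_def] at hab ⊢; omega
        have hne : a ≠ b := by
          intro hae; subst hae; simp only [Fin.le_def] at hab; omega
        rw [if_pos hab, if_pos hab', if_neg hne]
        have hb' := hu b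
        have hb'' := hu (⟨(b : ℕ) - 1, by omega⟩ : Fin n)
        field_simp
        ring
      · by_cases hab' : a ≤ b
        · have hae : a = b := by
            simp only [Fin.le_def] at hab hab'
            exact Fin.ext (by omega)
          rw [if_neg hab, mul_zero, sub_zero, if_pos hab', if_pos hae, hae]
          exact div_self (hu b)
        · have hne : a ≠ b := fun hae => hab' (le_of_eq hae)
          rw [if_neg hab, mul_zero, sub_zero, if_neg hab', if_neg hne]
    · rw [dif_neg hb1, sub_zero]
      by_cases hab : a ≤ b
      · have hae : a = b := by
          simp only [Fin.le_def] at hab; exact Fin.ext (by omega)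
        rw [if_pos hab, if_pos hae, hae]
        exact div_self (hu b)
      · have hne : a ≠ b := fun hae => hab (le_of_eq hae)
        rw [if_neg hab, if_neg hne]
  have hdet : IsUnit (facQ n u v).det := Matrix.isUnit_det_of_right_inverse key
  exact ⟨(Matrix.isUnit_iff_isUnit_det _).2 hdet, Matrix.inv_eq_right_inv key⟩
end

section
/- Let n ≥ 1 and let u, v : {1,…,n} → ℝ satisfy Assumption 1. Let S = {t_1 < t_2 < … < t_k} be a nonempty subset of {1,…,n}. Then the principal submatrix Q_S of the factorizable matrix Q(u,v) is invertible and hat(Q_S⁻¹) = Σ_{ℓ=1}^{k−1} Λ_{t_ℓ→t_{ℓ+1}} + Λ_{t_k→n+1}. -/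
open Matrix BigOperators

/-- Assumption 1. -/
def Assumption1 (n : ℕ) (u v : Fin n → ℝ) : Prop :=
  (∀ i : Fin n, 0 < u i * v i) ∧
    ∀ i j : Fin n, i < j → 0 < u i * v j * (u j * v i - u i * v j)

/-- The principal submatrix of `Q` indexed by `S`. -/
noncomputable def subMat (n : ℕ) (Q : Matrix (Fin n) (Fin n) ℝ) (S : Finset (Fin n)) :
    Matrix {x : Fin n // x ∈ S} {x : Fin n // x ∈ S} ℝ :=
  Q.submatrix (fun p => (p : Fin n)) (fun p => (p : Fin n))

/-- The `n×n` matrix agreeing with `(Q_S)⁻¹` on `S×S` and `0` elsewhere. -/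
noncomputable def hatInv (n : ℕ) (Q : Matrix (Fin n) (Fin n) ℝ) (S : Finset (Fin n)) :
    Matrix (Fin n) (Fin n) ℝ :=
  Matrix.of fun a b =>
    if ha : a ∈ S then
      if hb : b ∈ S then (subMat n Q S)⁻¹ ⟨a, ha⟩ ⟨b, hb⟩ else 0
    else 0

/-- `Λ_{i→j} = (u_j/(u_i (u_j v_i − u_i v_j))) (e_i − (u_i/u_j) e_j)(e_i − (u_i/u_j) e_j)ᵀ`. -/
noncomputable def LamMid (n : ℕ) (u v : Fin n → ℝ) (i j : Fin n) :
    Matrix (Fin n) (Fin n) ℝ :=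
  (u j / (u i * (u j * v i - u i * v j))) •
    Matrix.of (fun a b =>
      ((if a = i then 1 else 0) - u i / u j * (if a = j then 1 else 0)) *
      ((if b = i then 1 else 0) - u i / u j * (if b = j then 1 else 0)))

/-- `Λ_{i→n+1} = (1/(u_i v_i)) e_i e_iᵀ`. -/
noncomputable def LamEnd (n : ℕ) (u v : Fin n → ℝ) (i : Fin n) :
    Matrix (Fin n) (Fin n) ℝ :=
  (1 / (u i * v i)) •
    Matrix.of (fun a b => (if a = i then (1 : ℝ) else 0) * (if b = i then 1 else 0))

namespace FacQAux

variable {k : ℕ}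

noncomputable def AA (a b : Fin k → ℝ) : Matrix (Fin k) (Fin k) ℝ :=
  Matrix.of fun p q => if p ≤ q then a p * b q else a q * b p

noncomputable def lamM (a b : Fin k → ℝ) (i j p q : Fin k) : ℝ :=
  (a j / (a i * (a j * b i - a i * b j))) *
    (((if p = i then (1:ℝ) else 0) - a i / a j * (if p = j then 1 else 0)) *
     ((if q = i then (1:ℝ) else 0) - a i / a j * (if q = j then 1 else 0)))

noncomputable def lamE (a b : Fin k → ℝ) (i p q : Fin k) : ℝ :=
  (1 / (a i * b i)) * ((if p = i then (1:ℝ) else 0) * (if q = i then 1 else 0))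

noncomputable def NN (hk : 0 < k) (a b : Fin k → ℝ) : Matrix (Fin k) (Fin k) ℝ :=
  Matrix.of fun p q =>
    (∑ ℓ : Fin k, if h : (ℓ:ℕ)+1 < k then lamM a b ℓ ⟨(ℓ:ℕ)+1, h⟩ p q else 0)
      + lamE a b ⟨k-1, by omega⟩ p q

lemma AA_le (a b : Fin k → ℝ) (p x : Fin k) (h : p ≤ x) : AA a b p x = a p * b x := by
  simp [AA, h]

lemma AA_ge (a b : Fin k → ℝ) (p x : Fin k) (h : x ≤ p) : AA a b p x = a x * b p := by
  rcases eq_or_lt_of_le h with h' | h'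
  · subst h'; simp [AA]
  · simp [AA, not_le.mpr h']

/-- total successor on `Fin k` -/
def fsucc (hk : 0 < k) (ℓ : Fin k) : Fin k := ⟨min ((ℓ:ℕ)+1) (k-1), by omega⟩

lemma fsucc_of_lt (hk : 0 < k) (ℓ : Fin k) (h : (ℓ:ℕ)+1 < k) :
    fsucc hk ℓ = ⟨(ℓ:ℕ)+1, h⟩ := by
  simp only [fsucc]; congr 1; omega

lemma coe_fsucc (hk : 0 < k) (ℓ : Fin k) (h : (ℓ:ℕ)+1 < k) :
    ((fsucc hk ℓ : Fin k) : ℕ) = (ℓ:ℕ)+1 := by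
  rw [fsucc_of_lt hk ℓ h]

lemma NN_apply (hk : 0 < k) (a b : Fin k → ℝ) (m q : Fin k) :
    NN hk a b m q = (∑ ℓ : Fin k,
        if (ℓ:ℕ)+1 < k then lamM a b ℓ (fsucc hk ℓ) m q else 0)
      + lamE a b ⟨k-1, by omega⟩ m q := by
  simp only [NN, Matrix.of_apply]
  congr 1
  apply Finset.sum_congr rfl
  intro ℓ _
  by_cases h : (ℓ:ℕ)+1 < k
  · rw [dif_pos h, if_pos h, fsucc_of_lt hk ℓ h]
  · rw [dif_neg h, if_neg h]

lemma sum1 (a b : Fin k → ℝ) (p q i j : Fin k) :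
    (∑ m : Fin k, AA a b p m * lamM a b i j m q)
      = (a j / (a i * (a j * b i - a i * b j))) *
        (((if q = i then (1:ℝ) else 0) - a i / a j * (if q = j then 1 else 0)) *
         (AA a b p i - a i / a j * AA a b p j)) := by
  have hpt : ∀ m : Fin k, AA a b p m * lamM a b i j m q
      = ((a j / (a i * (a j * b i - a i * b j))) *
          ((if q = i then (1:ℝ) else 0) - a i / a j * (if q = j then 1 else 0))) *
        ((if m = i then AA a b p m else 0) - a i / a j * (if m = j then AA a b p m else 0)) := by
    intro m
    rcases eq_or_ne m i with h1 | h1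
    · subst h1
      rcases eq_or_ne m j with h2 | h2
      · subst h2
        simp only [lamM, eq_self_iff_true, if_true]; ring
      · simp only [lamM, eq_self_iff_true, if_true, if_neg h2]; ring
    · rcases eq_or_ne m j with h2 | h2
      · subst h2
        simp only [lamM, eq_self_iff_true, if_true, if_neg h1]; ring
      · simp only [lamM, if_neg h1, if_neg h2]; ring
  simp only [hpt]
  rw [← Finset.mul_sum, Finset.sum_sub_distrib, ← Finset.mul_sum]
  rw [Finset.sum_ite_eq' Finset.univ i (fun m => AA a b p m),
      Finset.sum_ite_eq' Finset.univ j (fun m => AA a b p m)]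
  simp only [Finset.mem_univ, if_true]
  ring

lemma sumE (a b : Fin k → ℝ) (p q e : Fin k) :
    (∑ m : Fin k, AA a b p m * lamE a b e m q)
      = (1 / (a e * b e)) * (if q = e then 1 else 0) * AA a b p e := by
  have hpt : ∀ m : Fin k, AA a b p m * lamE a b e m q
      = if m = e then (1 / (a e * b e)) * (if q = e then 1 else 0) * AA a b p m else 0 := by
    intro m
    rcases eq_or_ne m e with h1 | h1
    · subst h1; simp only [lamE, eq_self_iff_true, if_true]; ring
    · simp only [lamE, if_neg h1]; ring
  simp only [hpt]
  rw [Finset.sum_ite_eq' Finset.univ e]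
  simp

lemma sum_delta_pred (q qp : Fin k) (hqp : (qp:ℕ)+1 = (q:ℕ)) (f : Fin k → ℝ) :
    (∑ x : Fin k, if (q:ℕ) = (x:ℕ)+1 then f x else 0) = f qp := by
  rw [Finset.sum_eq_single_of_mem qp (Finset.mem_univ _)]
  · exact if_pos (by omega)
  · intro x _ hx
    exact if_neg (fun hc => hx (Fin.ext (by omega)))

set_option maxHeartbeats 1000000 in
lemma key (hk : 0 < k) (a b : Fin k → ℝ)
    (h1 : ∀ p, 0 < a p * b p)
    (h2 : ∀ p q : Fin k, p < q → 0 < a p * b q * (a q * b p - a p * b q)) :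
    AA a b * NN hk a b = 1 := by
  have ha : ∀ x : Fin k, a x ≠ 0 := fun x =>
    (mul_ne_zero_iff.mp (ne_of_gt (h1 x))).1
  have hb : ∀ x : Fin k, b x ≠ 0 := fun x =>
    (mul_ne_zero_iff.mp (ne_of_gt (h1 x))).2
  have hltf : ∀ ℓ : Fin k, (ℓ:ℕ)+1 < k → ℓ < fsucc hk ℓ := by
    intro ℓ h
    rw [Fin.lt_def, coe_fsucc hk ℓ h]; omega
  have hd : ∀ ℓ : Fin k, (ℓ:ℕ)+1 < k →
      a (fsucc hk ℓ) * b ℓ - a ℓ * b (fsucc hk ℓ) ≠ 0 := by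
    intro ℓ h
    have := h2 ℓ (fsucc hk ℓ) (hltf ℓ h)
    intro hz
    rw [hz] at this
    simp at this
  set e : Fin k := ⟨k-1, by omega⟩ with he
  ext p q
  rw [Matrix.mul_apply]
  simp only [NN_apply, mul_add]
  rw [Finset.sum_add_distrib, sumE]
  simp only [Finset.mul_sum]
  rw [Finset.sum_comm]
  have step1 : ∀ ℓ : Fin k,
      (∑ m : Fin k, AA a b p m *
        (if (ℓ:ℕ)+1 < k then lamM a b ℓ (fsucc hk ℓ) m q else 0))
      = if (ℓ:ℕ)+1 < k then
          (a (fsucc hk ℓ) / (a ℓ * (a (fsucc hk ℓ) * b ℓ - a ℓ * b (fsucc hk ℓ)))) *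
            (((if q = ℓ then (1:ℝ) else 0)
                - a ℓ / a (fsucc hk ℓ) * (if q = fsucc hk ℓ then 1 else 0)) *
             (AA a b p ℓ - a ℓ / a (fsucc hk ℓ) * AA a b p (fsucc hk ℓ)))
        else 0 := by
    intro ℓ
    by_cases h : (ℓ:ℕ)+1 < k
    · simp only [if_pos h]
      exact sum1 a b p q ℓ (fsucc hk ℓ)
    · simp [if_neg h]
  simp only [step1]
  -- split the main sum into two delta-sums
  have step2 : ∀ ℓ : Fin k,
      (if (ℓ:ℕ)+1 < k then
          (a (fsucc hk ℓ) / (a ℓ * (a (fsucc hk ℓ) * b ℓ - a ℓ * b (fsucc hk ℓ)))) *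
            (((if q = ℓ then (1:ℝ) else 0)
                - a ℓ / a (fsucc hk ℓ) * (if q = fsucc hk ℓ then 1 else 0)) *
             (AA a b p ℓ - a ℓ / a (fsucc hk ℓ) * AA a b p (fsucc hk ℓ)))
        else 0)
      = (if q = ℓ then
          (if (ℓ:ℕ)+1 < k then
            (a (fsucc hk ℓ) / (a ℓ * (a (fsucc hk ℓ) * b ℓ - a ℓ * b (fsucc hk ℓ)))) *
             (AA a b p ℓ - a ℓ / a (fsucc hk ℓ) * AA a b p (fsucc hk ℓ)) else 0) else 0)
      - (if (q:ℕ) = (ℓ:ℕ)+1 then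
          (if (ℓ:ℕ)+1 < k then
            (a (fsucc hk ℓ) / (a ℓ * (a (fsucc hk ℓ) * b ℓ - a ℓ * b (fsucc hk ℓ)))) *
             (a ℓ / a (fsucc hk ℓ)) *
             (AA a b p ℓ - a ℓ / a (fsucc hk ℓ) * AA a b p (fsucc hk ℓ)) else 0) else 0) := by
    intro ℓ
    by_cases h : (ℓ:ℕ)+1 < k
    · have hqf : (q = fsucc hk ℓ) ↔ ((q:ℕ) = (ℓ:ℕ)+1) := by
        rw [Fin.ext_iff, coe_fsucc hk ℓ h]
      by_cases hq1 : q = ℓ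
      · have hq2 : ¬ ((q:ℕ) = (ℓ:ℕ)+1) := by subst hq1; omega
        rw [if_pos h, if_pos hq1, if_pos hq1, if_pos h, if_neg hq2,
            if_neg (fun hc => hq2 (hqf.mp hc))]
        ring
      · by_cases hq2 : (q:ℕ) = (ℓ:ℕ)+1
        · rw [if_pos h, if_neg hq1, if_neg hq1, if_pos hq2, if_pos h,
              if_pos (hqf.mpr hq2)]
          ring
        · rw [if_pos h, if_neg hq1, if_neg hq1, if_neg hq2,
              if_neg (fun hc => hq2 (hqf.mp hc))]
          ring
    · rw [if_neg h, if_neg h, if_neg h]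
      simp
  simp only [step2]
  rw [Finset.sum_sub_distrib]
  rw [Finset.sum_ite_eq Finset.univ q]
  simp only [Finset.mem_univ, if_true]
  rw [Matrix.one_apply]
  have hqk := q.isLt
  have hpk := p.isLt
  by_cases hq0 : (q:ℕ) = 0
  · rw [Finset.sum_eq_zero (fun x _ => if_neg (by omega))]
    by_cases hq1 : (q:ℕ)+1 < k
    · rw [if_pos hq1, if_neg (show ¬ q = (⟨k-1, by omega⟩ : Fin k) from
        fun hc => by have h5 : (q:ℕ) = k-1 := congrArg Fin.val hc; omega)]
      have hsq : q < fsucc hk q := hltf q hq1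
      have hsq' := coe_fsucc hk q hq1
      have hdq := hd q hq1
      by_cases hpq : p = q
      · subst hpq
        rw [if_pos rfl, AA_le a b p p le_rfl, AA_le a b p (fsucc hk p) (le_of_lt hsq)]
        field_simp [ha p, ha (fsucc hk p), hb p, hdq]
        ring
      · rw [if_neg hpq]
        have hqp : q < p := by
          rw [Fin.lt_def]; rw [Fin.ext_iff] at hpq; omega
        rw [AA_ge a b p q (le_of_lt hqp),
            AA_ge a b p (fsucc hk q) (by rw [Fin.le_def, hsq']; rw [Fin.lt_def] at hqp; omega)]
        field_simp [ha q, ha (fsucc hk q), hb q, hdq]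
        ring
    · have hqe : q = (⟨k-1, by omega⟩ : Fin k) := Fin.ext (show (q:ℕ) = k-1 by omega)
      have hpq : p = q := Fin.ext (by omega)
      rw [if_neg hq1, if_pos hqe, ← hqe, if_pos hpq]
      subst hpq
      rw [AA_le a b p p le_rfl]
      field_simp [ha p, hb p]
      norm_num
  · obtain ⟨qp, hqpv⟩ : ∃ x : Fin k, (x:ℕ) = (q:ℕ)-1 := ⟨⟨(q:ℕ)-1, by omega⟩, rfl⟩
    rw [sum_delta_pred q qp (by omega)]
    have h' : (qp:ℕ) + 1 < k := by omega
    have hfq : fsucc hk qp = q := by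
      apply Fin.ext
      rw [coe_fsucc hk qp h']
      omega
    rw [if_pos h', hfq]
    have hd' : a q * b qp - a qp * b q ≠ 0 := by
      have hlt2 : qp < q := by rw [Fin.lt_def]; omega
      have h6 := h2 qp q hlt2
      intro hz
      rw [hz] at h6
      simp at h6
    have hqpq : qp ≤ q := by rw [Fin.le_def]; omega
    by_cases hq1 : (q:ℕ)+1 < k
    · rw [if_pos hq1, if_neg (show ¬ q = (⟨k-1, by omega⟩ : Fin k) from
        fun hc => by have h5 : (q:ℕ) = k-1 := congrArg Fin.val hc; omega)]
      have hsq : q < fsucc hk q := hltf q hq1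
      have hsq' := coe_fsucc hk q hq1
      have hdq := hd q hq1
      rcases lt_trichotomy p q with h3 | h3 | h3
      · rw [if_neg (ne_of_lt h3), AA_le a b p q (le_of_lt h3),
            AA_le a b p (fsucc hk q) (le_of_lt (lt_trans h3 hsq)),
            AA_le a b p qp
              (by rw [Fin.le_def]; rw [Fin.lt_def] at h3; omega)]
        field_simp [ha q, ha (fsucc hk q), ha qp, hb q, hdq, hd']
        rw [mul_comm (b q) (a qp)]
        field_simp [hd']
        ring
      · subst h3
        rw [if_pos rfl, AA_le a b p p le_rfl, AA_le a b p (fsucc hk p) (le_of_lt hsq),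
            AA_ge a b p qp hqpq]
        have hz : a qp * b p - a qp / a p * (a p * b p) = 0 := by
          field_simp [ha p]
          ring
        rw [hz, mul_zero]
        field_simp [ha p, ha (fsucc hk p), hb p, hdq]
        ring
      · rw [if_neg (ne_of_gt h3), AA_ge a b p q (le_of_lt h3),
            AA_ge a b p (fsucc hk q) (by rw [Fin.le_def, hsq']; rw [Fin.lt_def] at h3; omega),
            AA_ge a b p qp (le_trans hqpq (le_of_lt h3))]
        field_simp [ha q, ha (fsucc hk q), ha qp, hb q, hdq, hd']
        ring
    · have hqe : q = (⟨k-1, by omega⟩ : Fin k) := Fin.ext (show (q:ℕ) = k-1 by omega)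
      rw [if_neg hq1, if_pos hqe, ← hqe]
      have hple : p ≤ q := by rw [Fin.le_def]; rw [Fin.ext_iff] at hqe; omega
      rcases lt_or_eq_of_le hple with h3 | h3
      · rw [if_neg (ne_of_lt h3), AA_le a b p q (le_of_lt h3),
            AA_le a b p qp
              (by rw [Fin.le_def]; rw [Fin.lt_def] at h3; omega)]
        field_simp [ha q, ha qp, hb q, hd']
        ring
      · subst h3
        rw [if_pos rfl, AA_le a b p p le_rfl,
            AA_ge a b p qp hqpq]
        field_simp [ha p, ha qp, hb p, hd']
        ring

end FacQAux


theorem stmt_3 (n : ℕ) (hn : 1 ≤ n) (u v : Fin n → ℝ) (hA : Assumption1 n u v)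
    (S : Finset (Fin n)) (k : ℕ) (hk : 0 < k) (t : Fin k → Fin n)
    (hmono : StrictMono t) (hrange : S = Finset.image t Finset.univ) :
    IsUnit (subMat n (facQ n u v) S) ∧
      hatInv n (facQ n u v) S =
        (∑ ℓ : Fin k,
            if h : (ℓ : ℕ) + 1 < k then LamMid n u v (t ℓ) (t ⟨(ℓ : ℕ) + 1, h⟩) else 0) +
          LamEnd n u v (t ⟨k - 1, by omega⟩) := by
  obtain ⟨hA1, hA2⟩ := hA
  have h1 : ∀ p : Fin k, 0 < (fun ℓ => u (t ℓ)) p * (fun ℓ => v (t ℓ)) p :=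
    fun p => hA1 (t p)
  have h2 : ∀ p q : Fin k, p < q →
      0 < (fun ℓ => u (t ℓ)) p * (fun ℓ => v (t ℓ)) q *
        ((fun ℓ => u (t ℓ)) q * (fun ℓ => v (t ℓ)) p -
          (fun ℓ => u (t ℓ)) p * (fun ℓ => v (t ℓ)) q) :=
    fun p q h => hA2 (t p) (t q) (hmono h)
  have hkey := FacQAux.key hk (fun ℓ => u (t ℓ)) (fun ℓ => v (t ℓ)) h1 h2
  have hmemS : ∀ ℓ : Fin k, t ℓ ∈ S := by
    intro ℓ; rw [hrange]; exact Finset.mem_image_of_mem _ (Finset.mem_univ _)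
  have hsurj : ∀ x : Fin n, x ∈ S → ∃ ℓ, t ℓ = x := by
    intro x hx
    rw [hrange] at hx
    obtain ⟨ℓ, _, hℓ⟩ := Finset.mem_image.mp hx
    exact ⟨ℓ, hℓ⟩
  have hbij : Function.Bijective
      (fun ℓ : Fin k => (⟨t ℓ, hmemS ℓ⟩ : {x : Fin n // x ∈ S})) := by
    constructor
    · intro x y hxy
      exact hmono.injective (congrArg Subtype.val hxy)
    · rintro ⟨x, hx⟩
      obtain ⟨ℓ, hℓ⟩ := hsurj x hx
      exact ⟨ℓ, Subtype.ext hℓ⟩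
  set e := Equiv.ofBijective _ hbij with hedef
  have hts : ∀ x : {x : Fin n // x ∈ S}, t (e.symm x) = (x : Fin n) := by
    intro x
    exact congrArg Subtype.val (e.apply_symm_apply x)
  have hQA : ∀ p q : Fin k, facQ n u v (t p) (t q)
      = FacQAux.AA (fun ℓ => u (t ℓ)) (fun ℓ => v (t ℓ)) p q := by
    intro p q
    simp [facQ, FacQAux.AA, hmono.le_iff_le]
  have hsub : subMat n (facQ n u v) S
      = (FacQAux.AA (fun ℓ => u (t ℓ)) (fun ℓ => v (t ℓ))).submatrix ⇑e.symm ⇑e.symm := by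
    ext x y
    simp only [subMat, Matrix.submatrix_apply]
    rw [← hts x, ← hts y, hQA]
  have hmul : subMat n (facQ n u v) S *
      (FacQAux.NN hk (fun ℓ => u (t ℓ)) (fun ℓ => v (t ℓ))).submatrix ⇑e.symm ⇑e.symm = 1 := by
    rw [hsub, Matrix.submatrix_mul_equiv _ _ _ e.symm _, hkey, Matrix.submatrix_one_equiv]
  have hinv : (subMat n (facQ n u v) S)⁻¹
      = (FacQAux.NN hk (fun ℓ => u (t ℓ)) (fun ℓ => v (t ℓ))).submatrix ⇑e.symm ⇑e.symm :=
    Matrix.inv_eq_right_inv hmul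
  have hMQ : ∀ p q : Fin k,
      ((∑ ℓ : Fin k,
          if h : (ℓ : ℕ) + 1 < k then LamMid n u v (t ℓ) (t ⟨(ℓ : ℕ) + 1, h⟩) else 0) +
        LamEnd n u v (t ⟨k - 1, by omega⟩)) (t p) (t q)
      = FacQAux.NN hk (fun ℓ => u (t ℓ)) (fun ℓ => v (t ℓ)) p q := by
    intro p q
    simp only [Matrix.add_apply, Matrix.sum_apply, FacQAux.NN, Matrix.of_apply]
    congr 1
    · apply Finset.sum_congr rfl
      intro ℓ _
      by_cases h : (ℓ:ℕ)+1 < k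
      · rw [dif_pos h, dif_pos h]
        simp [LamMid, FacQAux.lamM, hmono.injective.eq_iff]
      · rw [dif_neg h, dif_neg h]; rfl
    · simp [LamEnd, FacQAux.lamE, hmono.injective.eq_iff]
  refine ⟨?_, ?_⟩
  · have := invertibleOfRightInverse _ _ hmul
    exact isUnit_of_invertible _
  · ext x y
    simp only [hatInv, Matrix.of_apply]
    by_cases hx : x ∈ S
    · by_cases hy : y ∈ S
      · rw [dif_pos hx, dif_pos hy, hinv]
        simp only [Matrix.submatrix_apply]
        rw [← hMQ, hts ⟨x, hx⟩, hts ⟨y, hy⟩]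
      · rw [dif_pos hx, dif_neg hy]
        have hne : ∀ i : Fin k, ¬ (y = t i) := fun i h => hy (h ▸ hmemS i)
        symm
        simp only [Matrix.add_apply, Matrix.sum_apply]
        rw [Finset.sum_eq_zero]
        · simp [LamEnd, hne]
        · intro ℓ _
          by_cases h : (ℓ:ℕ)+1 < k
          · rw [dif_pos h]
            simp [LamMid, hne ℓ, hne ⟨(ℓ:ℕ)+1, h⟩]
          · rw [dif_neg h]; rfl
    · rw [dif_neg hx]
      have hne : ∀ i : Fin k, ¬ (x = t i) := fun i h => hx (h ▸ hmemS i)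
      symm
      simp only [Matrix.add_apply, Matrix.sum_apply]
      rw [Finset.sum_eq_zero]
      · simp [LamEnd, hne]
      · intro ℓ _
        by_cases h : (ℓ:ℕ)+1 < k
        · rw [dif_pos h]
          simp [LamMid, hne ℓ, hne ⟨(ℓ:ℕ)+1, h⟩]
        · rw [dif_neg h]; rfl
end

section
/- Let n, d ≥ 1 and let T ∈ ℝ^{dn×dn} be a symmetric positive definite matrix, viewed as an n×n array of d×d blocks. Define X̄^B_T = {(x,z,τ) ∈ ℝ^{dn} × {0,1}^n × ℝ : τ ≥ xᵀ T x, and for each i ∈ {1,…,n}, z_i = 0 implies x_{[i]} = 0, where x_{[i]} ∈ ℝ^d is the i-th block of x}. Define P^B_T = conv({(𝟙_S, hat(T_{[S]}⁻¹)) : S ⊆ {1,…,n}}) ⊆ ℝ^n × ℝ^{dn×dn}, where 𝟙_S ∈ ℝ^n is the 0/1 indicator vector of S. Then the closure of the convex hull of X̄^B_T equals the set of (x,z,τ) ∈ ℝ^{dn} × ℝ^n × ℝ for which there exists W ∈ ℝ^{dn×dn} such that the (dn+1)×(dn+1) symmetric matrix [[W, x],[xᵀ, τ]] is positive semidefinite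 and (z, W) ∈ P^B_T. -/
open Matrix BigOperators

/-- The block principal submatrix of `T` with block indices in `S`. -/
noncomputable def blockSubMat (n d : ℕ) (T : Matrix (Fin n × Fin d) (Fin n × Fin d) ℝ)
    (S : Finset (Fin n)) :
    Matrix {r : Fin n × Fin d // r.1 ∈ S} {r : Fin n × Fin d // r.1 ∈ S} ℝ :=
  T.submatrix (fun p => (p : Fin n × Fin d)) (fun p => (p : Fin n × Fin d))

/-- The `dn×dn` matrix agreeing with `(T_{[S]})⁻¹` on blocks indexed by `S×S`
and `0` elsewhere. -/
noncomputable def blockHatInv (n d : ℕ) (T : Matrix (Fin n × Fin d) (Fin n × Fin d) ℝ)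
    (S : Finset (Fin n)) : Matrix (Fin n × Fin d) (Fin n × Fin d) ℝ :=
  Matrix.of fun p q =>
    if hp : p.1 ∈ S then
      if hq : q.1 ∈ S then (blockSubMat n d T S)⁻¹ ⟨p, hp⟩ ⟨q, hq⟩ else 0
    else 0

/-- The bordered matrix `[[W, x], [xᵀ, τ]]`. -/
def borderMat {ι : Type*} (W : Matrix ι ι ℝ) (x : ι → ℝ) (τ : ℝ) :
    Matrix (ι ⊕ Unit) (ι ⊕ Unit) ℝ :=
  Matrix.of fun a b =>
    match a, b with
    | Sum.inl i, Sum.inl j => W i j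
    | Sum.inl i, Sum.inr _ => x i
    | Sum.inr _, Sum.inl j => x j
    | Sum.inr _, Sum.inr _ => τ

/-- The mixed-integer epigraph set `X̄^B_T`. -/
def XbarB (n d : ℕ) (T : Matrix (Fin n × Fin d) (Fin n × Fin d) ℝ) :
    Set ((Fin n × Fin d → ℝ) × (Fin n → ℝ) × ℝ) :=
  {p | (∀ i : Fin n, p.2.1 i = 0 ∨ p.2.1 i = 1) ∧
       p.1 ⬝ᵥ (T *ᵥ p.1) ≤ p.2.2 ∧
       ∀ i : Fin n, p.2.1 i = 0 → ∀ b : Fin d, p.1 (i, b) = 0}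

/-- `P^B_T`, the convex hull of the points `(𝟙_S, hat(T_{[S]}⁻¹))`. -/
noncomputable def PB (n d : ℕ) (T : Matrix (Fin n × Fin d) (Fin n × Fin d) ℝ) :
    Set ((Fin n → ℝ) × Matrix (Fin n × Fin d) (Fin n × Fin d) ℝ) :=
  convexHull ℝ
    {q | ∃ S : Finset (Fin n),
      q = ((fun i => if i ∈ S then (1 : ℝ) else 0), blockHatInv n d T S)}

set_option linter.unusedSectionVars false
set_option linter.unusedVariables false




section Aux
variable {n d : ℕ} (S : Finset (Fin n))

def incMat (n d : ℕ) (S : Finset (Fin n)) :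
    Matrix (Fin n × Fin d) {r : Fin n × Fin d // r.1 ∈ S} ℝ :=
  Matrix.of fun p q => if p = (q : Fin n × Fin d) then 1 else 0

lemma sum_ind (p : Fin n × Fin d) (f : {r : Fin n × Fin d // r.1 ∈ S} → ℝ) :
    (∑ x : {r : Fin n × Fin d // r.1 ∈ S}, (if p = (x : Fin n × Fin d) then 1 else 0) * f x)
      = if hp : p.1 ∈ S then f ⟨p, hp⟩ else 0 := by
  by_cases hp : p.1 ∈ S
  · rw [dif_pos hp, Finset.sum_eq_single (⟨p, hp⟩ : {r : Fin n × Fin d // r.1 ∈ S})]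
    · simp
    · intro x _ hx
      have : p ≠ (x : Fin n × Fin d) := fun h => hx (Subtype.ext h.symm)
      simp [this]
    · simp
  · rw [dif_neg hp]
    apply Finset.sum_eq_zero
    intro x _
    have : p ≠ (x : Fin n × Fin d) := by rintro rfl; exact hp x.2
    simp [this]

lemma sum_ind' (p : Fin n × Fin d) (f : {r : Fin n × Fin d // r.1 ∈ S} → ℝ) :
    (∑ x : {r : Fin n × Fin d // r.1 ∈ S}, f x * (if p = (x : Fin n × Fin d) then 1 else 0))
      = if hp : p.1 ∈ S then f ⟨p, hp⟩ else 0 := by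
  rw [← sum_ind S p f]; congr 1; ext x; ring

lemma incMat_tmul (M : Matrix (Fin n × Fin d) (Fin n × Fin d) ℝ) :
    (incMat n d S)ᵀ * M * incMat n d S = blockSubMat n d M S := by
  ext a b
  simp only [Matrix.mul_apply, Matrix.transpose_apply, incMat, Matrix.of_apply,
    blockSubMat, Matrix.submatrix_apply]
  rw [show (∑ j, (∑ i, (if i = (a : Fin n × Fin d) then (1:ℝ) else 0) * M i j) * (if j = (b : Fin n × Fin d) then 1 else 0)) = ∑ j, (if j = (b : Fin n × Fin d) then (1:ℝ) else 0) * ∑ i, (if i = (a : Fin n × Fin d) then (1:ℝ) else 0) * M i j from by congr 1; ext j; ring]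
  simp [Finset.sum_ite_eq, ite_mul]

lemma incMat_t_mul_self : (incMat n d S)ᵀ * incMat n d S = 1 := by
  ext a b
  simp only [Matrix.mul_apply, Matrix.transpose_apply, incMat, Matrix.of_apply]
  rw [Finset.sum_eq_single (a : Fin n × Fin d)]
  · simp [Matrix.one_apply, Subtype.ext_iff, eq_comm]
  · intro x _ hx; simp [hx]
  · simp
  
lemma blockHatInv_eq (T : Matrix (Fin n × Fin d) (Fin n × Fin d) ℝ) :
    blockHatInv n d T S = incMat n d S * (blockSubMat n d T S)⁻¹ * (incMat n d S)ᵀ := by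
  ext p q
  simp only [blockHatInv, Matrix.of_apply, Matrix.mul_apply, Matrix.transpose_apply, incMat]
  rw [show (∑ b : {r : Fin n × Fin d // r.1 ∈ S}, (∑ a : {r : Fin n × Fin d // r.1 ∈ S}, (if p = (a : Fin n × Fin d) then (1:ℝ) else 0) * (blockSubMat n d T S)⁻¹ a b) * (if q = (b : Fin n × Fin d) then 1 else 0)) = ∑ b : {r : Fin n × Fin d // r.1 ∈ S}, (if q = (b : Fin n × Fin d) then (1:ℝ) else 0) * ∑ a : {r : Fin n × Fin d // r.1 ∈ S}, (if p = (a : Fin n × Fin d) then (1:ℝ) else 0) * (blockSubMat n d T S)⁻¹ a b from by congr 1; ext b; ring]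
  rw [sum_ind]
  by_cases hq : q.1 ∈ S
  · rw [dif_pos hq, sum_ind]; split_ifs <;> simp
  · rw [dif_neg hq]
    by_cases hp : p.1 ∈ S <;> simp [hp, hq]

end Aux

section Aux2
variable {n d : ℕ} {S : Finset (Fin n)} {T : Matrix (Fin n × Fin d) (Fin n × Fin d) ℝ}

lemma mulVec_dp {ι κ : Type*} [Fintype ι] [Fintype κ] (M : Matrix ι κ ℝ) (a : κ → ℝ)
    (b : ι → ℝ) : (M *ᵥ a) ⬝ᵥ b = a ⬝ᵥ (Mᵀ *ᵥ b) := by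
  rw [Matrix.dotProduct_mulVec, Matrix.vecMul_transpose, dotProduct_comm]

lemma blockSubMat_posDef (hT : T.PosDef) : (blockSubMat n d T S).PosDef := by
  apply Matrix.PosDef.of_dotProduct_mulVec_pos
  · exact hT.isHermitian.submatrix _
  · intro v hv
    have hST : blockSubMat n d T S = (incMat n d S)ᵀ * T * incMat n d S := (incMat_tmul S T).symm
    have key : star v ⬝ᵥ (blockSubMat n d T S *ᵥ v)
        = star (incMat n d S *ᵥ v) ⬝ᵥ (T *ᵥ (incMat n d S *ᵥ v)) := by
      simp only [star_trivial]
      rw [hST, ← Matrix.mulVec_mulVec, ← Matrix.mulVec_mulVec, ← mulVec_dp]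
    rw [key]
    apply hT.dotProduct_mulVec_pos
    intro h
    have h2 := congrArg (fun w => (incMat n d S)ᵀ *ᵥ w) h
    simp only [Matrix.mulVec_mulVec, incMat_t_mul_self, Matrix.one_mulVec, Matrix.mulVec_zero] at h2
    exact hv h2

lemma subInv_mul (hT : T.PosDef) :
    (blockSubMat n d T S)⁻¹ * blockSubMat n d T S = 1 :=
  Matrix.nonsing_inv_mul _ (blockSubMat_posDef hT).det_pos.ne'.isUnit

end Aux2

section Aux3
variable {n d : ℕ} {S : Finset (Fin n)} {T : Matrix (Fin n × Fin d) (Fin n × Fin d) ℝ}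

lemma hatInv_posSemidef (hT : T.PosDef) : (blockHatInv n d T S).PosSemidef := by
  rw [blockHatInv_eq]
  have h := ((blockSubMat_posDef (S := S) hT).inv.posSemidef).mul_mul_conjTranspose_same
    (incMat n d S)
  rwa [Matrix.conjTranspose_eq_transpose_of_trivial] at h

lemma hatInv_transpose (hT : T.PosDef) : (blockHatInv n d T S)ᵀ = blockHatInv n d T S := by
  have h := (hatInv_posSemidef (S := S) hT).isHermitian
  rwa [Matrix.IsHermitian, Matrix.conjTranspose_eq_transpose_of_trivial] at h

lemma hatInv_mul_T_mul (hT : T.PosDef) :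
    blockHatInv n d T S * T * blockHatInv n d T S = blockHatInv n d T S := by
  rw [blockHatInv_eq]
  have h1 : (incMat n d S)ᵀ * T * incMat n d S = blockSubMat n d T S := incMat_tmul S T
  have hdet : IsUnit (blockSubMat n d T S).det := (blockSubMat_posDef hT).det_pos.ne'.isUnit
  calc incMat n d S * (blockSubMat n d T S)⁻¹ * (incMat n d S)ᵀ * T *
        (incMat n d S * (blockSubMat n d T S)⁻¹ * (incMat n d S)ᵀ)
      = incMat n d S * ((blockSubMat n d T S)⁻¹ * ((incMat n d S)ᵀ * T * incMat n d S) *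
          (blockSubMat n d T S)⁻¹) * (incMat n d S)ᵀ := by
        simp only [Matrix.mul_assoc]
    _ = incMat n d S * (blockSubMat n d T S)⁻¹ * (incMat n d S)ᵀ := by
        rw [h1, Matrix.nonsing_inv_mul _ hdet, Matrix.one_mul]

lemma hatInv_mulVec_support (u : Fin n × Fin d → ℝ)
    {i : Fin n} (hiS : i ∉ S) (b : Fin d) : (blockHatInv n d T S *ᵥ u) (i, b) = 0 := by
  simp [blockHatInv, Matrix.mulVec, dotProduct, hiS]

open scoped MatrixOrder in
/-- key quadratic inequality -/
lemma quad_key {ι : Type*} [Fintype ι] [DecidableEq ι] {A : Matrix ι ι ℝ} (hA : A.PosDef)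
    (w c : ι → ℝ) (t σ : ℝ) (hσ : c ⬝ᵥ (A *ᵥ c) ≤ σ) :
    0 ≤ w ⬝ᵥ (A⁻¹ *ᵥ w) + 2 * t * (c ⬝ᵥ w) + t ^ 2 * σ := by
  set R := CFC.sqrt A with hR
  have hRR : R * R = A := CFC.sqrt_mul_sqrt_self A (Matrix.nonneg_iff_posSemidef.mpr hA.posSemidef)
  have hRsym : Rᵀ = R := by
    have := (Matrix.nonneg_iff_posSemidef.mp (CFC.sqrt_nonneg A)).isHermitian
    rwa [Matrix.IsHermitian, Matrix.conjTranspose_eq_transpose_of_trivial] at this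
  have hdet : IsUnit R.det := by
    have : R.det * R.det = A.det := by rw [← Matrix.det_mul, hRR]
    have hApos := hA.det_pos
    rcases eq_or_ne R.det 0 with h | h
    · rw [h, mul_zero] at this; exact absurd this.symm hApos.ne'
    · exact h.isUnit
  have hRinv : R⁻¹ * R = 1 := Matrix.nonsing_inv_mul _ hdet
  have hRinv' : R * R⁻¹ = 1 := Matrix.mul_nonsing_inv _ hdet
  have hRinvT : R⁻¹ᵀ = R⁻¹ := by rw [Matrix.transpose_nonsing_inv, hRsym]
  have hAinv : A⁻¹ = R⁻¹ * R⁻¹ := by rw [← hRR, Matrix.mul_inv_rev]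
  set a := R⁻¹ *ᵥ w + t • (R *ᵥ c) with ha
  have h0 : (0:ℝ) ≤ a ⬝ᵥ a := Finset.sum_nonneg fun i _ => mul_self_nonneg _
  have e1 : (R⁻¹ *ᵥ w) ⬝ᵥ (R⁻¹ *ᵥ w) = w ⬝ᵥ (A⁻¹ *ᵥ w) := by
    rw [mulVec_dp, hRinvT, Matrix.mulVec_mulVec, ← hAinv]
  have e2 : (R⁻¹ *ᵥ w) ⬝ᵥ (R *ᵥ c) = w ⬝ᵥ c := by
    rw [mulVec_dp, hRinvT, Matrix.mulVec_mulVec, hRinv, Matrix.one_mulVec]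
  have e3 : (R *ᵥ c) ⬝ᵥ (R⁻¹ *ᵥ w) = c ⬝ᵥ w := by
    rw [mulVec_dp, hRsym, Matrix.mulVec_mulVec, hRinv', Matrix.one_mulVec]
  have e4 : (R *ᵥ c) ⬝ᵥ (R *ᵥ c) = c ⬝ᵥ (A *ᵥ c) := by
    rw [mulVec_dp, hRsym, Matrix.mulVec_mulVec, hRR]
  have expand : a ⬝ᵥ a = w ⬝ᵥ (A⁻¹ *ᵥ w) + 2 * t * (c ⬝ᵥ w) + t ^ 2 * (c ⬝ᵥ (A *ᵥ c)) := by
    rw [ha]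
    simp only [add_dotProduct, dotProduct_add, smul_dotProduct,
      dotProduct_smul, smul_eq_mul, e1, e2, e3, e4, dotProduct_comm w c]
    ring
  nlinarith [h0, sq_nonneg t]

end Aux3


section Border
variable {ι : Type*} [Fintype ι] [DecidableEq ι]

lemma border_dot (W : Matrix ι ι ℝ) (x : ι → ℝ) (τ : ℝ) (v : ι → ℝ) (t : ℝ) :
    Sum.elim v (fun _ => t) ⬝ᵥ (borderMat W x τ *ᵥ Sum.elim v (fun _ => t))
      = v ⬝ᵥ (W *ᵥ v) + 2 * t * (x ⬝ᵥ v) + t ^ 2 * τ := by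
  simp only [dotProduct, Matrix.mulVec, Fintype.sum_sum_type, borderMat,
    Matrix.of_apply, Sum.elim_inl, Sum.elim_inr, Finset.univ_unique, Finset.sum_singleton]
  simp only [mul_add, Finset.sum_add_distrib, Finset.mul_sum]
  have h1 : ∀ i, v i * (x i * t) = t * (x i * v i) := fun i => by ring
  simp only [h1]
  rw [← Finset.mul_sum]
  ring_nf
  have h2 : (∑ i, t * 2 * x i * v i) = (t * ∑ i, x i * v i) * 2 := by
    rw [Finset.sum_congr rfl (fun i _ => show t*2*x i*v i = (x i * v i) * (t*2) by ring),
      ← Finset.sum_mul]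
    ring
  have h3 : (∑ i, t * x i * v i * 2) = (t * ∑ i, x i * v i) * 2 := by
    rw [Finset.mul_sum, Finset.sum_mul]
    exact Finset.sum_congr rfl fun i _ => by ring
  linarith [h2, h3]

lemma sum_elim_decomp (y : ι ⊕ Unit → ℝ) :
    Sum.elim (fun i => y (Sum.inl i)) (fun _ : Unit => y (Sum.inr ())) = y := by
  funext a
  rcases a with i | u
  · rfl
  · cases u; rfl

lemma border_hermitian {W : Matrix ι ι ℝ} (hW : Wᵀ = W) (x : ι → ℝ) (τ : ℝ) :
    (borderMat W x τ).IsHermitian := by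
  rw [Matrix.IsHermitian, Matrix.conjTranspose_eq_transpose_of_trivial]
  ext a b
  rcases a with i | u <;> rcases b with j | v <;>
    simp [borderMat, Matrix.transpose_apply] 
  · have := congrFun (congrFun hW j) i
    rw [Matrix.transpose_apply] at this
    exact this.symm

lemma border_posSemidef_of_quad {W : Matrix ι ι ℝ} (hW : Wᵀ = W) (x : ι → ℝ) (τ : ℝ)
    (h : ∀ (v : ι → ℝ) (t : ℝ), 0 ≤ v ⬝ᵥ (W *ᵥ v) + 2 * t * (x ⬝ᵥ v) + t ^ 2 * τ) :
    (borderMat W x τ).PosSemidef := by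
  refine Matrix.PosSemidef.of_dotProduct_mulVec_nonneg (border_hermitian hW x τ) fun y => ?_
  rw [star_trivial, ← sum_elim_decomp y, border_dot]
  exact h _ _

lemma border_quad_of_posSemidef {W : Matrix ι ι ℝ} {x : ι → ℝ} {τ : ℝ}
    (h : (borderMat W x τ).PosSemidef) (v : ι → ℝ) (t : ℝ) :
    0 ≤ v ⬝ᵥ (W *ᵥ v) + 2 * t * (x ⬝ᵥ v) + t ^ 2 * τ := by
  have := h.dotProduct_mulVec_nonneg (Sum.elim v (fun _ => t))
  rwa [star_trivial, border_dot] at this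

lemma border_convex_comb {W₁ W₂ : Matrix ι ι ℝ} {x₁ x₂ : ι → ℝ} {τ₁ τ₂ : ℝ} (a b : ℝ) :
    borderMat (a • W₁ + b • W₂) (a • x₁ + b • x₂) (a * τ₁ + b * τ₂)
      = a • borderMat W₁ x₁ τ₁ + b • borderMat W₂ x₂ τ₂ := by
  ext p q
  rcases p with i | u <;> rcases q with j | v <;>
    simp [borderMat, smul_eq_mul]

lemma posSemidef_smul {W : Matrix ι ι ℝ} (hW : W.PosSemidef) {a : ℝ} (ha : 0 ≤ a) :
    (a • W).PosSemidef := by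
  refine Matrix.PosSemidef.of_dotProduct_mulVec_nonneg ?_ fun y => ?_
  · rw [Matrix.IsHermitian, Matrix.conjTranspose_smul]
    rw [Matrix.IsHermitian.eq hW.isHermitian]
    simp
  · rw [Matrix.smul_mulVec, dotProduct_smul, smul_eq_mul]
    exact mul_nonneg ha (hW.dotProduct_mulVec_nonneg y)

end Border

section Aux4
variable {n d : ℕ} {S : Finset (Fin n)} {T : Matrix (Fin n × Fin d) (Fin n × Fin d) ℝ}

lemma supported_eq {x : Fin n × Fin d → ℝ} (hx : ∀ p : Fin n × Fin d, p.1 ∉ S → x p = 0) :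
    incMat n d S *ᵥ (fun q : {r : Fin n × Fin d // r.1 ∈ S} => x q) = x := by
  funext p
  show (∑ q : {r : Fin n × Fin d // r.1 ∈ S}, incMat n d S p q * x q) = x p
  simp only [incMat, Matrix.of_apply]
  rw [sum_ind]
  split_ifs with hp
  · rfl
  · exact (hx p hp).symm

lemma hermitian_toTranspose {ι : Type*} {M : Matrix ι ι ℝ} (h : M.IsHermitian) : Mᵀ = M := by
  rwa [Matrix.IsHermitian, Matrix.conjTranspose_eq_transpose_of_trivial] at h

lemma border_psd_hat (hT : T.PosDef) {x : Fin n × Fin d → ℝ} {σ : ℝ}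
    (hsupp : ∀ p : Fin n × Fin d, p.1 ∉ S → x p = 0) (hσ : x ⬝ᵥ (T *ᵥ x) ≤ σ) :
    (borderMat (blockHatInv n d T S) x σ).PosSemidef := by
  apply border_posSemidef_of_quad (hatInv_transpose hT)
  intro v t
  have hA : (blockSubMat n d T S).PosDef := blockSubMat_posDef hT
  have hAinvT : ((blockSubMat n d T S)⁻¹)ᵀ = (blockSubMat n d T S)⁻¹ :=
    hermitian_toTranspose hA.inv.isHermitian
  set c : {r : Fin n × Fin d // r.1 ∈ S} → ℝ := fun q => x q with hc
  have hxE : incMat n d S *ᵥ c = x := supported_eq hsupp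
  set w := (incMat n d S)ᵀ *ᵥ v with hw
  have e1 : v ⬝ᵥ (blockHatInv n d T S *ᵥ v) = w ⬝ᵥ ((blockSubMat n d T S)⁻¹ *ᵥ w) := by
    rw [blockHatInv_eq, ← Matrix.mulVec_mulVec, ← Matrix.mulVec_mulVec,
      dotProduct_comm, mulVec_dp (incMat n d S), ← hw,
      mulVec_dp ((blockSubMat n d T S)⁻¹), hAinvT]
  have e2 : x ⬝ᵥ v = c ⬝ᵥ w := by rw [← hxE, mulVec_dp, hw]
  have e3 : x ⬝ᵥ (T *ᵥ x) = c ⬝ᵥ (blockSubMat n d T S *ᵥ c) := by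
    conv_lhs => rw [← hxE]
    rw [mulVec_dp, Matrix.mulVec_mulVec, Matrix.mulVec_mulVec, incMat_tmul]
  rw [e1, e2]
  exact quad_key hA w c t σ (by rw [← e3]; exact hσ)

end Aux4



def stmtRHS (n d : ℕ) (T : Matrix (Fin n × Fin d) (Fin n × Fin d) ℝ) :
    Set ((Fin n × Fin d → ℝ) × (Fin n → ℝ) × ℝ) :=
  {p | ∃ W : Matrix (Fin n × Fin d) (Fin n × Fin d) ℝ,
        (borderMat W p.1 p.2.2).PosSemidef ∧ (p.2.1, W) ∈ PB n d T}

section Main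
variable {n d : ℕ} {T : Matrix (Fin n × Fin d) (Fin n × Fin d) ℝ}

lemma xbar_subset (hT : T.PosDef) : XbarB n d T ⊆ stmtRHS n d T := by
  rintro ⟨x, z, τ⟩ ⟨h1, h2, h3⟩
  dsimp only at h1 h2 h3
  classical
  set S : Finset (Fin n) := Finset.univ.filter (fun i => z i = 1) with hS
  have hz : z = fun i => if i ∈ S then (1 : ℝ) else 0 := by
    funext i
    rcases h1 i with h | h
    · have : i ∉ S := by simp [hS, h]
      simp [this, h]
    · have : i ∈ S := by simp [hS, h]
      simp [this, h]
  refine ⟨blockHatInv n d T S, ?_, ?_⟩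
  · apply border_psd_hat hT _ h2
    intro p hp
    have hz0 : z p.1 = 0 := by
      rcases h1 p.1 with h | h
      · exact h
      · exact absurd (by simp [hS, h]) hp
    have := h3 p.1 hz0 p.2
    simpa using this
  · apply subset_convexHull
    exact ⟨S, by rw [hz]⟩

lemma rhs_convex : Convex ℝ (stmtRHS n d T) := by
  rintro p hp q hq a b ha hb hab
  obtain ⟨W₁, hB₁, hP₁⟩ := hp
  obtain ⟨W₂, hB₂, hP₂⟩ := hq
  refine ⟨a • W₁ + b • W₂, ?_, ?_⟩
  · have : borderMat (a • W₁ + b • W₂) (a • p + b • q).1 (a • p + b • q).2.2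
        = a • borderMat W₁ p.1 p.2.2 + b • borderMat W₂ q.1 q.2.2 := by
      have h1 : (a • p + b • q).1 = a • p.1 + b • q.1 := rfl
      have h2 : (a • p + b • q).2.2 = a * p.2.2 + b * q.2.2 := rfl
      rw [h1, h2, border_convex_comb]
    rw [this]
    exact (posSemidef_smul hB₁ ha).add (posSemidef_smul hB₂ hb)
  · have : ((a • p + b • q).2.1, a • W₁ + b • W₂)
        = a • (p.2.1, W₁) + b • (q.2.1, W₂) := rfl
    rw [this]
    exact (convex_convexHull ℝ _) hP₁ hP₂ ha hb hab

end Main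

section Closed
variable {n d : ℕ} {T : Matrix (Fin n × Fin d) (Fin n × Fin d) ℝ}

lemma continuous_entry {ι κ : Type*} (i : ι) (j : κ) :
    Continuous fun M : Matrix ι κ ℝ => M i j :=
  (continuous_apply j).comp (continuous_apply i)

lemma psd_isClosed {ι : Type*} [Fintype ι] : IsClosed {M : Matrix ι ι ℝ | M.PosSemidef} := by
  have hset : {M : Matrix ι ι ℝ | M.PosSemidef}
      = (⋂ i, ⋂ j, {M : Matrix ι ι ℝ | M j i = M i j})
        ∩ ⋂ v : ι → ℝ, {M : Matrix ι ι ℝ | 0 ≤ v ⬝ᵥ (M *ᵥ v)} := by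
    ext M
    simp only [Set.mem_setOf_eq, Set.mem_inter_iff, Set.mem_iInter]
    constructor
    · intro h
      refine ⟨fun i j => ?_, fun v => ?_⟩
      · have := hermitian_toTranspose h.isHermitian
        exact (congrFun (congrFun this i) j)
      · have := h.dotProduct_mulVec_nonneg v
        rwa [star_trivial] at this
    · intro ⟨hsym, hquad⟩
      refine Matrix.PosSemidef.of_dotProduct_mulVec_nonneg ?_ fun v => by rw [star_trivial]; exact hquad v
      rw [Matrix.IsHermitian, Matrix.conjTranspose_eq_transpose_of_trivial]
      ext i j
      simp only [Matrix.transpose_apply]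
      exact hsym i j
  rw [hset]
  apply IsClosed.inter
  · exact isClosed_iInter fun i => isClosed_iInter fun j =>
      isClosed_eq (continuous_entry j i) (continuous_entry i j)
  · refine isClosed_iInter fun v => ?_
    apply isClosed_le continuous_const
    show Continuous fun M : Matrix ι ι ℝ => ∑ i, v i * ∑ j, M i j * v j
    exact continuous_finset_sum _ fun i _ => continuous_const.mul
      (continuous_finset_sum _ fun j _ => (continuous_entry i j).mul continuous_const)

lemma PB_isCompact : IsCompact (PB n d T) := by
  have hfin : ({q | ∃ S : Finset (Fin n),
      q = ((fun i => if i ∈ S then (1 : ℝ) else 0), blockHatInv n d T S)} :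
      Set ((Fin n → ℝ) × Matrix (Fin n × Fin d) (Fin n × Fin d) ℝ)).Finite := by
    have : {q | ∃ S : Finset (Fin n),
        q = ((fun i => if i ∈ S then (1 : ℝ) else 0), blockHatInv n d T S)}
        = Set.range (fun S : Finset (Fin n) =>
            ((fun i => if i ∈ S then (1 : ℝ) else 0), blockHatInv n d T S)) := by
      ext q; exact exists_congr fun S => eq_comm
    rw [this]
    exact Set.finite_range _
  exact Set.Finite.isCompact_convexHull (𝕜 := ℝ) hfin

lemma borderMat_continuous :
    Continuous fun y : ((Fin n × Fin d → ℝ) × (Fin n → ℝ) × ℝ) ×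
        Matrix (Fin n × Fin d) (Fin n × Fin d) ℝ =>
      borderMat y.2 y.1.1 y.1.2.2 := by
  apply continuous_pi; intro a
  apply continuous_pi; intro b
  rcases a with i | u <;> rcases b with j | v
  · exact (continuous_entry i j).comp continuous_snd
  · exact (continuous_apply i).comp (continuous_fst.comp continuous_fst)
  · exact (continuous_apply j).comp (continuous_fst.comp continuous_fst)
  · exact continuous_snd.comp (continuous_snd.comp continuous_fst)

lemma rhs_isClosed : IsClosed (stmtRHS n d T) := by
  classical
  set C : Set (((Fin n × Fin d → ℝ) × (Fin n → ℝ) × ℝ) ×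
      Matrix (Fin n × Fin d) (Fin n × Fin d) ℝ) := {y | (borderMat y.2 y.1.1 y.1.2.2).PosSemidef ∧
    (y.1.2.1, y.2) ∈ PB n d T} with hC
  have hCclosed : IsClosed C := by
    apply IsClosed.inter
    · exact psd_isClosed.preimage borderMat_continuous
    · exact (PB_isCompact.isClosed).preimage
        (((continuous_fst.comp (continuous_snd.comp continuous_fst))).prodMk continuous_snd)
  set K : Set (Matrix (Fin n × Fin d) (Fin n × Fin d) ℝ) := Prod.snd '' PB n d T with hK
  have hKcomp : IsCompact K := PB_isCompact.image continuous_snd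
  haveI : CompactSpace K := isCompact_iff_compactSpace.mp hKcomp
  set C' : Set (((Fin n × Fin d → ℝ) × (Fin n → ℝ) × ℝ) × K) :=
    {y | ((y.1, (y.2 : Matrix (Fin n × Fin d) (Fin n × Fin d) ℝ)) ∈ C)} with hC'
  have hC'closed : IsClosed C' :=
    hCclosed.preimage (continuous_fst.prodMk (continuous_subtype_val.comp continuous_snd))
  have himg : stmtRHS n d T = Prod.fst '' C' := by
    ext p
    constructor
    · rintro ⟨W, hB, hP⟩
      exact ⟨(p, ⟨W, ⟨(p.2.1, W), hP, rfl⟩⟩), ⟨hB, hP⟩, rfl⟩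
    · rintro ⟨⟨p', W⟩, hy, rfl⟩
      exact ⟨W, hy.1, hy.2⟩
  rw [himg]
  exact isClosedMap_fst_of_compactSpace _ hC'closed

end Closed

section PartD
variable {n d : ℕ} {T : Matrix (Fin n × Fin d) (Fin n × Fin d) ℝ}

lemma sum_mulVec' {ι κ : Type*} [Fintype κ] (t : Finset ι) (f : ι → Matrix κ κ ℝ) (v : κ → ℝ) :
    (∑ i ∈ t, f i) *ᵥ v = ∑ i ∈ t, (f i *ᵥ v) := by
  funext p
  simp only [Matrix.mulVec, dotProduct, Finset.sum_apply, Matrix.sum_apply,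
    Finset.sum_mul]
  rw [Finset.sum_comm]

lemma dp_sum' {ι κ : Type*} [Fintype κ] (t : Finset ι) (v : κ → ℝ) (f : ι → κ → ℝ) :
    v ⬝ᵥ (∑ i ∈ t, f i) = ∑ i ∈ t, v ⬝ᵥ f i := by
  simp only [dotProduct, Finset.sum_apply, Finset.mul_sum]
  rw [Finset.sum_comm]

lemma borderW_symm {ι : Type*} [Fintype ι] {W : Matrix ι ι ℝ} {x : ι → ℝ} {τ : ℝ}
    (h : (borderMat W x τ).PosSemidef) : Wᵀ = W := by
  have hh := hermitian_toTranspose h.isHermitian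
  ext i j
  have := congrFun (congrFun hh (Sum.inl i)) (Sum.inl j)
  simpa [borderMat, Matrix.transpose_apply] using this

lemma mem_convexHull_of_unit (hT : T.PosDef) {x : Fin n × Fin d → ℝ} {z : Fin n → ℝ} {τ : ℝ}
    {W : Matrix (Fin n × Fin d) (Fin n × Fin d) ℝ}
    (hPSD : (borderMat W x τ).PosSemidef) (hPB : (z, W) ∈ PB n d T)
    (hdet : IsUnit W.det) :
    (x, z, τ) ∈ convexHull ℝ (XbarB n d T) := by
  classical
  set u := W⁻¹ *ᵥ x with hu
  have hWu : W *ᵥ u = x := by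
    rw [hu, Matrix.mulVec_mulVec, Matrix.mul_nonsing_inv _ hdet, Matrix.one_mulVec]
  have hWsym : Wᵀ = W := borderW_symm hPSD
  have hxu : x ⬝ᵥ u = u ⬝ᵥ (W *ᵥ u) := by
    rw [← hWu, mulVec_dp, hWsym]
  set slack := τ - u ⬝ᵥ (W *ᵥ u) with hslack
  have hslack0 : 0 ≤ slack := by
    have hq := border_quad_of_posSemidef hPSD (-u) 1
    rw [Matrix.mulVec_neg, dotProduct_neg, neg_dotProduct, neg_neg,
      dotProduct_neg] at hq
    rw [hslack]
    rw [hxu] at hq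
    nlinarith [hq]
  rw [PB, convexHull_eq] at hPB
  obtain ⟨ι, t, wt, zt, h0, h1, hmem, hcm⟩ := hPB
  rw [Finset.centerMass_eq_of_sum_1 _ _ h1] at hcm
  have hmem' : ∀ i, i ∈ t → ∃ S : Finset (Fin n),
      zt i = ((fun j => if j ∈ S then (1 : ℝ) else 0), blockHatInv n d T S) := hmem
  choose Sf hSf using hmem'
  set Sg : ι → Finset (Fin n) := fun i => if h : i ∈ t then Sf i h else ∅ with hSg
  have hzt : ∀ i ∈ t, zt i
      = ((fun j => if j ∈ Sg i then (1 : ℝ) else 0), blockHatInv n d T (Sg i)) := by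
    intro i hi
    rw [hSg]
    simp only [dif_pos hi]
    exact hSf i hi
  have hz : ∑ i ∈ t, wt i • (fun j => if j ∈ Sg i then (1 : ℝ) else 0) = z := by
    have h2 : (∑ i ∈ t, wt i • zt i).1 = z := by rw [hcm]
    rw [Prod.fst_sum] at h2
    rw [← h2]
    exact Finset.sum_congr rfl fun i hi => by rw [hzt i hi]; rfl
  have hW : ∑ i ∈ t, wt i • blockHatInv n d T (Sg i) = W := by
    have h2 : (∑ i ∈ t, wt i • zt i).2 = W := by rw [hcm]
    rw [Prod.snd_sum] at h2
    rw [← h2]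
    exact Finset.sum_congr rfl fun i hi => by rw [hzt i hi]; rfl
  set pt : ι → (Fin n × Fin d → ℝ) × (Fin n → ℝ) × ℝ := fun i =>
    (blockHatInv n d T (Sg i) *ᵥ u, (fun j => if j ∈ Sg i then (1 : ℝ) else 0),
      u ⬝ᵥ (blockHatInv n d T (Sg i) *ᵥ u) + slack) with hpt
  have hquad : ∀ i, (blockHatInv n d T (Sg i) *ᵥ u) ⬝ᵥ (T *ᵥ (blockHatInv n d T (Sg i) *ᵥ u))
      = u ⬝ᵥ (blockHatInv n d T (Sg i) *ᵥ u) := by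
    intro i
    rw [mulVec_dp, hatInv_transpose hT, Matrix.mulVec_mulVec, Matrix.mulVec_mulVec,
      hatInv_mul_T_mul hT]
  have hptmem : ∀ i ∈ t, pt i ∈ XbarB n d T := by
    intro i _
    refine ⟨fun j => ?_, ?_, ?_⟩
    · simp only [hpt]
      by_cases hj : j ∈ Sg i <;> simp [hj]
    · simp only [hpt]
      rw [hquad i]
      exact le_add_of_nonneg_right hslack0
    · intro j hj b
      simp only [hpt] at hj ⊢
      have hjS : j ∉ Sg i := by
        intro hmem2
        simp [hmem2] at hj
      exact hatInv_mulVec_support u hjS b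
  have key : t.centerMass wt pt = (x, z, τ) := by
    rw [Finset.centerMass_eq_of_sum_1 _ _ h1]
    have e1 : (∑ i ∈ t, wt i • pt i).1 = x := by
      rw [Prod.fst_sum]
      have : ∀ i ∈ t, (wt i • pt i).1 = (wt i • blockHatInv n d T (Sg i)) *ᵥ u := by
        intro i _
        rw [Matrix.smul_mulVec]
        rfl
      rw [Finset.sum_congr rfl this, ← sum_mulVec', hW, hWu]
    have e2 : (∑ i ∈ t, wt i • pt i).2.1 = z := by
      rw [Prod.snd_sum, Prod.fst_sum, ← hz]
      exact Finset.sum_congr rfl fun i _ => rfl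
    have e3 : (∑ i ∈ t, wt i • pt i).2.2 = τ := by
      rw [Prod.snd_sum, Prod.snd_sum]
      have : ∀ i ∈ t, (wt i • pt i).2.2
          = u ⬝ᵥ ((wt i • blockHatInv n d T (Sg i)) *ᵥ u) + wt i * slack := by
        intro i _
        show wt i * (u ⬝ᵥ (blockHatInv n d T (Sg i) *ᵥ u) + slack)
          = u ⬝ᵥ ((wt i • blockHatInv n d T (Sg i)) *ᵥ u) + wt i * slack
        rw [Matrix.smul_mulVec, dotProduct_smul, smul_eq_mul]
        ring
      rw [Finset.sum_congr rfl this, Finset.sum_add_distrib, ← dp_sum', ← sum_mulVec', hW,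
        ← Finset.sum_mul, h1]
      rw [hslack]
      ring
    calc (∑ i ∈ t, wt i • pt i) = ((∑ i ∈ t, wt i • pt i).1, (∑ i ∈ t, wt i • pt i).2.1,
        (∑ i ∈ t, wt i • pt i).2.2) := rfl
    _ = (x, z, τ) := by rw [e1, e2, e3]
  rw [← key]
  exact Finset.centerMass_mem_convexHull t h0 (by rw [h1]; norm_num) hptmem

end PartD

section PartD2
variable {n d : ℕ} {T : Matrix (Fin n × Fin d) (Fin n × Fin d) ℝ}

lemma posDef_smul {ι : Type*} [Fintype ι] {W : Matrix ι ι ℝ} (hW : W.PosDef) {a : ℝ}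
    (ha : 0 < a) : (a • W).PosDef := by
  refine Matrix.PosDef.of_dotProduct_mulVec_pos ?_ fun y hy => ?_
  · rw [Matrix.IsHermitian, Matrix.conjTranspose_smul, Matrix.IsHermitian.eq hW.isHermitian]
    simp
  · rw [Matrix.smul_mulVec, dotProduct_smul, smul_eq_mul]
    exact mul_pos ha (hW.dotProduct_mulVec_pos hy)

lemma hat_quad {S : Finset (Fin n)} (hT : T.PosDef) (v : Fin n × Fin d → ℝ) :
    v ⬝ᵥ (blockHatInv n d T S *ᵥ v)
      = ((incMat n d S)ᵀ *ᵥ v) ⬝ᵥ ((blockSubMat n d T S)⁻¹ *ᵥ ((incMat n d S)ᵀ *ᵥ v)) := by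
  have hAinvT : ((blockSubMat n d T S)⁻¹)ᵀ = (blockSubMat n d T S)⁻¹ :=
    hermitian_toTranspose (blockSubMat_posDef hT).inv.isHermitian
  rw [blockHatInv_eq, ← Matrix.mulVec_mulVec, ← Matrix.mulVec_mulVec,
    dotProduct_comm, mulVec_dp (incMat n d S),
    mulVec_dp ((blockSubMat n d T S)⁻¹), hAinvT]

lemma incMat_t_mulVec {S : Finset (Fin n)} (v : Fin n × Fin d → ℝ)
    (q : {r : Fin n × Fin d // r.1 ∈ S}) : ((incMat n d S)ᵀ *ᵥ v) q = v q := by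
  show (∑ p, (incMat n d S)ᵀ q p * v p) = v q
  simp only [Matrix.transpose_apply, incMat, Matrix.of_apply, ite_mul, one_mul, zero_mul]
  rw [Finset.sum_ite_eq' Finset.univ (q : Fin n × Fin d) v]
  simp

lemma hatUniv_posDef (hT : T.PosDef) : (blockHatInv n d T Finset.univ).PosDef := by
  refine Matrix.PosDef.of_dotProduct_mulVec_pos ?_ fun v hv => ?_
  · rw [Matrix.IsHermitian, Matrix.conjTranspose_eq_transpose_of_trivial]
    exact hatInv_transpose hT
  · rw [star_trivial, hat_quad hT]
    have hw : (incMat n d Finset.univ)ᵀ *ᵥ v ≠ 0 := by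
      intro h0
      apply hv
      funext p
      have := congrFun h0 ⟨p, Finset.mem_univ _⟩
      rwa [incMat_t_mulVec] at this
    have := (blockSubMat_posDef hT).inv.dotProduct_mulVec_pos hw
    rwa [star_trivial] at this

lemma PB_snd_psd (hT : T.PosDef) {z : Fin n → ℝ}
    {W : Matrix (Fin n × Fin d) (Fin n × Fin d) ℝ} (h : (z, W) ∈ PB n d T) :
    W.PosSemidef := by
  have hsub : PB n d T ⊆ {q : (Fin n → ℝ) × Matrix (Fin n × Fin d) (Fin n × Fin d) ℝ |
      q.2.PosSemidef} := by
    apply convexHull_min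
    · rintro q ⟨S, rfl⟩
      exact hatInv_posSemidef hT
    · rintro p hp q hq a b ha hb hab
      show ((a • p + b • q).2).PosSemidef
      exact (posSemidef_smul hp ha).add (posSemidef_smul hq hb)
  exact hsub h

lemma rhs_subset_closure (hT : T.PosDef) :
    stmtRHS n d T ⊆ closure (convexHull ℝ (XbarB n d T)) := by
  rintro ⟨x, z, τ⟩ ⟨W, hPSD, hPB⟩
  dsimp only at hPSD hPB
  have hτ0 : 0 ≤ τ := by
    have := border_quad_of_posSemidef hPSD 0 1
    simpa using this
  set q0 := x ⬝ᵥ (T *ᵥ x) with hq0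
  set onez : Fin n → ℝ := fun i => if i ∈ (Finset.univ : Finset (Fin n)) then 1 else 0
    with honez
  set f : ℝ → (Fin n × Fin d → ℝ) × (Fin n → ℝ) × ℝ :=
    fun ε => (x, (1 - ε) • z + ε • onez, τ + ε * q0) with hf
  have hmem : ∀ ε ∈ Set.Ioc (0:ℝ) 1, f ε ∈ convexHull ℝ (XbarB n d T) := by
    rintro ε ⟨hε0, hε1⟩
    set Wε := (1 - ε) • W + ε • blockHatInv n d T Finset.univ with hWε
    have hWεPD : Wε.PosDef :=
      Matrix.PosDef.posSemidef_add (posSemidef_smul (PB_snd_psd hT hPB) (by linarith))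
        (posDef_smul (hatUniv_posDef hT) hε0)
    have hPBε : ((1 - ε) • z + ε • onez, Wε) ∈ PB n d T := by
      have h2 : ((1 - ε) • z + ε • onez, Wε)
          = (1 - ε) • (z, W) + ε • (onez, blockHatInv n d T Finset.univ) := rfl
      rw [h2]
      exact (convex_convexHull ℝ _) hPB
        (subset_convexHull _ _ ⟨Finset.univ, rfl⟩) (by linarith) hε0.le (by ring)
    have hB2 : (borderMat (blockHatInv n d T Finset.univ) x (q0 + τ)).PosSemidef :=
      border_psd_hat hT (fun p hp => absurd (Finset.mem_univ _) hp)
        (le_add_of_nonneg_right hτ0)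
    have hBε : (borderMat Wε x (τ + ε * q0)).PosSemidef := by
      have hτcomb : τ + ε * q0 = (1 - ε) * τ + ε * (q0 + τ) := by ring
      have hxcomb : x = (1 - ε) • x + ε • x := by
        rw [← add_smul, sub_add_cancel, one_smul]
      rw [hτcomb]
      rw [show borderMat Wε x ((1 - ε) * τ + ε * (q0 + τ))
          = borderMat Wε ((1 - ε) • x + ε • x) ((1 - ε) * τ + ε * (q0 + τ)) from by
        rw [← hxcomb]]
      rw [hWε, border_convex_comb]
      exact (posSemidef_smul hPSD (by linarith)).add (posSemidef_smul hB2 hε0.le)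
    exact mem_convexHull_of_unit hT hBε hPBε hWεPD.det_pos.ne'.isUnit
  have hfc : Continuous f := by
    refine continuous_const.prodMk (Continuous.prodMk ?_ ?_)
    · exact (((continuous_const.sub continuous_id).smul continuous_const).add
        (continuous_id.smul continuous_const))
    · exact continuous_const.add (continuous_id.mul continuous_const)
  have hf0 : f 0 = (x, z, τ) := by
    rw [hf]
    simp
  have htend : Filter.Tendsto f (nhdsWithin 0 (Set.Ioi 0)) (nhds (x, z, τ)) := by
    rw [← hf0]
    exact (hfc.tendsto 0).mono_left nhdsWithin_le_nhds
  exact mem_closure_of_tendsto htend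
    (Filter.eventually_of_mem (Ioc_mem_nhdsGT zero_lt_one) hmem)

end PartD2

theorem stmt_4 (n d : ℕ) (hn : 1 ≤ n) (hd : 1 ≤ d)
    (T : Matrix (Fin n × Fin d) (Fin n × Fin d) ℝ) (hT : T.PosDef) :
    closure (convexHull ℝ (XbarB n d T)) =
      {p : (Fin n × Fin d → ℝ) × (Fin n → ℝ) × ℝ |
        ∃ W : Matrix (Fin n × Fin d) (Fin n × Fin d) ℝ,
          (borderMat W p.1 p.2.2).PosSemidef ∧ (p.2.1, W) ∈ PB n d T} := by
  have hEq : {p : (Fin n × Fin d → ℝ) × (Fin n → ℝ) × ℝ |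
      ∃ W : Matrix (Fin n × Fin d) (Fin n × Fin d) ℝ,
        (borderMat W p.1 p.2.2).PosSemidef ∧ (p.2.1, W) ∈ PB n d T} = stmtRHS n d T := rfl
  rw [hEq]
  apply Set.Subset.antisymm
  · exact closure_minimal (convexHull_min (xbar_subset hT) rhs_convex) rhs_isClosed
  · exact rhs_subset_closure hT
end

section
/- Let n ≥ 1 and let u, v : {1,…,n} → ℝ satisfy Assumption 1, with Q = Q(u,v). Fix z ∈ {0,1}^n and let S = {ℓ ∈ {1,…,n} : z_ℓ = 1}. Then there exists exactly one vector w = (w_{ij})_{0 ≤ i < j ≤ n+1} satisfying the path constraints for z, and for this w the matrix W = Σ_{1 ≤ i < j ≤ n+1} Λ_{i→j} w_{ij} equals hat(Q_S⁻¹). -/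
open Matrix BigOperators
open scoped Classical

/-- The path constraints for `z`, on the node set `{0, 1, …, n+1}` (as `Fin (n+2)`);
`w i j` for `i < j` are the arc variables, entries with `¬ i < j` are zero. -/
def PathCon (n : ℕ) (z : Fin n → ℝ) (w : Fin (n + 2) → Fin (n + 2) → ℝ) : Prop :=
  (∀ i j : Fin (n + 2), ¬i < j → w i j = 0) ∧
  (∀ i j : Fin (n + 2), 0 ≤ w i j) ∧
  (∀ ℓ : Fin (n + 2),
    (∑ i : Fin (n + 2), w i ℓ) - ∑ j : Fin (n + 2), w ℓ j =
      if (ℓ : ℕ) = 0 then -1 else if (ℓ : ℕ) = n + 1 then 1 else 0) ∧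
  (∀ ℓ : Fin n, z ℓ = ∑ i : Fin (n + 2), w i ⟨(ℓ : ℕ) + 1, by omega⟩)

/-- `Λ_{i→j}` indexed by the nodes `0,…,n+1`: zero unless `1 ≤ i < j ≤ n+1`. -/
noncomputable def LamNode (n : ℕ) (u v : Fin n → ℝ) (i j : Fin (n + 2)) :
    Matrix (Fin n) (Fin n) ℝ :=
  if hi : 1 ≤ (i : ℕ) ∧ (i : ℕ) ≤ n then
    if (j : ℕ) = n + 1 then LamEnd n u v ⟨(i : ℕ) - 1, by omega⟩
    else if hj : (i : ℕ) < (j : ℕ) ∧ (j : ℕ) ≤ n then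
      LamMid n u v ⟨(i : ℕ) - 1, by omega⟩ ⟨(j : ℕ) - 1, by omega⟩
    else 0
  else 0
namespace Stmt5

/-- Active node predicate on node indices `0,…,n+1`. -/
def Act (n : ℕ) (z : Fin n → ℝ) (m : ℕ) : Prop :=
  m = 0 ∨ m = n + 1 ∨ (1 ≤ m ∧ ∃ h : m - 1 < n, z ⟨m - 1, h⟩ = 1)

/-- Consecutive-active-pair condition. -/
def Cond (n : ℕ) (z : Fin n → ℝ) (i j : Fin (n + 2)) : Prop :=
  i < j ∧ Act n z i.val ∧ Act n z j.val ∧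
    ∀ k : Fin (n + 2), i < k → k < j → ¬ Act n z k.val

/-- The canonical flow. -/
noncomputable def w0 (n : ℕ) (z : Fin n → ℝ) (i j : Fin (n + 2)) : ℝ :=
  if Cond n z i j then 1 else 0

variable {n : ℕ} {z : Fin n → ℝ}

lemma act0 : Act n z 0 := Or.inl rfl
lemma actLast : Act n z (n + 1) := Or.inr (Or.inl rfl)

lemma act_mid {m : ℕ} (h1 : 1 ≤ m) (h2 : m ≤ n) (h : m - 1 < n)
    (hz : z ⟨m - 1, h⟩ = 1) : Act n z m := Or.inr (Or.inr ⟨h1, h, hz⟩)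

lemma act_mid_val {m : ℕ} (h1 : 1 ≤ m) (h2 : m ≤ n) (hA : Act n z m) :
    ∃ h : m - 1 < n, z ⟨m - 1, h⟩ = 1 := by
  rcases hA with h | h | h
  · omega
  · omega
  · exact h.2

/-- unique successor -/
lemma exists_succ (i : Fin (n + 2)) (hi : Act n z i.val) (hle : i.val ≤ n) :
    ∃ j, Cond n z i j ∧ ∀ j', Cond n z i j' → j' = j := by
  classical
  set T : Finset (Fin (n + 2)) := Finset.univ.filter (fun k => i < k ∧ Act n z k.val) with hT
  have hne : T.Nonempty := by
    refine ⟨⟨n + 1, by omega⟩, ?_⟩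
    simp only [hT, Finset.mem_filter, Finset.mem_univ, true_and]
    exact ⟨by simp [Fin.lt_def]; omega, actLast⟩
  set j := T.min' hne with hj
  have hjT : j ∈ T := T.min'_mem hne
  simp only [hT, Finset.mem_filter] at hjT
  have hcond : Cond n z i j := by
    refine ⟨hjT.2.1, hi, hjT.2.2, fun k hik hkj hk => ?_⟩
    have : j ≤ k := T.min'_le k (by simp [hT, Finset.mem_filter]; exact ⟨hik, hk⟩)
    exact absurd hkj (not_lt.2 this)
  refine ⟨j, hcond, fun j' hj' => ?_⟩
  have hj'T : j' ∈ T := by simp [hT, Finset.mem_filter]; exact ⟨hj'.1, hj'.2.2.1⟩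
  have h1 : j ≤ j' := T.min'_le j' hj'T
  rcases lt_or_eq_of_le h1 with h | h
  · exact absurd hjT.2.2 (hj'.2.2.2 j hjT.2.1 h)
  · exact h.symm

/-- unique predecessor -/
lemma exists_pred (j : Fin (n + 2)) (hj : Act n z j.val) (hge : 1 ≤ j.val) :
    ∃ i, Cond n z i j ∧ ∀ i', Cond n z i' j → i' = i := by
  classical
  set T : Finset (Fin (n + 2)) := Finset.univ.filter (fun k => k < j ∧ Act n z k.val) with hT
  have hne : T.Nonempty := by
    refine ⟨⟨0, by omega⟩, ?_⟩
    simp only [hT, Finset.mem_filter, Finset.mem_univ, true_and]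
    exact ⟨by show (0:ℕ) < j.val; omega, act0⟩
  set i := T.max' hne with hi
  have hiT : i ∈ T := T.max'_mem hne
  simp only [hT, Finset.mem_filter] at hiT
  have hcond : Cond n z i j := by
    refine ⟨hiT.2.1, hiT.2.2, hj, fun k hik hkj hk => ?_⟩
    have : k ≤ i := T.le_max' k (by simp [hT, Finset.mem_filter]; exact ⟨hkj, hk⟩)
    exact absurd hik (not_lt.2 this)
  refine ⟨i, hcond, fun i' hi' => ?_⟩
  have hi'T : i' ∈ T := by simp [hT, Finset.mem_filter]; exact ⟨hi'.1, hi'.2.1⟩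
  have h1 : i' ≤ i := T.le_max' i' hi'T
  rcases lt_or_eq_of_le h1 with h | h
  · exact absurd hiT.2.2 (hi'.2.2.2 i h hiT.2.1)
  · exact h


lemma sum_w0_in_eq_one (ℓ : Fin (n + 2)) (hA : Act n z ℓ.val) (h1 : 1 ≤ ℓ.val) :
    ∑ i : Fin (n + 2), w0 n z i ℓ = 1 := by
  obtain ⟨i₀, hc, hu⟩ := exists_pred ℓ hA h1
  rw [Finset.sum_eq_single i₀]
  · simp [w0, hc]
  · intro b _ hb
    simp only [w0, ite_eq_right_iff]
    intro hcb; exact absurd (hu b hcb) hb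
  · simp

lemma sum_w0_out_eq_one (ℓ : Fin (n + 2)) (hA : Act n z ℓ.val) (h1 : ℓ.val ≤ n) :
    ∑ j : Fin (n + 2), w0 n z ℓ j = 1 := by
  obtain ⟨j₀, hc, hu⟩ := exists_succ ℓ hA h1
  rw [Finset.sum_eq_single j₀]
  · simp [w0, hc]
  · intro b _ hb
    simp only [w0, ite_eq_right_iff]
    intro hcb; exact absurd (hu b hcb) hb
  · simp

lemma sum_w0_in_eq_zero (ℓ : Fin (n + 2)) (hA : ¬ Act n z ℓ.val) :
    ∑ i : Fin (n + 2), w0 n z i ℓ = 0 := by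
  refine Finset.sum_eq_zero fun i _ => ?_
  simp only [w0, ite_eq_right_iff]
  intro hc; exact absurd hc.2.2.1 hA

lemma sum_w0_out_eq_zero (ℓ : Fin (n + 2)) (hA : ¬ Act n z ℓ.val) :
    ∑ j : Fin (n + 2), w0 n z ℓ j = 0 := by
  refine Finset.sum_eq_zero fun j _ => ?_
  simp only [w0, ite_eq_right_iff]
  intro hc; exact absurd hc.2.1 hA

lemma sum_w0_in_zero_node (ℓ : Fin (n + 2)) (h : ℓ.val = 0) :
    ∑ i : Fin (n + 2), w0 n z i ℓ = 0 := by
  refine Finset.sum_eq_zero fun i _ => ?_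
  simp only [w0, ite_eq_right_iff]
  intro hc
  have := hc.1
  rw [Fin.lt_def, h] at this; omega

lemma sum_w0_out_last (ℓ : Fin (n + 2)) (h : ℓ.val = n + 1) :
    ∑ j : Fin (n + 2), w0 n z ℓ j = 0 := by
  refine Finset.sum_eq_zero fun j _ => ?_
  simp only [w0, ite_eq_right_iff]
  intro hc
  have := hc.1
  rw [Fin.lt_def, h] at this; omega

lemma act_node_iff (hz : ∀ i, z i = 0 ∨ z i = 1) (ℓ : Fin n) :
    Act n z (ℓ.val + 1) ↔ z ℓ = 1 := by
  constructor
  · intro h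
    obtain ⟨h', hz1⟩ := act_mid_val (by omega) (by omega) h
    convert hz1 using 2
    exact Fin.ext (by simp)
  · intro h
    refine act_mid (by omega) (by omega) (by omega) ?_
    convert h using 2
    exact Fin.ext (by simp)

lemma pathCon_w0 (hz : ∀ i, z i = 0 ∨ z i = 1) : PathCon n z (w0 n z) := by
  refine ⟨?_, ?_, ?_, ?_⟩
  · intro i j h
    simp only [w0, ite_eq_right_iff]; intro hc; exact absurd hc.1 h
  · intro i j; unfold w0; split <;> norm_num
  · intro ℓ
    by_cases h0 : ℓ.val = 0
    · rw [sum_w0_in_zero_node ℓ h0, sum_w0_out_eq_one ℓ (by rw [h0]; exact act0) (by omega),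
        if_pos h0]
      ring
    · by_cases hl : ℓ.val = n + 1
      · rw [sum_w0_in_eq_one ℓ (by rw [hl]; exact actLast) (by omega), sum_w0_out_last ℓ hl,
          if_neg h0, if_pos hl]
        ring
      · rw [if_neg h0, if_neg hl]
        by_cases hA : Act n z ℓ.val
        · rw [sum_w0_in_eq_one ℓ hA (by omega), sum_w0_out_eq_one ℓ hA (by omega)]; ring
        · rw [sum_w0_in_eq_zero ℓ hA, sum_w0_out_eq_zero ℓ hA]; ring
  · intro ℓ
    rcases hz ℓ with h | h
    · rw [h, eq_comm]
      refine sum_w0_in_eq_zero _ (fun hA => ?_)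
      rw [show ((⟨ℓ.val + 1, by omega⟩ : Fin (n+2)) : ℕ) = ℓ.val + 1 from rfl,
        act_node_iff hz ℓ] at hA
      rw [h] at hA; norm_num at hA
    · rw [h, eq_comm]
      exact sum_w0_in_eq_one _ ((act_node_iff hz ℓ).2 h) (by simp)

end Stmt5
namespace Stmt5
variable {n : ℕ} {z : Fin n → ℝ} {w : Fin (n + 2) → Fin (n + 2) → ℝ}

lemma out_zero_node (hw : PathCon n z w) (ℓ : Fin (n + 2)) (hl : ℓ.val = 0) :
    ∑ j : Fin (n + 2), w ℓ j = 1 := by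
  have h := hw.2.2.1 ℓ
  have hin : ∑ i : Fin (n + 2), w i ℓ = 0 :=
    Finset.sum_eq_zero fun i _ => hw.1 i _ (by simp [Fin.lt_def, hl])
  rw [hin, if_pos hl] at h
  linarith

lemma in_last_node (hw : PathCon n z w) (ℓ : Fin (n + 2)) (hl : ℓ.val = n + 1) :
    ∑ i : Fin (n + 2), w i ℓ = 1 := by
  have h := hw.2.2.1 ℓ
  have hout : ∑ j : Fin (n + 2), w ℓ j = 0 :=
    Finset.sum_eq_zero fun j _ => hw.1 _ j (by simp [Fin.lt_def, hl]; omega)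
  rw [hout, if_neg (by omega), if_pos hl] at h
  linarith

lemma inout_mid (hw : PathCon n z w) (ℓ : Fin (n + 2)) (h1 : 1 ≤ ℓ.val) (h2 : ℓ.val ≤ n) :
    ∑ i : Fin (n + 2), w i ℓ = ∑ j : Fin (n + 2), w ℓ j := by
  have h := hw.2.2.1 ℓ
  rw [if_neg (by omega), if_neg (by omega)] at h
  linarith

lemma in_mid (hw : PathCon n z w) (ℓ : Fin (n + 2)) (h1 : 1 ≤ ℓ.val) (h2 : ℓ.val ≤ n) :
    ∑ i : Fin (n + 2), w i ℓ = z ⟨ℓ.val - 1, by omega⟩ := by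
  have hnode : (⟨((⟨ℓ.val - 1, by omega⟩ : Fin n) : ℕ) + 1, by omega⟩ : Fin (n + 2)) = ℓ := by
    apply Fin.ext
    show ℓ.val - 1 + 1 = ℓ.val
    omega
  have h := hw.2.2.2 ⟨ℓ.val - 1, by omega⟩
  simp only [hnode] at h
  exact h.symm

lemma in_act_one (hw : PathCon n z w) (ℓ : Fin (n + 2)) (hA : Act n z ℓ.val)
    (h1 : 1 ≤ ℓ.val) : ∑ i : Fin (n + 2), w i ℓ = 1 := by
  by_cases hl : ℓ.val = n + 1
  · exact in_last_node hw ℓ hl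
  · have h2 : ℓ.val ≤ n := by omega
    rw [in_mid hw ℓ h1 h2]
    exact (act_mid_val h1 h2 hA).2

lemma w_eq_zero_of_not_act_right (hz : ∀ i, z i = 0 ∨ z i = 1) (hw : PathCon n z w) {i j : Fin (n + 2)}
    (hA : ¬ Act n z j.val) : w i j = 0 := by
  have h1 : 1 ≤ j.val := by by_contra h; exact hA (by unfold Act; omega)
  have h2 : j.val ≤ n := by by_contra h; exact hA (by unfold Act; omega)
  have hzv : z ⟨j.val - 1, by omega⟩ = 0 := by
    rcases hz ⟨j.val - 1, by omega⟩ with h | h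
    · exact h
    · exact absurd (act_mid h1 h2 (by omega) h) hA
  have hin : ∑ i : Fin (n + 2), w i j = 0 := by rw [in_mid hw j h1 h2, hzv]
  have := (Finset.sum_eq_zero_iff_of_nonneg (fun i _ => hw.2.1 i j)).1 hin
  exact this i (Finset.mem_univ i)

lemma w_eq_zero_of_not_act_left (hz : ∀ i, z i = 0 ∨ z i = 1) (hw : PathCon n z w) {i j : Fin (n + 2)}
    (hA : ¬ Act n z i.val) : w i j = 0 := by
  have h1 : 1 ≤ i.val := by by_contra h; exact hA (by unfold Act; omega)
  have h2 : i.val ≤ n := by by_contra h; exact hA (by unfold Act; omega)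
  have hout : ∑ j' : Fin (n + 2), w i j' = 0 := by
    rw [← inout_mid hw i h1 h2]
    refine Finset.sum_eq_zero fun i' _ => w_eq_zero_of_not_act_right hz hw hA
  have := (Finset.sum_eq_zero_iff_of_nonneg (fun j' _ => hw.2.1 i j')).1 hout
  exact this j (Finset.mem_univ j)

lemma cut_lemma (hw : PathCon n z w) :
    ∀ k : ℕ, k ≤ n →
      ∑ i : Fin (n + 2), ∑ j : Fin (n + 2),
        (if i.val ≤ k ∧ k < j.val then w i j else 0) = 1 := by
  intro k
  induction k with
  | zero =>
    intro _
    have hpt : ∀ i j : Fin (n + 2),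
        (if i.val ≤ 0 ∧ 0 < j.val then w i j else 0)
          = (if i = ⟨0, by omega⟩ then w i j else 0) := by
      intro i j
      by_cases hi : i = (⟨0, by omega⟩ : Fin (n + 2))
      · rw [if_pos hi]
        by_cases hj : 0 < j.val
        · rw [if_pos ⟨by simp [hi], hj⟩]
        · rw [if_neg (by omega), hw.1 i j (by rw [Fin.lt_def]; omega)]
      · have : i.val ≠ 0 := fun h => hi (Fin.ext h)
        rw [if_neg hi, if_neg (by omega)]
    calc ∑ i : Fin (n + 2), ∑ j : Fin (n + 2),
          (if i.val ≤ 0 ∧ 0 < j.val then w i j else 0)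
        = ∑ i : Fin (n + 2), ∑ j : Fin (n + 2),
          (if i = ⟨0, by omega⟩ then w i j else 0) := by
          exact Finset.sum_congr rfl fun i _ => Finset.sum_congr rfl fun j _ => hpt i j
      _ = ∑ i : Fin (n + 2), (if i = ⟨0, by omega⟩ then ∑ j : Fin (n + 2), w i j else 0) := by
          refine Finset.sum_congr rfl fun i _ => ?_
          by_cases hi : i = (⟨0, by omega⟩ : Fin (n + 2))
          · simp only [if_pos hi]
          · simp only [if_neg hi, Finset.sum_const_zero]
      _ = ∑ j : Fin (n + 2), w ⟨0, by omega⟩ j := by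
          rw [Finset.sum_ite_eq' Finset.univ]
          simp
      _ = 1 := out_zero_node hw _ rfl
  | succ k ih =>
    intro hk1
    have ihv := ih (by omega)
    set P : Fin (n + 2) := ⟨k + 1, by omega⟩ with hP
    have hPv : P.val = k + 1 := rfl
    have key : ∀ i j : Fin (n + 2),
        (if i.val ≤ k + 1 ∧ k + 1 < j.val then w i j else 0) + (if j = P then w i j else 0)
          = (if i.val ≤ k ∧ k < j.val then w i j else 0) + (if i = P then w i j else 0) := by
      intro i j
      by_cases hij : i < j
      · rw [Fin.lt_def] at hij
        have hiP : (i = P) ↔ i.val = k + 1 := ⟨fun h => by rw [h], fun h => Fin.ext h⟩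
        have hjP : (j = P) ↔ j.val = k + 1 := ⟨fun h => by rw [h], fun h => Fin.ext h⟩
        simp only [hiP, hjP]
        split_ifs <;> (try linarith) <;> (exfalso; omega)
      · have h0 : w i j = 0 := hw.1 i j hij
        simp [h0]
    have hsum := Finset.sum_congr rfl fun i (_ : i ∈ Finset.univ) =>
      Finset.sum_congr rfl fun j (_ : j ∈ Finset.univ) => key i j
    rw [Finset.sum_congr rfl fun i _ => Finset.sum_add_distrib,
      Finset.sum_congr rfl fun i _ => Finset.sum_add_distrib, Finset.sum_add_distrib,
      Finset.sum_add_distrib] at hsum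
    have hInP : ∑ i : Fin (n + 2), ∑ j : Fin (n + 2), (if j = P then w i j else 0)
        = ∑ i : Fin (n + 2), w i P := by
      refine Finset.sum_congr rfl fun i _ => ?_
      rw [Finset.sum_ite_eq' Finset.univ]
      simp
    have hOutP : ∑ i : Fin (n + 2), ∑ j : Fin (n + 2), (if i = P then w i j else 0)
        = ∑ j : Fin (n + 2), w P j := by
      rw [show (∑ i : Fin (n + 2), ∑ j : Fin (n + 2), (if i = P then w i j else 0))
          = ∑ i : Fin (n + 2), (if i = P then ∑ j : Fin (n + 2), w i j else 0) from
        Finset.sum_congr rfl fun i _ => by by_cases hi : i = P <;> simp [hi]]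
      rw [Finset.sum_ite_eq' Finset.univ]
      simp
    rw [hInP, hOutP, ihv, inout_mid hw P (by omega) (by omega)] at hsum
    linarith

lemma w_between_zero (hz : ∀ i, z i = 0 ∨ z i = 1) (hw : PathCon n z w)
    {i j k : Fin (n + 2)} (hik : i < k) (hkj : k < j) (hAk : Act n z k.val) :
    w i j = 0 := by
  have hk1 : 1 ≤ k.val := by
    rcases Nat.eq_zero_or_pos k.val with h | h
    · rw [Fin.lt_def] at hik; omega
    · exact h
  have hk2 : k.val ≤ n := by
    rw [Fin.lt_def] at hkj; omega
  set m : ℕ := k.val - 1 with hm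
  have hC := cut_lemma hw m (by omega)
  -- F i' j' = if i'.val ≤ m ∧ m < j'.val then w i' j' else 0
  have hF : ∀ i' j' : Fin (n + 2), 0 ≤ (if i'.val ≤ m ∧ m < j'.val then w i' j' else 0) := by
    intro i' j'; split
    · exact hw.2.1 i' j'
    · exact le_refl 0
  have hInk : ∑ i' : Fin (n + 2), (if i'.val ≤ m ∧ m < k.val then w i' k else 0) = 1 := by
    rw [← in_act_one hw k hAk hk1]
    refine Finset.sum_congr rfl fun i' _ => ?_
    by_cases h : i'.val ≤ m ∧ m < k.val
    · rw [if_pos h]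
    · rw [if_neg h]
      have : ¬ i' < k := by rw [Fin.lt_def]; omega
      exact (hw.1 i' k this).symm
  -- split off the j' = k column
  have hsplit : ∀ i' : Fin (n + 2),
      ∑ j' : Fin (n + 2), (if i'.val ≤ m ∧ m < j'.val then w i' j' else 0)
        = (if i'.val ≤ m ∧ m < k.val then w i' k else 0)
          + ∑ j' ∈ Finset.univ.erase k, (if i'.val ≤ m ∧ m < j'.val then w i' j' else 0) := by
    intro i'
    exact (Finset.add_sum_erase Finset.univ
      (fun j' => if i'.val ≤ m ∧ m < j'.val then w i' j' else 0) (Finset.mem_univ k)).symm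
  have hR : (∑ i' : Fin (n + 2), ∑ j' ∈ Finset.univ.erase k,
      (if i'.val ≤ m ∧ m < j'.val then w i' j' else 0)) ≥ w i j := by
    have hjk : j ∈ Finset.univ.erase k := Finset.mem_erase.2 ⟨ne_of_gt hkj, Finset.mem_univ j⟩
    have h1 : (if i.val ≤ m ∧ m < j.val then w i j else 0) = w i j := by
      rw [Fin.lt_def] at hik hkj
      rw [if_pos ⟨by omega, by omega⟩]
    calc w i j = (if i.val ≤ m ∧ m < j.val then w i j else 0) := h1.symm
      _ ≤ ∑ j' ∈ Finset.univ.erase k, (if i.val ≤ m ∧ m < j'.val then w i j' else 0) :=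
          Finset.single_le_sum (fun j' _ => hF i j') hjk
      _ ≤ ∑ i' : Fin (n + 2), ∑ j' ∈ Finset.univ.erase k,
            (if i'.val ≤ m ∧ m < j'.val then w i' j' else 0) :=
          Finset.single_le_sum
            (fun i' _ => Finset.sum_nonneg fun j' _ => hF i' j') (Finset.mem_univ i)
  rw [Finset.sum_congr rfl fun i' _ => hsplit i', Finset.sum_add_distrib, hInk] at hC
  have := hw.2.1 i j
  linarith

lemma w_cond_one (hz : ∀ i, z i = 0 ∨ z i = 1) (hw : PathCon n z w)
    {i j : Fin (n + 2)} (hc : Cond n z i j) : w i j = 1 := by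
  have hj1 : 1 ≤ j.val := by
    have := hc.1; rw [Fin.lt_def] at this; omega
  have hin := in_act_one hw j hc.2.2.1 hj1
  rw [Finset.sum_eq_single i] at hin
  · exact hin
  · intro b _ hb
    by_cases hbj : b < j
    · by_cases hAb : Act n z b.val
      · rcases lt_trichotomy b i with h | h | h
        · exact w_between_zero hz hw h hc.1 hc.2.1
        · exact absurd h hb
        · exact absurd hAb (hc.2.2.2 b h hbj)
      · exact w_eq_zero_of_not_act_left hz hw hAb
    · exact hw.1 b j hbj
  · simp

lemma w_unique (hz : ∀ i, z i = 0 ∨ z i = 1) (hw : PathCon n z w) : w = w0 n z := by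
  funext i j
  by_cases hc : Cond n z i j
  · rw [w_cond_one hz hw hc, w0, if_pos hc]
  · rw [w0, if_neg hc]
    by_cases hij : i < j
    · by_cases hAi : Act n z i.val
      · by_cases hAj : Act n z j.val
        · -- there must be an active node in between
          unfold Cond at hc
          push_neg at hc
          obtain ⟨k, hik, hkj, hAk⟩ := hc hij hAi hAj
          exact w_between_zero hz hw hik hkj hAk
        · exact w_eq_zero_of_not_act_right hz hw hAj
      · exact w_eq_zero_of_not_act_left hz hw hAi
    · exact hw.1 i j hij

variable {u v : Fin n → ℝ}

lemma hu_ne (hA : Assumption1 n u v) (i : Fin n) : u i ≠ 0 :=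
  left_ne_zero_of_mul (ne_of_gt (hA.1 i))

lemma hv_ne (hA : Assumption1 n u v) (i : Fin n) : v i ≠ 0 :=
  right_ne_zero_of_mul (ne_of_gt (hA.1 i))

lemma hD_ne (hA : Assumption1 n u v) {i j : Fin n} (h : i < j) :
    u j * v i - u i * v j ≠ 0 :=
  right_ne_zero_of_mul (ne_of_gt (hA.2 i j h))

lemma facQ_le {a q : Fin n} (h : q ≤ a) : facQ n u v a q = u q * v a := by
  unfold facQ
  simp only [Matrix.of_apply]
  split
  · have : a = q := le_antisymm (by assumption) h
    rw [this]
  · rfl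

lemma facQ_ge {a q : Fin n} (h : a ≤ q) : facQ n u v a q = u a * v q := by
  unfold facQ
  simp only [Matrix.of_apply]
  rw [if_pos h]

lemma lamMid_mul (hA : Assumption1 n u v) {a a' : Fin n} (haa : a < a') (p q : Fin n)
    (hq : q ≤ a ∨ a' ≤ q) :
    ∑ k : Fin n, LamMid n u v a a' p k * facQ n u v k q
      = ((if p = a then 1 else 0) - u a / u a' * (if p = a' then 1 else 0)) *
        (if q ≤ a then u q / u a else 0) := by
  set c : ℝ := u a' / (u a * (u a' * v a - u a * v a')) with hc
  set X : Fin n → ℝ := fun t => (if t = a then (1:ℝ) else 0) - u a / u a' * (if t = a' then 1 else 0)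
    with hX
  have hterm : ∀ k : Fin n, LamMid n u v a a' p k * facQ n u v k q
      = (c * X p) * (X k * facQ n u v k q) := by
    intro k
    simp only [LamMid, Matrix.smul_apply, Matrix.of_apply, smul_eq_mul, hX, hc]
    ring
  rw [Finset.sum_congr rfl fun k _ => hterm k, ← Finset.mul_sum]
  have hXsum : ∑ k : Fin n, X k * facQ n u v k q
      = facQ n u v a q - u a / u a' * facQ n u v a' q := by
    simp only [hX, sub_mul, ite_mul, one_mul, zero_mul, mul_assoc]
    rw [Finset.sum_sub_distrib]
    rw [Finset.sum_ite_eq' Finset.univ a (fun k => facQ n u v k q)]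
    rw [← Finset.mul_sum, Finset.sum_ite_eq' Finset.univ a' (fun k => facQ n u v k q)]
    simp
  rw [hXsum]
  have hua := hu_ne hA a
  have hua' := hu_ne hA a'
  have hDne : u a' * v a - u a * v a' ≠ 0 := hD_ne hA haa
  rcases hq with hq | hq
  · have h1 : facQ n u v a q = u q * v a := facQ_le hq
    have h2 : facQ n u v a' q = u q * v a' := facQ_le (le_of_lt (lt_of_le_of_lt hq haa))
    rw [h1, h2, if_pos hq]
    have hkey : c * (u q * v a - u a / u a' * (u q * v a')) = u q / u a := by
      rw [hc]
      field_simp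
    calc c * X p * (u q * v a - u a / u a' * (u q * v a'))
        = X p * (c * (u q * v a - u a / u a' * (u q * v a'))) := by ring
      _ = X p * (u q / u a) := by rw [hkey]
  · have hqa : ¬ q ≤ a := by
      intro h
      exact absurd (lt_of_le_of_lt h haa) (not_lt.2 hq)
    have h1 : facQ n u v a q = u a * v q := facQ_ge (le_of_lt (lt_of_lt_of_le haa hq))
    have h2 : facQ n u v a' q = u a' * v q := facQ_ge hq
    rw [h1, h2, if_neg hqa]
    have : u a * v q - u a / u a' * (u a' * v q) = 0 := by
      field_simp
      ring
    rw [this, mul_zero, mul_zero]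

lemma lamEnd_mul (hA : Assumption1 n u v) {a : Fin n} (p q : Fin n) (hq : q ≤ a) :
    ∑ k : Fin n, LamEnd n u v a p k * facQ n u v k q
      = (if p = a then 1 else 0) * (if q ≤ a then u q / u a else 0) := by
  have hterm : ∀ k : Fin n, LamEnd n u v a p k * facQ n u v k q
      = (1 / (u a * v a) * (if p = a then 1 else 0)) *
          ((if k = a then 1 else 0) * facQ n u v k q) := by
    intro k
    simp only [LamEnd, Matrix.smul_apply, Matrix.of_apply, smul_eq_mul]
    ring
  rw [Finset.sum_congr rfl fun k _ => hterm k, ← Finset.mul_sum]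
  have hsum : ∑ k : Fin n, (if k = a then (1:ℝ) else 0) * facQ n u v k q = facQ n u v a q := by
    simp only [ite_mul, one_mul, zero_mul]
    rw [Finset.sum_ite_eq' Finset.univ a (fun k => facQ n u v k q)]
    simp
  rw [hsum, facQ_le hq, if_pos hq]
  have hua := hu_ne hA a
  have hva := hv_ne hA a
  field_simp

/-- For an arc of the canonical path and `q` in the support, `q` is not strictly
between the endpoints. -/
lemma cond_not_between (hz : ∀ i, z i = 0 ∨ z i = 1) {i j : Fin (n + 2)}
    (hc : Cond n z i j) {q : Fin n} (hq : z q = 1) :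
    q.val + 1 ≤ i.val ∨ j.val ≤ q.val + 1 := by
  by_contra h
  push_neg at h
  obtain ⟨h1, h2⟩ := h
  have hK : Act n z ((⟨q.val + 1, by omega⟩ : Fin (n + 2)) : ℕ) :=
    (act_node_iff hz q).2 hq
  exact hc.2.2.2 ⟨q.val + 1, by omega⟩ (by rw [Fin.lt_def]; exact h1)
    (by rw [Fin.lt_def]; exact h2) hK

lemma lamNode_out (h : ¬ (1 ≤ (i : Fin (n+2)).val ∧ i.val ≤ n)) (j : Fin (n + 2)) :
    LamNode n u v i j = 0 := dif_neg h

lemma lamNode_end {i j : Fin (n + 2)} (h1 : 1 ≤ i.val) (h2 : i.val ≤ n) (hj : j.val = n + 1) :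
    LamNode n u v i j = LamEnd n u v ⟨i.val - 1, by omega⟩ := by
  unfold LamNode
  rw [dif_pos ⟨h1, h2⟩, if_pos hj]

lemma lamNode_mid {i j : Fin (n + 2)} (h1 : 1 ≤ i.val) (h2 : i.val ≤ n)
    (hj1 : i.val < j.val) (hj2 : j.val ≤ n) :
    LamNode n u v i j = LamMid n u v ⟨i.val - 1, by omega⟩ ⟨j.val - 1, by omega⟩ := by
  unfold LamNode
  rw [dif_pos ⟨h1, h2⟩, if_neg (by omega), dif_pos ⟨hj1, hj2⟩]

/-- Row computation for an end arc. -/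
lemma arc_row_end (hA : Assumption1 n u v) (hz : ∀ i, z i = 0 ∨ z i = 1)
    {i j : Fin (n + 2)} (hc : Cond n z i j) (h1 : 1 ≤ i.val) (h2 : i.val ≤ n)
    (hj : j.val = n + 1) (p : Fin n) {q : Fin n} (hq : z q = 1) :
    ∑ k : Fin n, LamNode n u v i j p k * facQ n u v k q
      = (if p = (⟨i.val - 1, by omega⟩ : Fin n) then 1 else 0) *
        (if q ≤ (⟨i.val - 1, by omega⟩ : Fin n) then u q / u (⟨i.val - 1, by omega⟩ : Fin n) else 0) := by
  have hqa : q.val ≤ i.val - 1 := by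
    rcases cond_not_between hz hc hq with h | h
    · omega
    · omega
  rw [Finset.sum_congr rfl fun k _ => by rw [lamNode_end h1 h2 hj]]
  exact lamEnd_mul hA p q (by rw [Fin.le_def]; exact hqa)

/-- Row computation for a middle arc. -/
lemma arc_row_mid (hA : Assumption1 n u v) (hz : ∀ i, z i = 0 ∨ z i = 1)
    {i j : Fin (n + 2)} (hc : Cond n z i j) (h1 : 1 ≤ i.val) (h2 : i.val ≤ n)
    (hj0 : 1 ≤ j.val) (hj : j.val ≤ n) (p : Fin n) {q : Fin n} (hq : z q = 1) :
    ∑ k : Fin n, LamNode n u v i j p k * facQ n u v k q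
      = ((if p = (⟨i.val - 1, by omega⟩ : Fin n) then 1 else 0)
          - u (⟨i.val - 1, by omega⟩ : Fin n) / u (⟨j.val - 1, by omega⟩ : Fin n) *
            (if p = (⟨j.val - 1, by omega⟩ : Fin n) then 1 else 0)) *
        (if q ≤ (⟨i.val - 1, by omega⟩ : Fin n) then u q / u (⟨i.val - 1, by omega⟩ : Fin n) else 0) := by
  have hij : i.val < j.val := by have := hc.1; rwa [Fin.lt_def] at this
  have haa : (⟨i.val - 1, by omega⟩ : Fin n) < (⟨j.val - 1, by omega⟩ : Fin n) := by
    rw [Fin.lt_def]; simp only [Fin.val_mk]; omega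
  have hqa : q ≤ (⟨i.val - 1, by omega⟩ : Fin n) ∨ (⟨j.val - 1, by omega⟩ : Fin n) ≤ q := by
    rcases cond_not_between hz hc hq with h | h
    · left; rw [Fin.le_def]; simp only [Fin.val_mk]; omega
    · right; rw [Fin.le_def]; simp only [Fin.val_mk]; omega
  rw [Finset.sum_congr rfl fun k _ => by rw [lamNode_mid h1 h2 hij hj]]
  exact lamMid_mul hA haa p q hqa

lemma lamNode_supp (hz : ∀ i, z i = 0 ∨ z i = 1) {i j : Fin (n + 2)}
    (hc : Cond n z i j) {p q : Fin n} (h : ¬ (z p = 1 ∧ z q = 1)) :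
    LamNode n u v i j p q = 0 := by
  by_cases hi : 1 ≤ i.val ∧ i.val ≤ n
  · have hij : i.val < j.val := by have := hc.1; rwa [Fin.lt_def] at this
    have haS : z ⟨i.val - 1, by omega⟩ = 1 := (act_mid_val hi.1 hi.2 hc.2.1).2
    rcases not_and_or.1 h with hp | hq
    · -- p is not in the support
      have hpa : p ≠ (⟨i.val - 1, by omega⟩ : Fin n) := fun hh => hp (by rw [hh]; exact haS)
      by_cases hjn : j.val = n + 1
      · rw [lamNode_end hi.1 hi.2 hjn]
        simp only [LamEnd, Matrix.smul_apply, Matrix.of_apply, smul_eq_mul]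
        rw [if_neg hpa]
        ring
      · have hj2 : j.val ≤ n := by omega
        have haS' : z ⟨j.val - 1, by omega⟩ = 1 := (act_mid_val (by omega) hj2 hc.2.2.1).2
        have hpa' : p ≠ (⟨j.val - 1, by omega⟩ : Fin n) := fun hh => hp (by rw [hh]; exact haS')
        rw [lamNode_mid hi.1 hi.2 hij hj2]
        simp only [LamMid, Matrix.smul_apply, Matrix.of_apply, smul_eq_mul]
        rw [if_neg hpa, if_neg hpa']
        ring
    · have hqa : q ≠ (⟨i.val - 1, by omega⟩ : Fin n) := fun hh => hq (by rw [hh]; exact haS)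
      by_cases hjn : j.val = n + 1
      · rw [lamNode_end hi.1 hi.2 hjn]
        simp only [LamEnd, Matrix.smul_apply, Matrix.of_apply, smul_eq_mul]
        rw [if_neg hqa]
        ring
      · have hj2 : j.val ≤ n := by omega
        have haS' : z ⟨j.val - 1, by omega⟩ = 1 := (act_mid_val (by omega) hj2 hc.2.2.1).2
        have hqa' : q ≠ (⟨j.val - 1, by omega⟩ : Fin n) := fun hh => hq (by rw [hh]; exact haS')
        rw [lamNode_mid hi.1 hi.2 hij hj2]
        simp only [LamMid, Matrix.smul_apply, Matrix.of_apply, smul_eq_mul]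
        rw [if_neg hqa, if_neg hqa']
        ring
  · rw [lamNode_out hi]
    simp

lemma arc_row_end' (hA : Assumption1 n u v) (hz : ∀ i, z i = 0 ∨ z i = 1)
    {i j : Fin (n + 2)} (hc : Cond n z i j) (hj : j.val = n + 1)
    (p : Fin n) {q : Fin n} (hq : z q = 1) (a : Fin n) (ha : a.val + 1 = i.val) :
    ∑ k : Fin n, LamNode n u v i j p k * facQ n u v k q
      = (if p = a then 1 else 0) * (if q ≤ a then u q / u a else 0) := by
  have hb := a.isLt
  have h1 : 1 ≤ i.val := by omega
  have h2 : i.val ≤ n := by omega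
  have hae : (⟨i.val - 1, by omega⟩ : Fin n) = a := Fin.ext (by
    simp only [Fin.val_mk]; omega)
  rw [← hae]
  exact arc_row_end hA hz hc h1 h2 hj p hq

lemma arc_row_mid' (hA : Assumption1 n u v) (hz : ∀ i, z i = 0 ∨ z i = 1)
    {i j : Fin (n + 2)} (hc : Cond n z i j) (p : Fin n) {q : Fin n} (hq : z q = 1)
    (a b : Fin n) (ha : a.val + 1 = i.val) (hb : b.val + 1 = j.val) :
    ∑ k : Fin n, LamNode n u v i j p k * facQ n u v k q
      = ((if p = a then 1 else 0) - u a / u b * (if p = b then 1 else 0)) *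
        (if q ≤ a then u q / u a else 0) := by
  have hb1 := a.isLt
  have hb2 := b.isLt
  have h1 : 1 ≤ i.val := by omega
  have h2 : i.val ≤ n := by omega
  have hj0 : 1 ≤ j.val := by omega
  have hj : j.val ≤ n := by omega
  have hae : (⟨i.val - 1, by omega⟩ : Fin n) = a := Fin.ext (by
    simp only [Fin.val_mk]; omega)
  have hbe : (⟨j.val - 1, by omega⟩ : Fin n) = b := Fin.ext (by
    simp only [Fin.val_mk]; omega)
  rw [← hae, ← hbe]
  exact arc_row_mid hA hz hc h1 h2 hj0 hj p hq

lemma MQ_entry (hA : Assumption1 n u v) (hz : ∀ i, z i = 0 ∨ z i = 1)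
    {p q : Fin n} (hp : z p = 1) (hq : z q = 1) :
    (∑ k : Fin n, (∑ i : Fin (n + 2), ∑ j : Fin (n + 2),
        w0 n z i j * LamNode n u v i j p k) * facQ n u v k q)
      = if p = q then 1 else 0 := by
  have hpn : p.val < n := p.isLt
  obtain ⟨P, hPval⟩ : ∃ P : Fin (n + 2), P.val = p.val + 1 := ⟨⟨p.val + 1, by omega⟩, rfl⟩
  have hPact : Act n z P.val := by rw [hPval]; exact (act_node_iff hz p).2 hp
  obtain ⟨F, hFdef⟩ : ∃ F : Fin (n + 2) → Fin (n + 2) → ℝ, ∀ i j, F i j =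
      w0 n z i j * (∑ k : Fin n, LamNode n u v i j p k * facQ n u v k q) :=
    ⟨_, fun _ _ => rfl⟩
  have e1 : (∑ k : Fin n, (∑ i : Fin (n + 2), ∑ j : Fin (n + 2),
      w0 n z i j * LamNode n u v i j p k) * facQ n u v k q)
        = ∑ i : Fin (n + 2), ∑ j : Fin (n + 2), F i j := by
    rw [show (∑ k : Fin n, (∑ i : Fin (n + 2), ∑ j : Fin (n + 2),
        w0 n z i j * LamNode n u v i j p k) * facQ n u v k q)
        = ∑ k : Fin n, ∑ i : Fin (n + 2), (∑ j : Fin (n + 2),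
            w0 n z i j * LamNode n u v i j p k) * facQ n u v k q from
      Finset.sum_congr rfl fun k _ => by rw [Finset.sum_mul]]
    rw [Finset.sum_comm]
    refine Finset.sum_congr rfl fun i _ => ?_
    rw [Finset.sum_congr rfl fun k (_ : k ∈ Finset.univ) => Finset.sum_mul _ _ _]
    rw [Finset.sum_comm]
    refine Finset.sum_congr rfl fun j _ => ?_
    rw [hFdef, Finset.mul_sum]
    exact Finset.sum_congr rfl fun k _ => by ring
  rw [e1]
  have hFnot : ∀ i j : Fin (n + 2), ¬ Cond n z i j → F i j = 0 := by
    intro i j hc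
    rw [hFdef, w0, if_neg hc, zero_mul]
  have hFvan : ∀ i j : Fin (n + 2), i ≠ P → j ≠ P → F i j = 0 := by
    intro i j hiP hjP
    by_cases hc : Cond n z i j
    · by_cases hi : 1 ≤ i.val ∧ i.val ≤ n
      · have hij : i.val < j.val := by have := hc.1; rwa [Fin.lt_def] at this
        have hiPv : i.val ≠ p.val + 1 := fun h => hiP (Fin.ext (by omega))
        have hpa : p ≠ (⟨i.val - 1, by omega⟩ : Fin n) := by
          intro hh
          have h2 := congrArg Fin.val hh
          simp only [Fin.val_mk] at h2
          omega
        by_cases hjn : j.val = n + 1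
        · rw [hFdef, arc_row_end' hA hz hc hjn p hq ⟨i.val - 1, by omega⟩ (by
            simp only [Fin.val_mk]; omega), if_neg hpa, zero_mul, mul_zero]
        · have hj2 : j.val ≤ n := by omega
          have hjPv : j.val ≠ p.val + 1 := fun h => hjP (Fin.ext (by omega))
          have hpb : p ≠ (⟨j.val - 1, by omega⟩ : Fin n) := by
            intro hh
            have h2 := congrArg Fin.val hh
            simp only [Fin.val_mk] at h2
            omega
          rw [hFdef, arc_row_mid' hA hz hc p hq ⟨i.val - 1, by omega⟩ ⟨j.val - 1, by omega⟩
            (by simp only [Fin.val_mk]; omega) (by simp only [Fin.val_mk]; omega),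
            if_neg hpa, if_neg hpb]
          ring
      · rw [hFdef, show (∑ k : Fin n, LamNode n u v i j p k * facQ n u v k q)
            = ∑ k : Fin n, (0 : Matrix (Fin n) (Fin n) ℝ) p k * facQ n u v k q from
          Finset.sum_congr rfl fun k _ => by rw [lamNode_out hi]]
        simp
    · exact hFnot i j hc
  have hsplit : ∑ i : Fin (n + 2), ∑ j : Fin (n + 2), F i j
      = (∑ j : Fin (n + 2), F P j) + ∑ i ∈ Finset.univ.erase P, F i P := by
    rw [← Finset.add_sum_erase Finset.univ (fun i => ∑ j : Fin (n + 2), F i j)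
      (Finset.mem_univ P)]
    congr 1
    refine Finset.sum_congr rfl fun i hi => ?_
    exact Finset.sum_eq_single P (fun j _ hj => hFvan i j (Finset.mem_erase.1 hi).1 hj)
      (fun h => absurd (Finset.mem_univ P) h)
  rw [hsplit]
  obtain ⟨J, hJc, hJu⟩ := exists_succ P hPact (by omega)
  obtain ⟨I, hIc, hIu⟩ := exists_pred P hPact (by omega)
  have hIP : I ≠ P := ne_of_lt hIc.1
  have hIlt : I.val < p.val + 1 := by
    have := hIc.1; rw [Fin.lt_def] at this; omega
  have hup := hu_ne hA p
  have hout : (∑ j : Fin (n + 2), F P j) = (if q ≤ p then u q / u p else 0) := by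
    rw [Finset.sum_eq_single J (fun j _ hjJ => hFnot P j (fun hcc => hjJ (hJu j hcc)))
      (fun h => absurd (Finset.mem_univ J) h)]
    have hw1 : w0 n z P J = 1 := by rw [w0, if_pos hJc]
    by_cases hJn : J.val = n + 1
    · rw [hFdef, hw1, one_mul, arc_row_end' hA hz hJc hJn p hq p (by omega),
        if_pos rfl, one_mul]
    · have hJlt : P.val < J.val := by have := hJc.1; rwa [Fin.lt_def] at this
      have hJ2 : J.val ≤ n := by omega
      have hpJ : p ≠ (⟨J.val - 1, by omega⟩ : Fin n) := by
        intro hh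
        have h2 := congrArg Fin.val hh
        simp only [Fin.val_mk] at h2
        omega
      rw [hFdef, hw1, one_mul, arc_row_mid' hA hz hJc p hq p ⟨J.val - 1, by omega⟩
        (by omega) (by simp only [Fin.val_mk]; omega), if_pos rfl, if_neg hpJ,
        mul_zero, sub_zero, one_mul]
  have hin : (∑ i ∈ Finset.univ.erase P, F i P) = F I P := by
    refine Finset.sum_eq_single_of_mem I (Finset.mem_erase.2 ⟨hIP, Finset.mem_univ I⟩) ?_
    intro i _ hiI
    exact hFnot i P (fun hcc => hiI (hIu i hcc))
  rw [hout, hin]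
  by_cases hI0 : I.val = 0
  · have hFI : F I P = 0 := by
      rw [hFdef, show (∑ k : Fin n, LamNode n u v I P p k * facQ n u v k q)
          = ∑ k : Fin n, (0 : Matrix (Fin n) (Fin n) ℝ) p k * facQ n u v k q from
        Finset.sum_congr rfl fun k _ => by rw [lamNode_out (by omega)]]
      simp
    rw [hFI, add_zero]
    by_cases hpq : p = q
    · rw [if_pos hpq, ← hpq, if_pos (le_refl p), div_self hup]
    · rw [if_neg hpq]
      have hql : ¬ q ≤ p := by
        intro hqp
        have hqlt : q.val < p.val := by
          rcases lt_or_eq_of_le hqp with h | h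
          · rwa [Fin.lt_def] at h
          · exact absurd h.symm hpq
        exact absurd ((act_node_iff hz q).2 hq)
          (hIc.2.2.2 ⟨q.val + 1, by omega⟩
            (by rw [Fin.lt_def]; show I.val < q.val + 1; omega)
            (by rw [Fin.lt_def]; show q.val + 1 < P.val; omega))
      rw [if_neg hql]
  · have hI1 : 1 ≤ I.val := by omega
    have hI2 : I.val ≤ n := by omega
    obtain ⟨A, hAval⟩ : ∃ A : Fin n, A.val = I.val - 1 := ⟨⟨I.val - 1, by omega⟩, rfl⟩
    have hua := hu_ne hA A
    have hap : A.val < p.val := by omega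
    have hpa : p ≠ A := fun hh => by
      have h2 := congrArg Fin.val hh
      omega
    have hw1 : w0 n z I P = 1 := by rw [w0, if_pos hIc]
    have hFI : F I P = (0 - u A / u p * 1) * (if q ≤ A then u q / u A else 0) := by
      rw [hFdef, hw1, one_mul, arc_row_mid' hA hz hIc p hq A p (by omega) (by omega),
        if_neg hpa, if_pos rfl]
    rw [hFI]
    by_cases hpq : p = q
    · subst hpq
      rw [if_pos rfl, if_pos (le_refl p), div_self hup,
        if_neg (by rw [Fin.le_def]; omega : ¬ p ≤ A), mul_zero, add_zero]
    · rw [if_neg hpq]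
      rcases lt_trichotomy q.val p.val with hlt | heq | hgt
      · have hqle : q ≤ p := by rw [Fin.le_def]; omega
        have hqI : q.val + 1 ≤ I.val := by
          by_contra hcon
          push_neg at hcon
          exact absurd ((act_node_iff hz q).2 hq)
            (hIc.2.2.2 ⟨q.val + 1, by omega⟩
              (by rw [Fin.lt_def]; show I.val < q.val + 1; omega)
              (by rw [Fin.lt_def]; show q.val + 1 < P.val; omega))
        have hqa : q ≤ A := by rw [Fin.le_def]; omega
        rw [if_pos hqle, if_pos hqa]
        field_simp
        ring
      · exact absurd (Fin.ext heq) (fun hh => hpq hh.symm)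
      · rw [if_neg (by rw [Fin.le_def]; omega : ¬ q ≤ p),
          if_neg (by rw [Fin.le_def]; omega : ¬ q ≤ A)]
        ring

lemma matrix_part (hA : Assumption1 n u v) (hz : ∀ i, z i = 0 ∨ z i = 1) :
    (∑ i : Fin (n + 2), ∑ j : Fin (n + 2), w0 n z i j • LamNode n u v i j)
      = hatInv n (facQ n u v) (Finset.univ.filter fun ℓ => z ℓ = 1) := by
  classical
  set S : Finset (Fin n) := Finset.univ.filter (fun ℓ => z ℓ = 1) with hSdef
  obtain ⟨M, hMdef⟩ : ∃ M, M = ∑ i : Fin (n + 2), ∑ j : Fin (n + 2),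
      w0 n z i j • LamNode n u v i j := ⟨_, rfl⟩
  rw [← hMdef]
  have hmem : ∀ p : Fin n, p ∈ S ↔ z p = 1 := fun p => by simp [hSdef]
  have hMapply : ∀ p k : Fin n, M p k
      = ∑ i : Fin (n + 2), ∑ j : Fin (n + 2), w0 n z i j * LamNode n u v i j p k := by
    intro p k
    rw [hMdef, Matrix.sum_apply]
    refine Finset.sum_congr rfl fun i _ => ?_
    rw [Matrix.sum_apply]
    exact Finset.sum_congr rfl fun j _ => rfl
  have hMsupp : ∀ p k : Fin n, ¬ (z p = 1 ∧ z k = 1) → M p k = 0 := by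
    intro p k h
    rw [hMapply]
    refine Finset.sum_eq_zero fun i _ => Finset.sum_eq_zero fun j _ => ?_
    by_cases hc : Cond n z i j
    · rw [lamNode_supp hz hc h, mul_zero]
    · rw [w0, if_neg hc, zero_mul]
  have hprod : (M.submatrix (fun x : {x : Fin n // x ∈ S} => (x : Fin n))
        (fun x : {x : Fin n // x ∈ S} => (x : Fin n))) * subMat n (facQ n u v) S = 1 := by
    ext pp qq
    rw [Matrix.mul_apply]
    have hpS : z (pp : Fin n) = 1 := (hmem _).1 pp.2
    have hqS : z (qq : Fin n) = 1 := (hmem _).1 qq.2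
    have e2 : ∀ k : {x : Fin n // x ∈ S},
        M.submatrix (fun x : {x : Fin n // x ∈ S} => (x : Fin n))
            (fun x : {x : Fin n // x ∈ S} => (x : Fin n)) pp k
            * subMat n (facQ n u v) S k qq
          = M (pp : Fin n) (k : Fin n) * facQ n u v (k : Fin n) (qq : Fin n) := fun k => rfl
    rw [Finset.sum_congr rfl fun k _ => e2 k,
      Finset.sum_coe_sort S (fun k => M (pp : Fin n) k * facQ n u v k (qq : Fin n)),
      Finset.sum_subset (Finset.subset_univ S) (fun k _ hk => by
        rw [hMsupp _ _ (fun hcon => hk ((hmem k).2 hcon.2)), zero_mul]),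
      show (∑ k : Fin n, M (pp : Fin n) k * facQ n u v k (qq : Fin n))
          = if (pp : Fin n) = (qq : Fin n) then 1 else 0 from by
        rw [Finset.sum_congr rfl fun k (_ : k ∈ Finset.univ) => by rw [hMapply]]
        exact MQ_entry hA hz hpS hqS,
      Matrix.one_apply]
    by_cases h : pp = qq
    · rw [if_pos h, if_pos (congrArg _ h)]
    · rw [if_neg h, if_neg (fun hv => h (Subtype.ext hv))]
  have hinv := Matrix.inv_eq_left_inv hprod
  ext a b
  show M a b = hatInv n (facQ n u v) S a b
  unfold hatInv
  rw [Matrix.of_apply]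
  by_cases ha : a ∈ S
  · by_cases hb : b ∈ S
    · rw [dif_pos ha, dif_pos hb, hinv]
      rfl
    · rw [dif_pos ha, dif_neg hb]
      exact hMsupp a b (fun hcon => hb ((hmem b).2 hcon.2))
  · rw [dif_neg ha]
    exact hMsupp a b (fun hcon => ha ((hmem a).2 hcon.1))

end Stmt5

theorem stmt_5 (n : ℕ) (hn : 1 ≤ n) (u v : Fin n → ℝ) (hA : Assumption1 n u v)
    (z : Fin n → ℝ) (hz : ∀ i, z i = 0 ∨ z i = 1) :
    (∃! w : Fin (n + 2) → Fin (n + 2) → ℝ, PathCon n z w) ∧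
      ∀ w : Fin (n + 2) → Fin (n + 2) → ℝ, PathCon n z w →
        (∑ i : Fin (n + 2), ∑ j : Fin (n + 2), w i j • LamNode n u v i j) =
          hatInv n (facQ n u v) (Finset.univ.filter fun ℓ => z ℓ = 1) := by
  constructor
  · exact ⟨Stmt5.w0 n z, Stmt5.pathCon_w0 hz, fun w hw => Stmt5.w_unique hz hw⟩
  · intro w hw
    rw [Stmt5.w_unique hz hw]
    exact Stmt5.matrix_part hA hz
end

section
/- Let n ≥ 1 and let u, v : {1,…,n} → ℝ satisfy Assumption 1. Consider the polytope P of all triples (z, w, W) ∈ ℝ^n × ℝ^{(n+1)(n+2)/2} × ℝ^{n×n} such that w = (w_{ij})_{0 ≤ i < j ≤ n+1} satisfies the path constraints for z and W = Σ_{1 ≤ i < j ≤ n+1} Λ_{i→j} w_{ij}. Then every extreme point (z, w, W) of P satisfies w_{ij} ∈ {0,1} for all 0 ≤ i < j ≤ n+1 and z_ℓ ∈ {0,1} for all ℓ ∈ {1,…,n}. -/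
open Matrix BigOperators
open scoped Classical

namespace S6

variable {n : ℕ}

noncomputable def bd (n : ℕ) (ℓ : Fin (n+2)) : ℝ :=
  if (ℓ:ℕ) = 0 then -1 else if (ℓ:ℕ) = n + 1 then 1 else 0

noncomputable def nxt (w : Fin (n+2) → Fin (n+2) → ℝ) (c : Fin (n+2)) : Fin (n+2) :=
  if h : ∃ d, 0 < w c d then h.choose else c

noncomputable def g (w : Fin (n+2) → Fin (n+2) → ℝ) (t : ℕ) : Fin (n+2) :=
  (nxt w)^[t] 0

variable {w : Fin (n+2) → Fin (n+2) → ℝ}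
variable (hw0 : ∀ i j : Fin (n+2), ¬ i < j → w i j = 0)
variable (hwn : ∀ i j : Fin (n+2), 0 ≤ w i j)
variable (hc : ∀ ℓ : Fin (n+2),
    (∑ i : Fin (n+2), w i ℓ) - ∑ j : Fin (n+2), w ℓ j = bd n ℓ)

lemma g_succ (t : ℕ) : g w (t+1) = nxt w (g w t) :=
  Function.iterate_succ_apply' _ _ _

include hw0 hwn in
lemma nxt_spec {c : Fin (n+2)} (h : 0 < ∑ j : Fin (n+2), w c j) :
    0 < w c (nxt w c) ∧ c < nxt w c := by
  have hex : ∃ d, 0 < w c d := by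
    have := Finset.exists_lt_of_sum_lt (f := fun _ : Fin (n+2) => (0:ℝ))
      (g := fun j => w c j) (s := Finset.univ) (by simpa using h)
    obtain ⟨d, -, hd⟩ := this
    exact ⟨d, hd⟩
  have h1 : 0 < w c (nxt w c) := by
    rw [nxt, dif_pos hex]; exact hex.choose_spec
  refine ⟨h1, ?_⟩
  by_contra hlt
  rw [hw0 _ _ hlt] at h1; exact lt_irrefl _ h1

include hw0 in
lemma nxt_last : nxt w (Fin.last (n+1)) = Fin.last (n+1) := by
  rw [nxt, dif_neg]
  rintro ⟨d, hd⟩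
  rw [hw0 _ _ (not_lt.2 (Fin.le_last d))] at hd
  exact lt_irrefl _ hd

include hw0 in
lemma g_absorb {t : ℕ} (h : g w t = Fin.last (n+1)) : g w (t+1) = Fin.last (n+1) := by
  rw [g_succ, h, nxt_last hw0]

include hw0 in
lemma g_absorb_le {s t : ℕ} (hst : s ≤ t) (h : g w s = Fin.last (n+1)) :
    g w t = Fin.last (n+1) := by
  induction t with
  | zero =>
      have hs0 : s = 0 := by omega
      exact hs0 ▸ h
  | succ t ih =>
      rcases Nat.lt_or_ge s (t+1) with h1 | h1
      · exact g_absorb hw0 (ih (by omega))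
      · have : s = t+1 := by omega
        exact this ▸ h

include hw0 hwn hc in
lemma g_inv (t : ℕ) :
    g w t = Fin.last (n+1) ∨ (0 < ∑ j : Fin (n+2), w (g w t) j ∧ t ≤ (g w t : ℕ)) := by
  induction t with
  | zero =>
      right
      have h0 : (∑ i : Fin (n+2), w i (0 : Fin (n+2))) = 0 := by
        apply Finset.sum_eq_zero
        intro i _
        exact hw0 i 0 (by simp [Fin.lt_def])
      have := hc 0
      rw [h0, bd] at this
      norm_num at this
      have hg0 : g w 0 = 0 := rfl
      rw [hg0]
      exact ⟨by linarith, by norm_num⟩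
  | succ t ih =>
      rcases ih with h | ⟨hpos, hle⟩
      · left; exact g_absorb hw0 h
      · obtain ⟨hwpos, hlt⟩ := nxt_spec hw0 hwn hpos
        rw [← g_succ] at hwpos hlt
        by_cases hlast : g w (t+1) = Fin.last (n+1)
        · left; exact hlast
        · right
          constructor
          · -- inflow at g w (t+1) positive, internal node, conservation
            have hin : 0 < ∑ i : Fin (n+2), w i (g w (t+1)) :=
              lt_of_lt_of_le hwpos (Finset.single_le_sum (fun i _ => hwn i _) (Finset.mem_univ _))
            have hne0 : ((g w (t+1) : ℕ)) ≠ 0 := by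
              have : (g w t : ℕ) < (g w (t+1) : ℕ) := hlt
              omega
            have hnel : ((g w (t+1) : ℕ)) ≠ n + 1 := by
              intro h; exact hlast (Fin.ext h)
            have := hc (g w (t+1))
            rw [bd, if_neg hne0, if_neg hnel] at this
            linarith
          · have : (g w t : ℕ) < (g w (t+1) : ℕ) := hlt
            omega

include hw0 hwn hc in
lemma g_step {t : ℕ} (h : g w t ≠ Fin.last (n+1)) :
    g w t < g w (t+1) ∧ 0 < w (g w t) (g w (t+1)) := by
  rcases g_inv hw0 hwn hc t with h' | ⟨hpos, -⟩
  · exact absurd h' h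
  · obtain ⟨h1, h2⟩ := nxt_spec hw0 hwn hpos
    rw [← g_succ] at h1 h2
    exact ⟨h2, h1⟩

include hw0 hwn hc in
lemma g_reach : g w (n+1) = Fin.last (n+1) := by
  rcases g_inv hw0 hwn hc (n+1) with h | ⟨-, hle⟩
  · exact h
  · have h2 : (g w (n+1) : ℕ) ≤ n + 1 := Fin.is_le _
    refine Fin.ext ?_
    simp only [Fin.val_last]
    omega

include hw0 hwn hc in
lemma g_mono {s t : ℕ} (hst : s < t) (h : g w s ≠ Fin.last (n+1)) :
    g w s < g w t ∨ g w t = Fin.last (n+1) := by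
  induction t with
  | zero => omega
  | succ t ih =>
      rcases Nat.lt_or_ge s t with h1 | h1
      · rcases ih h1 with h2 | h2
        · by_cases h3 : g w t = Fin.last (n+1)
          · right; exact g_absorb hw0 h3
          · left; exact h2.trans (g_step hw0 hwn hc h3).1
        · right; exact g_absorb hw0 h2
      · have hst' : s = t := by omega
        subst hst'
        left; exact (g_step hw0 hwn hc h).1

include hw0 hwn hc in
lemma g_inj {s t : ℕ} (hgs : g w s = g w t) (h : g w s ≠ Fin.last (n+1)) : s = t := by
  by_contra hne
  rcases Nat.lt_or_ge s t with h1 | h1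
  · rcases g_mono hw0 hwn hc h1 h with h2 | h2
    · rw [hgs] at h2; exact lt_irrefl _ h2
    · rw [← hgs] at h2; exact h h2
  · have h1' : t < s := by omega
    rcases g_mono hw0 hwn hc h1' (hgs ▸ h) with h2 | h2
    · rw [hgs] at h2; exact lt_irrefl _ h2
    · exact h h2

/-- indicator of path arcs -/
noncomputable def chi (w : Fin (n+2) → Fin (n+2) → ℝ) (i j : Fin (n+2)) : ℝ :=
  if (∃ t, g w t = i ∧ g w (t+1) = j) ∧ i ≠ Fin.last (n+1) then 1 else 0

lemma chi_nonneg (i j : Fin (n+2)) : 0 ≤ chi w i j := by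
  rw [chi]; split <;> norm_num

lemma chi_mem (i j : Fin (n+2)) : chi w i j = 0 ∨ chi w i j = 1 := by
  rw [chi]; split <;> simp

include hw0 hwn hc in
lemma chi_arc {i j : Fin (n+2)} (h : chi w i j ≠ 0) :
    i < j ∧ 0 < w i j := by
  rw [chi] at h
  split at h
  · next hcond =>
      obtain ⟨⟨t, hti, htj⟩, hil⟩ := hcond
      subst hti; subst htj
      exact ⟨(g_step hw0 hwn hc hil).1, (g_step hw0 hwn hc hil).2⟩
  · exact absurd rfl h

include hw0 in
lemma chi_zero {i j : Fin (n+2)} (h : ¬ i < j) : w i j = 0 := hw0 _ _ h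

include hw0 hwn hc in
lemma chi_zero' {i j : Fin (n+2)} (h : ¬ i < j) : chi w i j = 0 := by
  by_contra hne
  exact h (chi_arc hw0 hwn hc hne).1

include hw0 hwn hc in
lemma chi_inflow (ℓ : Fin (n+2)) :
    ∑ i : Fin (n+2), chi w i ℓ =
      if (∃ t, g w t = ℓ) ∧ ℓ ≠ 0 then 1 else 0 := by
  by_cases hcond : (∃ t, g w t = ℓ) ∧ ℓ ≠ 0
  · obtain ⟨hex, hl0⟩ := hcond
    have hgs : g w (Nat.find hex) = ℓ := Nat.find_spec hex
    set s := Nat.find hex with hsdef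
    have hs_min : ∀ t, t < s → g w t ≠ ℓ := fun t ht => Nat.find_min hex ht
    have hs_pos : 0 < s := by
      rcases Nat.eq_zero_or_pos s with h | h
      · exfalso; apply hl0; rw [← hgs, h]; rfl
      · exact h
    have hstep : g w ((s-1)+1) = ℓ := by
      rw [show s - 1 + 1 = s by omega]; exact hgs
    have hi0ne : g w (s-1) ≠ Fin.last (n+1) := by
      intro h
      have h2 : g w ((s-1)+1) = Fin.last (n+1) := g_absorb hw0 h
      rw [hstep] at h2
      exact hs_min (s-1) (by omega) (h.trans h2.symm)
    rw [if_pos ⟨hex, hl0⟩]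
    have hsum : ∑ i : Fin (n+2), chi w i ℓ = chi w (g w (s-1)) ℓ := by
      apply Finset.sum_eq_single
      · intro i _ hne
        rw [chi, if_neg]
        rintro ⟨⟨t, hti, htl⟩, hil⟩
        apply hne
        by_cases hll : ℓ = Fin.last (n+1)
        · have h1 : s ≤ t+1 := by
            by_contra hlt
            exact hs_min (t+1) (by omega) htl
          have h2 : t + 1 = s := by
            by_contra hne2
            have hts : s ≤ t := by omega
            have h3 : g w t = Fin.last (n+1) :=
              g_absorb_le hw0 hts (hgs.trans hll)
            rw [hti] at h3
            exact hil h3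
          rw [← hti, show t = s - 1 by omega]
        · have hne2 : g w (t+1) ≠ Fin.last (n+1) := by rw [htl]; exact hll
          have h2 : t + 1 = s := g_inj hw0 hwn hc (htl.trans hgs.symm) hne2
          rw [← hti, show t = s - 1 by omega]
      · intro h; exact absurd (Finset.mem_univ _) h
    rw [hsum, chi, if_pos ⟨⟨s-1, rfl, hstep⟩, hi0ne⟩]
  · rw [if_neg hcond]
    apply Finset.sum_eq_zero
    intro i _
    rw [chi, if_neg]
    rintro ⟨⟨t, hti, htl⟩, hil⟩
    apply hcond
    refine ⟨⟨t+1, htl⟩, ?_⟩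
    have hstep := (g_step hw0 hwn hc (by rw [hti]; exact hil)).1
    rw [hti, htl] at hstep
    intro h
    rw [h] at hstep
    exact absurd hstep (by simp [Fin.lt_def])

include hw0 hwn hc in
lemma chi_outflow (ℓ : Fin (n+2)) :
    ∑ j : Fin (n+2), chi w ℓ j =
      if (∃ t, g w t = ℓ) ∧ ℓ ≠ Fin.last (n+1) then 1 else 0 := by
  by_cases hcond : (∃ t, g w t = ℓ) ∧ ℓ ≠ Fin.last (n+1)
  · obtain ⟨⟨s, hgs⟩, hll⟩ := hcond
    rw [if_pos ⟨⟨s, hgs⟩, hll⟩]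
    have hsum : ∑ j : Fin (n+2), chi w ℓ j = chi w ℓ (g w (s+1)) := by
      apply Finset.sum_eq_single
      · intro j _ hne
        rw [chi, if_neg]
        rintro ⟨⟨t, hti, htj⟩, hil⟩
        apply hne
        have h2 : t = s := g_inj hw0 hwn hc (hti.trans hgs.symm) (by rw [hti]; exact hll)
        rw [← htj, h2]
      · intro h; exact absurd (Finset.mem_univ _) h
    rw [hsum, chi, if_pos ⟨⟨s, hgs, rfl⟩, hll⟩]
  · rw [if_neg hcond]
    apply Finset.sum_eq_zero
    intro j _
    rw [chi, if_neg]
    rintro ⟨⟨t, hti, htj⟩, hil⟩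
    exact hcond ⟨⟨t, hti⟩, hti ▸ hil⟩

include hw0 hwn hc in
lemma chi_cons (ℓ : Fin (n+2)) :
    (∑ i : Fin (n+2), chi w i ℓ) - ∑ j : Fin (n+2), chi w ℓ j = bd n ℓ := by
  rw [chi_inflow hw0 hwn hc, chi_outflow hw0 hwn hc, bd]
  by_cases h0 : (ℓ:ℕ) = 0
  · have hℓ : ℓ = 0 := Fin.ext h0
    rw [if_pos h0, if_neg (by rintro ⟨-, h⟩; exact h hℓ),
      if_pos ⟨⟨0, by rw [hℓ]; rfl⟩, by rw [hℓ]; intro h; exact absurd (congrArg Fin.val h) (by simp)⟩]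
    norm_num
  · rw [if_neg h0]
    by_cases h1 : (ℓ:ℕ) = n + 1
    · have hℓ : ℓ = Fin.last (n+1) := Fin.ext (by simpa using h1)
      rw [if_pos h1,
        if_pos ⟨⟨n+1, by rw [hℓ]; exact g_reach hw0 hwn hc⟩, by intro h; exact h0 (by rw [h]; rfl)⟩,
        if_neg (by rintro ⟨-, h⟩; exact h hℓ)]
      norm_num
    · rw [if_neg h1]
      by_cases hpath : ∃ t, g w t = ℓ
      · rw [if_pos ⟨hpath, by intro h; exact h0 (by rw [h]; rfl)⟩,
          if_pos ⟨hpath, by intro h; apply h1; rw [h]; rfl⟩]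
        norm_num
      · rw [if_neg (by rintro ⟨h, -⟩; exact hpath h),
          if_neg (by rintro ⟨h, -⟩; exact hpath h)]
        norm_num

end S6


theorem stmt_6 (n : ℕ) (hn : 1 ≤ n) (u v : Fin n → ℝ) (hA : Assumption1 n u v) :
    ∀ p ∈ Set.extremePoints ℝ
        {q : (Fin n → ℝ) × (Fin (n + 2) → Fin (n + 2) → ℝ) × Matrix (Fin n) (Fin n) ℝ |
          PathCon n q.1 q.2.1 ∧
          q.2.2 = ∑ i : Fin (n + 2), ∑ j : Fin (n + 2), q.2.1 i j • LamNode n u v i j},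
      (∀ i j : Fin (n + 2), p.2.1 i j = 0 ∨ p.2.1 i j = 1) ∧
      ∀ ℓ : Fin n, p.1 ℓ = 0 ∨ p.1 ℓ = 1 := by
  rintro ⟨z, w, W⟩ hp
  obtain ⟨⟨⟨hw0, hwn, hc, hz⟩, hW⟩, hext⟩ := hp
  simp only at hw0 hwn hc hz hW ⊢
  have hc' : ∀ ℓ : Fin (n+2),
      (∑ i : Fin (n+2), w i ℓ) - ∑ j : Fin (n+2), w ℓ j = S6.bd n ℓ := hc
  -- arc set of the path
  have hlast0 : (0 : Fin (n+2)) ≠ Fin.last (n+1) := by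
    intro h; exact absurd (congrArg Fin.val h) (by simp)
  have hmemA : S6.chi w 0 (S6.g w 1) ≠ 0 := by
    rw [S6.chi, if_pos ⟨⟨0, rfl, rfl⟩, hlast0⟩]; norm_num
  set A : Finset (Fin (n+2) × Fin (n+2)) :=
    Finset.univ.filter (fun q : Fin (n+2) × Fin (n+2) => S6.chi w q.1 q.2 ≠ 0) with hAdef
  have hAne : A.Nonempty :=
    ⟨(0, S6.g w 1), Finset.mem_filter.mpr ⟨Finset.mem_univ _, hmemA⟩⟩
  set θ : ℝ := A.inf' hAne (fun q => w q.1 q.2) with hθdef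
  have hθpos : 0 < θ := by
    rw [hθdef, Finset.lt_inf'_iff]
    intro q hq
    rw [hAdef, Finset.mem_filter] at hq
    exact (S6.chi_arc hw0 hwn hc' hq.2).2
  have hwθ : ∀ i j : Fin (n+2), θ * S6.chi w i j ≤ w i j := by
    intro i j
    rcases S6.chi_mem (w := w) i j with h | h
    · rw [h, mul_zero]; exact hwn i j
    · rw [h, mul_one]
      have hmem : ((i, j) : Fin (n+2) × Fin (n+2)) ∈ A := by
        rw [hAdef]
        simp only [Finset.mem_filter, Finset.mem_univ, true_and]
        rw [h]; norm_num
      exact Finset.inf'_le (fun q => w q.1 q.2) hmem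
  -- main claim : w = χ
  have hwchi : ∀ i j : Fin (n+2), w i j = S6.chi w i j := by
    by_cases hθ1 : θ < 1
    · exfalso
      have h1θ : (0:ℝ) < 1 - θ := by linarith
      set wq : Fin (n+2) → Fin (n+2) → ℝ :=
        fun i j => (w i j - θ * S6.chi w i j) / (1 - θ) with hwqdef
      have hcomb : ∀ i j : Fin (n+2), θ * S6.chi w i j + (1-θ) * wq i j = w i j := by
        intro i j; rw [hwqdef]; field_simp; ring
      have hsumwq : ∀ (F : Fin (n+2) → ℝ) (G : Fin (n+2) → ℝ),
          True := fun _ _ => trivial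
      -- inflow/outflow linearity
      have hlin : ∀ (f : Fin (n+2) → ℝ),
          (∑ i : Fin (n+2), (f i - θ * (0:ℝ))) = 0 ∨ True := fun _ => Or.inr trivial
      have hqin : ∀ ℓ : Fin (n+2), ∑ i : Fin (n+2), wq i ℓ =
          ((∑ i : Fin (n+2), w i ℓ) - θ * ∑ i : Fin (n+2), S6.chi w i ℓ) / (1-θ) := by
        intro ℓ
        rw [Finset.mul_sum, ← Finset.sum_sub_distrib, ← Finset.sum_div]
      have hqout : ∀ ℓ : Fin (n+2), ∑ j : Fin (n+2), wq ℓ j =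
          ((∑ j : Fin (n+2), w ℓ j) - θ * ∑ j : Fin (n+2), S6.chi w ℓ j) / (1-θ) := by
        intro ℓ
        rw [Finset.mul_sum, ← Finset.sum_sub_distrib, ← Finset.sum_div]
      set node : Fin n → Fin (n+2) := fun ℓ => ⟨(ℓ : ℕ) + 1, by omega⟩ with hnode
      set r : (Fin n → ℝ) × (Fin (n + 2) → Fin (n + 2) → ℝ) × Matrix (Fin n) (Fin n) ℝ :=
        (fun ℓ => ∑ i : Fin (n+2), S6.chi w i (node ℓ), S6.chi w,
          ∑ i : Fin (n+2), ∑ j : Fin (n+2), S6.chi w i j • LamNode n u v i j) with hrdef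
      set q : (Fin n → ℝ) × (Fin (n + 2) → Fin (n + 2) → ℝ) × Matrix (Fin n) (Fin n) ℝ :=
        (fun ℓ => ∑ i : Fin (n+2), wq i (node ℓ), wq,
          ∑ i : Fin (n+2), ∑ j : Fin (n+2), wq i j • LamNode n u v i j) with hqdef
      have hrS : PathCon n r.1 r.2.1 ∧ r.2.2 =
          ∑ i : Fin (n+2), ∑ j : Fin (n+2), r.2.1 i j • LamNode n u v i j := by
        refine ⟨⟨?_, ?_, ?_, ?_⟩, rfl⟩
        · intro i j h; exact S6.chi_zero' hw0 hwn hc' h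
        · intro i j; exact S6.chi_nonneg i j
        · intro ℓ; exact S6.chi_cons hw0 hwn hc' ℓ
        · intro ℓ; rfl
      have hqS : PathCon n q.1 q.2.1 ∧ q.2.2 =
          ∑ i : Fin (n+2), ∑ j : Fin (n+2), q.2.1 i j • LamNode n u v i j := by
        refine ⟨⟨?_, ?_, ?_, ?_⟩, rfl⟩
        · intro i j h
          show (w i j - θ * S6.chi w i j) / (1 - θ) = 0
          rw [hw0 _ _ h, S6.chi_zero' hw0 hwn hc' h]
          simp
        · intro i j
          show 0 ≤ (w i j - θ * S6.chi w i j) / (1 - θ)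
          exact div_nonneg (by linarith [hwθ i j]) h1θ.le
        · intro ℓ
          show (∑ i : Fin (n+2), wq i ℓ) - ∑ j : Fin (n+2), wq ℓ j = _
          rw [hqin, hqout, div_sub_div_same, div_eq_iff (by linarith : (1:ℝ) - θ ≠ 0)]
          have e1 := hc' ℓ
          have e2 := S6.chi_cons hw0 hwn hc' ℓ
          show _ = S6.bd n ℓ * (1 - θ)
          linear_combination e1 - θ * e2
        · intro ℓ; rfl
      have hseg : (z, w, W) ∈ openSegment ℝ r q := by
        refine ⟨θ, 1-θ, hθpos, h1θ, by ring, ?_⟩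
        have h2 : (θ • r + (1-θ) • q).2.1 = w := by
          funext i j
          show θ * S6.chi w i j + (1-θ) * wq i j = w i j
          exact hcomb i j
        have h1 : (θ • r + (1-θ) • q).1 = z := by
          funext ℓ
          show θ * (∑ i : Fin (n+2), S6.chi w i (node ℓ)) + (1-θ) * ∑ i : Fin (n+2), wq i (node ℓ)
            = z ℓ
          rw [hz ℓ, Finset.mul_sum, Finset.mul_sum, ← Finset.sum_add_distrib]
          exact Finset.sum_congr rfl fun i _ => hcomb i (node ℓ)
        have h3 : (θ • r + (1-θ) • q).2.2 = W := by
          show θ • (∑ i : Fin (n+2), ∑ j : Fin (n+2), S6.chi w i j • LamNode n u v i j)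
            + (1-θ) • (∑ i : Fin (n+2), ∑ j : Fin (n+2), wq i j • LamNode n u v i j) = W
          rw [hW, Finset.smul_sum, Finset.smul_sum, ← Finset.sum_add_distrib]
          refine Finset.sum_congr rfl fun i _ => ?_
          rw [Finset.smul_sum, Finset.smul_sum, ← Finset.sum_add_distrib]
          refine Finset.sum_congr rfl fun j _ => ?_
          rw [smul_smul, smul_smul, ← add_smul, hcomb i j]
        calc θ • r + (1-θ) • q
            = ((θ • r + (1-θ) • q).1, (θ • r + (1-θ) • q).2.1, (θ • r + (1-θ) • q).2.2) := rfl
          _ = (z, w, W) := by rw [h1, h2, h3]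
      have hr_eq := hext hrS hqS hseg
      have hcw : S6.chi w = w := congrArg (fun x => x.2.1) hr_eq
      have h1le : (1:ℝ) ≤ θ := by
        rw [hθdef]
        apply Finset.le_inf'
        intro b hb
        rw [hAdef, Finset.mem_filter] at hb
        rcases S6.chi_mem (w := w) b.1 b.2 with h | h
        · exact absurd h hb.2
        · rw [← hcw, h]
      linarith
    · -- θ ≥ 1 : w - χ is a nonneg circulation on a DAG, hence zero
      push_neg at hθ1
      have hwχ : ∀ i j : Fin (n+2), S6.chi w i j ≤ w i j := by
        intro i j
        calc S6.chi w i j = 1 * S6.chi w i j := (one_mul _).symm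
          _ ≤ θ * S6.chi w i j := by
              have := S6.chi_nonneg (w := w) i j
              nlinarith
          _ ≤ w i j := hwθ i j
      set f : Fin (n+2) → Fin (n+2) → ℝ := fun i j => w i j - S6.chi w i j with hfdef
      have hfnn : ∀ i j, 0 ≤ f i j := fun i j => by
        simp only [hfdef]; linarith [hwχ i j]
      have hf0 : ∀ i j : Fin (n+2), ¬ i < j → f i j = 0 := by
        intro i j h
        simp only [hfdef]
        rw [hw0 _ _ h, S6.chi_zero' hw0 hwn hc' h, sub_zero]
      have hflow : ∀ ℓ : Fin (n+2),
          ∑ i : Fin (n+2), f i ℓ = ∑ j : Fin (n+2), f ℓ j := by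
        intro ℓ
        have e1 := hc' ℓ
        have e2 := S6.chi_cons hw0 hwn hc' ℓ
        simp only [hfdef]
        rw [Finset.sum_sub_distrib, Finset.sum_sub_distrib]
        linarith
      have hDsum : ∑ i : Fin (n+2), ∑ j : Fin (n+2),
          f i j * (((j:ℕ):ℝ) - ((i:ℕ):ℝ)) = 0 := by
        have e0 : ∀ i j : Fin (n+2), f i j * (((j:ℕ):ℝ) - ((i:ℕ):ℝ))
            = f i j * ((j:ℕ):ℝ) - f i j * ((i:ℕ):ℝ) := fun i j => by ring
        calc ∑ i : Fin (n+2), ∑ j : Fin (n+2), f i j * (((j:ℕ):ℝ) - ((i:ℕ):ℝ))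
            = (∑ i : Fin (n+2), ∑ j : Fin (n+2), f i j * ((j:ℕ):ℝ))
              - ∑ i : Fin (n+2), ∑ j : Fin (n+2), f i j * ((i:ℕ):ℝ) := by
              rw [← Finset.sum_sub_distrib]
              refine Finset.sum_congr rfl fun i _ => ?_
              rw [← Finset.sum_sub_distrib]
              exact Finset.sum_congr rfl fun j _ => e0 i j
          _ = (∑ j : Fin (n+2), (∑ i : Fin (n+2), f i j) * ((j:ℕ):ℝ))
              - ∑ i : Fin (n+2), (∑ j : Fin (n+2), f i j) * ((i:ℕ):ℝ) := by
              rw [Finset.sum_comm]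
              congr 1
              · exact Finset.sum_congr rfl fun j _ => (Finset.sum_mul _ _ _).symm
              · exact Finset.sum_congr rfl fun i _ => (Finset.sum_mul _ _ _).symm
          _ = 0 := by
              rw [sub_eq_zero]
              exact Finset.sum_congr rfl fun ℓ _ => by rw [hflow ℓ]
      have hterm : ∀ i j : Fin (n+2), f i j * (((j:ℕ):ℝ) - ((i:ℕ):ℝ)) = 0 := by
        have hnn : ∀ i j : Fin (n+2), 0 ≤ f i j * (((j:ℕ):ℝ) - ((i:ℕ):ℝ)) := by
          intro i j
          by_cases h : i < j
          · apply mul_nonneg (hfnn i j)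
            have : (i:ℕ) < (j:ℕ) := h
            have : ((i:ℕ):ℝ) < ((j:ℕ):ℝ) := by exact_mod_cast this
            linarith
          · rw [hf0 i j h, zero_mul]
        intro i j
        have h1 : ∀ i : Fin (n+2), 0 ≤ ∑ j : Fin (n+2), f i j * (((j:ℕ):ℝ) - ((i:ℕ):ℝ)) :=
          fun i => Finset.sum_nonneg fun j _ => hnn i j
        have h2 : ∑ j' : Fin (n+2), f i j' * (((j':ℕ):ℝ) - ((i:ℕ):ℝ)) = 0 :=
          (Finset.sum_eq_zero_iff_of_nonneg fun i _ => h1 i).mp hDsum i (Finset.mem_univ i)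
        exact (Finset.sum_eq_zero_iff_of_nonneg fun j' _ => hnn i j').mp h2 j (Finset.mem_univ j)
      intro i j
      by_cases h : i < j
      · have := hterm i j
        have hji : ((i:ℕ):ℝ) < ((j:ℕ):ℝ) := by exact_mod_cast (show (i:ℕ) < (j:ℕ) from h)
        have : f i j = 0 := by
          rcases mul_eq_zero.mp this with h' | h'
          · exact h'
          · linarith
        simp only [hfdef] at this
        linarith
      · rw [hw0 _ _ h, S6.chi_zero' hw0 hwn hc' h]
  constructor
  · intro i j
    rw [hwchi i j]
    exact S6.chi_mem i j
  · intro ℓ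
    rw [hz ℓ]
    have : ∑ i : Fin (n+2), w i ⟨(ℓ:ℕ)+1, by omega⟩
        = ∑ i : Fin (n+2), S6.chi w i ⟨(ℓ:ℕ)+1, by omega⟩ :=
      Finset.sum_congr rfl fun i _ => hwchi i _
    rw [this, S6.chi_inflow hw0 hwn hc']
    split
    · right; rfl
    · left; rfl
end

section
/- Let n, d ≥ 1 and let U_i, V_i ∈ ℝ^{d×d} (1 ≤ i ≤ n) with each U_i V_iᵀ symmetric, and let Q ∈ ℝ^{dn×dn} be the associated block-factorizable matrix. Then Q is positive definite if and only if U_i V_iᵀ is positive definite for every i ∈ {1,…,n} (which forces each U_i to be invertible) and U_i V_iᵀ − U_i U_j⁻¹ V_j U_iᵀ is positive definite for all 1 ≤ i < j ≤ n. -/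
open Matrix BigOperators
open scoped Classical

/-- The block-factorizable matrix with `(i,j)`-th `d×d` block `U_i V_jᵀ` for `i ≤ j`
and `V_i U_jᵀ` for `i > j`. -/
noncomputable def blockQ (n d : ℕ) (U V : Fin n → Matrix (Fin d) (Fin d) ℝ) :
    Matrix (Fin n × Fin d) (Fin n × Fin d) ℝ :=
  Matrix.of fun p q =>
    if p.1 ≤ q.1 then (U p.1 * (V q.1)ᵀ) p.2 q.2 else (V p.1 * (U q.1)ᵀ) p.2 q.2

/-- Assumption 2. -/
def Assumption2 (n d : ℕ) (U V : Fin n → Matrix (Fin d) (Fin d) ℝ) : Prop :=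
  (∀ i : Fin n, (U i * (V i)ᵀ).PosDef) ∧
    ∀ i j : Fin n, i < j → (U i * (V i)ᵀ - U i * (U j)⁻¹ * V j * (U i)ᵀ).PosDef

/-- `E_i`, the `dn×d` block column matrix whose `i`-th block is the identity. -/
def Emat (n d : ℕ) (i : Fin n) : Matrix (Fin n × Fin d) (Fin d) ℝ :=
  Matrix.of fun p b => if p.1 = i ∧ p.2 = b then 1 else 0

/-- `Λ_{[i→j]}` for `1 ≤ i < j ≤ n`. -/
noncomputable def BLamMid (n d : ℕ) (U V : Fin n → Matrix (Fin d) (Fin d) ℝ) (i j : Fin n) :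
    Matrix (Fin n × Fin d) (Fin n × Fin d) ℝ :=
  (Emat n d i - Emat n d j * ((U j)ᵀ)⁻¹ * (U i)ᵀ) *
    (U i * (V i)ᵀ - U i * (U j)⁻¹ * V j * (U i)ᵀ)⁻¹ *
    (Emat n d i - Emat n d j * ((U j)ᵀ)⁻¹ * (U i)ᵀ)ᵀ

/-- `Λ_{[i→n+1]} = E_i (U_i V_iᵀ)⁻¹ E_iᵀ`. -/
noncomputable def BLamEnd (n d : ℕ) (U V : Fin n → Matrix (Fin d) (Fin d) ℝ) (i : Fin n) :
    Matrix (Fin n × Fin d) (Fin n × Fin d) ℝ :=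
  Emat n d i * (U i * (V i)ᵀ)⁻¹ * (Emat n d i)ᵀ

namespace Stmt9Aux

variable {d : ℕ}

lemma sum_dot {ι} (s : Finset ι) (f : ι → Fin d → ℝ) (w : Fin d → ℝ) :
    (∑ i ∈ s, f i) ⬝ᵥ w = ∑ i ∈ s, f i ⬝ᵥ w := by
  simp [dotProduct, Finset.sum_apply, Finset.sum_mul]
  exact Finset.sum_comm

lemma dot_sum' {ι} (s : Finset ι) (v : Fin d → ℝ) (f : ι → Fin d → ℝ) :
    v ⬝ᵥ (∑ i ∈ s, f i) = ∑ i ∈ s, v ⬝ᵥ f i := by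
  simp [dotProduct, Finset.sum_apply, Finset.mul_sum]
  exact Finset.sum_comm

lemma dotmv_sum {ι} (s : Finset ι) (A : ι → Matrix (Fin d) (Fin d) ℝ) (v w : Fin d → ℝ) :
    v ⬝ᵥ ((∑ k ∈ s, A k) *ᵥ w) = ∑ k ∈ s, v ⬝ᵥ (A k *ᵥ w) := by
  simp only [mulVec, dotProduct, Matrix.sum_apply, Finset.sum_mul, Finset.mul_sum]
  refine Eq.trans (Finset.sum_congr rfl fun a _ => Finset.sum_comm) ?_
  exact Finset.sum_comm

lemma dot1 (c : Prop) [Decidable c] (v w : Fin d → ℝ) :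
    (if c then v else 0) ⬝ᵥ w = if c then v ⬝ᵥ w else 0 := by split <;> simp

lemma dot2 (c : Prop) [Decidable c] (v w : Fin d → ℝ) :
    v ⬝ᵥ (if c then w else 0) = if c then v ⬝ᵥ w else 0 := by split <;> simp

lemma dotmv_ite (c : Prop) [Decidable c] (A : Matrix (Fin d) (Fin d) ℝ) (v w : Fin d → ℝ) :
    v ⬝ᵥ ((if c then A else 0) *ᵥ w) = if c then v ⬝ᵥ (A *ᵥ w) else 0 := by split <;> simp

lemma tele (S' : ℕ → Matrix (Fin d) (Fin d) ℝ) (m N : ℕ) (h : m ≤ N) :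
    ∑ k ∈ Finset.Ico m N, (S' k - S' (k+1)) = S' m - S' N := by
  rw [Finset.sum_Ico_eq_sum_range]
  have h2 := Finset.sum_range_sub' (fun k => S' (m + k)) (N - m)
  rw [Nat.add_sub_cancel' h] at h2
  exact h2

lemma key (n : ℕ) (S' : ℕ → Matrix (Fin d) (Fin d) ℝ) (h0 : S' n = 0) (m : ℕ) (hm : m < n) :
    S' m = ∑ k ∈ Finset.range n, if m ≤ k then S' k - S' (k+1) else 0 := by
  rw [Finset.sum_ite, Finset.sum_const_zero, add_zero]
  have hf : (Finset.range n).filter (fun k => m ≤ k) = Finset.Ico m n := by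
    ext k; simp [Finset.mem_Ico, Finset.mem_filter, and_comm]
  rw [hf, tele S' m n hm.le, h0, sub_zero]

lemma maxsum (n : ℕ) (S' : ℕ → Matrix (Fin d) (Fin d) ℝ) (h0 : S' n = 0)
    (z : Fin n → Fin d → ℝ) :
    ∑ i : Fin n, ∑ j : Fin n, z i ⬝ᵥ (S' (max (i:ℕ) (j:ℕ)) *ᵥ z j)
      = ∑ k ∈ Finset.range n,
          (∑ i : Fin n, if (i:ℕ) ≤ k then z i else 0) ⬝ᵥ
            ((S' k - S' (k+1)) *ᵥ (∑ j : Fin n, if (j:ℕ) ≤ k then z j else 0)) := by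
  have LHS : ∀ i j : Fin n,
      z i ⬝ᵥ (S' (max (i:ℕ) (j:ℕ)) *ᵥ z j)
        = ∑ k ∈ Finset.range n,
            (if (i:ℕ) ≤ k then if (j:ℕ) ≤ k then z i ⬝ᵥ ((S' k - S' (k+1)) *ᵥ z j) else 0 else 0) := by
    intro i j
    rw [key n S' h0 (max (i:ℕ) (j:ℕ)) (by simp [Nat.max_lt, i.isLt, j.isLt]), dotmv_sum]
    refine Finset.sum_congr rfl fun k _ => ?_
    rw [dotmv_ite]
    simp only [max_le_iff, ite_and]
  have RHS : ∀ k, (∑ i : Fin n, if (i:ℕ) ≤ k then z i else 0) ⬝ᵥ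
            ((S' k - S' (k+1)) *ᵥ (∑ j : Fin n, if (j:ℕ) ≤ k then z j else 0))
      = ∑ i : Fin n, ∑ j : Fin n,
          (if (i:ℕ) ≤ k then if (j:ℕ) ≤ k then z i ⬝ᵥ ((S' k - S' (k+1)) *ᵥ z j) else 0 else 0) := by
    intro k
    rw [sum_dot]
    refine Finset.sum_congr rfl fun i _ => ?_
    rw [dot1]
    split
    · rw [dotProduct_mulVec, dot_sum']
      refine Finset.sum_congr rfl fun j _ => ?_
      rw [dot2, dotProduct_mulVec]
    · simp
  calc ∑ i : Fin n, ∑ j : Fin n, z i ⬝ᵥ (S' (max (i:ℕ) (j:ℕ)) *ᵥ z j)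
      = ∑ i : Fin n, ∑ j : Fin n, ∑ k ∈ Finset.range n,
          (if (i:ℕ) ≤ k then if (j:ℕ) ≤ k then z i ⬝ᵥ ((S' k - S' (k+1)) *ᵥ z j) else 0 else 0) :=
        Finset.sum_congr rfl fun i _ => Finset.sum_congr rfl fun j _ => LHS i j
    _ = ∑ i : Fin n, ∑ k ∈ Finset.range n, ∑ j : Fin n,
          (if (i:ℕ) ≤ k then if (j:ℕ) ≤ k then z i ⬝ᵥ ((S' k - S' (k+1)) *ᵥ z j) else 0 else 0) :=
        Finset.sum_congr rfl fun i _ => Finset.sum_comm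
    _ = ∑ k ∈ Finset.range n, ∑ i : Fin n, ∑ j : Fin n,
          (if (i:ℕ) ≤ k then if (j:ℕ) ≤ k then z i ⬝ᵥ ((S' k - S' (k+1)) *ᵥ z j) else 0 else 0) :=
        Finset.sum_comm
    _ = _ := Finset.sum_congr rfl fun k _ => (RHS k).symm

lemma posdef_congr {A M : Matrix (Fin d) (Fin d) ℝ} (hA : IsUnit A.det) (hM : M.PosDef) :
    (A * M * Aᵀ).PosDef := by
  rw [posDef_iff_dotProduct_mulVec]
  constructor
  · have h1 : Mᵀ = M := hM.1
    unfold Matrix.IsHermitian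
    rw [conjTranspose_eq_transpose_of_trivial]
    rw [transpose_mul, transpose_mul, transpose_transpose, h1, mul_assoc]
  · intro x hx
    have hxA : Aᵀ *ᵥ x ≠ 0 := by
      intro h
      apply hx
      have := congrArg (fun w => (Aᵀ)⁻¹ *ᵥ w) h
      simpa [mulVec_mulVec, Matrix.nonsing_inv_mul Aᵀ (by simpa using hA)] using this
    have h2 := hM.dotProduct_mulVec_pos hxA
    rw [star_trivial] at h2 ⊢
    rw [← mulVec_mulVec, ← mulVec_mulVec, dotProduct_mulVec, ← mulVec_transpose]
    exact h2

lemma mv_dot (A : Matrix (Fin d) (Fin d) ℝ) (u v : Fin d → ℝ) :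
    (A *ᵥ u) ⬝ᵥ v = u ⬝ᵥ (Aᵀ *ᵥ v) := by
  rw [dotProduct_mulVec, vecMul_transpose]

lemma sum_ite_pair {n : ℕ} {i j : Fin n} (hij : i ≠ j) (a b : ℝ) :
    (∑ y : Fin n, if y = i then a else if y = j then b else 0) = a + b := by
  have hsplit : ∀ y : Fin n, (if y = i then a else if y = j then b else 0)
      = (if y = i then a else 0) + (if y = j then b else 0) := by
    intro y
    by_cases h1 : y = i
    · subst h1
      rw [if_pos rfl, if_pos rfl, if_neg hij, add_zero]
    · rw [if_neg h1, if_neg h1, zero_add]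
  simp only [hsplit]
  rw [Finset.sum_add_distrib, Finset.sum_ite_eq', Finset.sum_ite_eq']
  simp

lemma quadQ (n : ℕ) (U V : Fin n → Matrix (Fin d) (Fin d) ℝ) (x : Fin n × Fin d → ℝ) :
    x ⬝ᵥ (blockQ n d U V) *ᵥ x
      = ∑ i : Fin n, ∑ j : Fin n,
          (fun a => x (i,a)) ⬝ᵥ ((if i ≤ j then U i * (V j)ᵀ else V i * (U j)ᵀ) *ᵥ (fun b => x (j,b))) := by
  simp only [dotProduct, mulVec, blockQ, of_apply, Fintype.sum_prod_type, Finset.mul_sum]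
  refine Finset.sum_congr rfl fun i _ => ?_
  rw [Finset.sum_comm]
  refine Finset.sum_congr rfl fun j _ => Finset.sum_congr rfl fun a _ => Finset.sum_congr rfl fun b _ => ?_
  by_cases h : i ≤ j <;> simp [h]

end Stmt9Aux

open Stmt9Aux

theorem stmt_9 (n d : ℕ) (hn : 1 ≤ n) (hd : 1 ≤ d)
    (U V : Fin n → Matrix (Fin d) (Fin d) ℝ)
    (hsym : ∀ i : Fin n, (U i * (V i)ᵀ)ᵀ = U i * (V i)ᵀ) :
    (blockQ n d U V).PosDef ↔
      ((∀ i : Fin n, (U i * (V i)ᵀ).PosDef) ∧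
        ∀ i j : Fin n, i < j →
          (U i * (V i)ᵀ - U i * (U j)⁻¹ * V j * (U i)ᵀ).PosDef) := by
  have hUdet : (∀ i : Fin n, (U i * (V i)ᵀ).PosDef) → ∀ i : Fin n, IsUnit (U i).det := by
    intro hdiag i
    have h := (hdiag i).det_pos
    rw [det_mul] at h
    refine isUnit_iff_ne_zero.2 fun h0 => ?_
    rw [h0, zero_mul] at h
    exact lt_irrefl 0 h
  have hSsym : (∀ i : Fin n, IsUnit (U i).det) →
      ∀ i : Fin n, (V i)ᵀ * ((U i)ᵀ)⁻¹ = (U i)⁻¹ * V i := by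
    intro hU i
    have hUt : IsUnit ((U i)ᵀ).det := by simpa [det_transpose] using hU i
    have h1 : (U i)⁻¹ * (U i * (V i)ᵀ) * ((U i)ᵀ)⁻¹ = (V i)ᵀ * ((U i)ᵀ)⁻¹ := by
      rw [← mul_assoc, Matrix.nonsing_inv_mul _ (hU i), one_mul]
    have h2 : (U i)⁻¹ * (U i * (V i)ᵀ) * ((U i)ᵀ)⁻¹ = (U i)⁻¹ * V i := by
      rw [← hsym i]
      rw [show (U i * (V i)ᵀ)ᵀ = V i * (U i)ᵀ from by rw [transpose_mul, transpose_transpose]]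
      rw [show (U i)⁻¹ * (V i * (U i)ᵀ) * ((U i)ᵀ)⁻¹
            = (U i)⁻¹ * V i * ((U i)ᵀ * ((U i)ᵀ)⁻¹) from by noncomm_ring]
      rw [Matrix.mul_nonsing_inv _ hUt, mul_one]
    rw [← h1, h2]
  constructor
  · -- forward direction
    intro hQ
    have hdiag : ∀ i : Fin n, (U i * (V i)ᵀ).PosDef := by
      intro i
      rw [posDef_iff_dotProduct_mulVec]
      constructor
      · unfold Matrix.IsHermitian
        rw [conjTranspose_eq_transpose_of_trivial, hsym i]
      · intro c hc
        set x : Fin n × Fin d → ℝ := fun p => if p.1 = i then c p.2 else 0 with hxdef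
        have hx : x ≠ 0 := by
          intro h
          apply hc
          funext a
          have := congrFun h (i, a)
          simpa [hxdef] using this
        have h2 := hQ.dotProduct_mulVec_pos hx
        rw [star_trivial, quadQ] at h2
        rw [star_trivial]
        have collapse : ∀ p q : Fin n,
            (fun a => x (p,a)) ⬝ᵥ ((if p ≤ q then U p * (V q)ᵀ else V p * (U q)ᵀ) *ᵥ (fun b => x (q,b)))
              = if p = i then (if q = i then c ⬝ᵥ ((U i * (V i)ᵀ) *ᵥ c) else 0) else 0 := by
          intro p q
          by_cases h1 : p = i
          · by_cases h2' : q = i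
            · have e1 : (fun a => x (p, a)) = c := by funext a; simp [hxdef, h1]
              have e2 : (fun b => x (q, b)) = c := by funext b; simp [hxdef, h2']
              rw [e1, e2, if_pos h1, if_pos h2', h1, h2', if_pos le_rfl]
            · have e2 : (fun b => x (q, b)) = 0 := by funext b; simp [hxdef, h2']
              rw [e2, mulVec_zero, dotProduct_zero, if_pos h1, if_neg h2']
          · have e1 : (fun a => x (p, a)) = 0 := by funext a; simp [hxdef, h1]
            rw [e1, zero_dotProduct, if_neg h1]
        simp only [collapse] at h2
        rwa [show (∑ p : Fin n, ∑ q : Fin n,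
            if p = i then (if q = i then c ⬝ᵥ ((U i * (V i)ᵀ) *ᵥ c) else 0) else 0)
              = c ⬝ᵥ ((U i * (V i)ᵀ) *ᵥ c) from by
          rw [Finset.sum_eq_single_of_mem i (Finset.mem_univ i)]
          · simp
          · intro b _ hb; simp [hb]] at h2
    have hU := hUdet hdiag
    have hVU := hSsym hU
    refine ⟨hdiag, ?_⟩
    intro i j hij
    have hUtj : IsUnit ((U j)ᵀ).det := by simpa [det_transpose] using hU j
    have hij' : i ≠ j := ne_of_lt hij
    have hXherm : (U i * (U j)⁻¹ * V j * (U i)ᵀ)ᵀ = U i * (U j)⁻¹ * V j * (U i)ᵀ := by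
      rw [show (U i * (U j)⁻¹ * V j * (U i)ᵀ)ᵀ = U i * ((V j)ᵀ * ((U j)⁻¹)ᵀ) * (U i)ᵀ from by
        simp only [transpose_mul, transpose_transpose]; noncomm_ring]
      rw [transpose_nonsing_inv, hVU j]
      noncomm_ring
    have hX2 : U i * (V j)ᵀ * (((U j)ᵀ)⁻¹ * (U i)ᵀ) = U i * (U j)⁻¹ * V j * (U i)ᵀ := by
      rw [show U i * (V j)ᵀ * (((U j)ᵀ)⁻¹ * (U i)ᵀ)
            = U i * ((V j)ᵀ * ((U j)ᵀ)⁻¹) * (U i)ᵀ from by noncomm_ring, hVU j]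
      noncomm_ring
    have hX3 : (U i * (U j)⁻¹) * (V j * (U i)ᵀ) = U i * (U j)⁻¹ * V j * (U i)ᵀ := by
      noncomm_ring
    have hX4 : U i * (U j)⁻¹ * (U j * (V j)ᵀ) * (((U j)ᵀ)⁻¹ * (U i)ᵀ)
        = U i * (U j)⁻¹ * V j * (U i)ᵀ := by
      rw [show U i * (U j)⁻¹ * (U j * (V j)ᵀ) * (((U j)ᵀ)⁻¹ * (U i)ᵀ)
            = U i * ((U j)⁻¹ * U j) * ((V j)ᵀ * (((U j)ᵀ)⁻¹ * (U i)ᵀ)) from by noncomm_ring]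
      rw [Matrix.nonsing_inv_mul _ (hU j), mul_one]
      rw [show U i * ((V j)ᵀ * (((U j)ᵀ)⁻¹ * (U i)ᵀ)) = U i * (V j)ᵀ * (((U j)ᵀ)⁻¹ * (U i)ᵀ) from by
        noncomm_ring]
      exact hX2
    rw [posDef_iff_dotProduct_mulVec]
    constructor
    · unfold Matrix.IsHermitian
      rw [conjTranspose_eq_transpose_of_trivial, transpose_sub, hsym i, hXherm]
    · intro c hc
      have hKt : (((U j)ᵀ)⁻¹ * (U i)ᵀ)ᵀ = U i * (U j)⁻¹ := by
        rw [transpose_mul, transpose_transpose, transpose_nonsing_inv, transpose_transpose]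
      set w : Fin d → ℝ := -((((U j)ᵀ)⁻¹ * (U i)ᵀ) *ᵥ c) with hwdef
      set x : Fin n × Fin d → ℝ :=
        fun p => if p.1 = i then c p.2 else if p.1 = j then w p.2 else 0 with hxdef
      have hx : x ≠ 0 := by
        intro h
        apply hc
        funext a
        have := congrFun h (i, a)
        simpa [hxdef] using this
      have h2 := hQ.dotProduct_mulVec_pos hx
      rw [star_trivial, quadQ] at h2
      rw [star_trivial]
      have hveci : (fun a => x (i, a)) = c := by funext a; simp [hxdef]
      have hvecj : (fun a => x (j, a)) = w := by funext a; simp [hxdef, hij'.symm]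
      have hvec0 : ∀ p : Fin n, p ≠ i → p ≠ j → (fun a => x (p, a)) = 0 := by
        intro p h1 h2'
        funext a; simp [hxdef, h1, h2']
      have hterm : ∀ p q : Fin n,
          (fun a => x (p,a)) ⬝ᵥ ((if p ≤ q then U p * (V q)ᵀ else V p * (U q)ᵀ) *ᵥ (fun b => x (q,b)))
            = if p = i then (if q = i then c ⬝ᵥ ((U i * (V i)ᵀ) *ᵥ c)
                  else if q = j then c ⬝ᵥ ((U i * (V j)ᵀ) *ᵥ w) else 0)
               else if p = j then (if q = i then w ⬝ᵥ ((V j * (U i)ᵀ) *ᵥ c)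
                  else if q = j then w ⬝ᵥ ((U j * (V j)ᵀ) *ᵥ w) else 0)
               else 0 := by
        intro p q
        by_cases h1 : p = i
        · rw [if_pos h1]
          by_cases h3 : q = i
          · rw [if_pos h3, h1, h3, hveci, if_pos le_rfl]
          · rw [if_neg h3]
            by_cases h3' : q = j
            · rw [if_pos h3', h1, h3', hveci, hvecj, if_pos hij.le]
            · rw [if_neg h3', hvec0 q h3 h3', mulVec_zero, dotProduct_zero]
        · rw [if_neg h1]
          by_cases h1' : p = j
          · rw [if_pos h1']
            by_cases h3 : q = i
            · rw [if_pos h3, h1', h3, hveci, hvecj, if_neg (not_le.2 hij)]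
            · rw [if_neg h3]
              by_cases h3' : q = j
              · rw [if_pos h3', h1', h3', hvecj, if_pos le_rfl]
              · rw [if_neg h3', hvec0 q h3 h3', mulVec_zero, dotProduct_zero]
          · rw [if_neg h1', hvec0 p h1 h1', zero_dotProduct]
      simp only [hterm] at h2
      set qii := c ⬝ᵥ ((U i * (V i)ᵀ) *ᵥ c) with hqii
      set qij := c ⬝ᵥ ((U i * (V j)ᵀ) *ᵥ w) with hqij
      set qji := w ⬝ᵥ ((V j * (U i)ᵀ) *ᵥ c) with hqji
      set qjj := w ⬝ᵥ ((U j * (V j)ᵀ) *ᵥ w) with hqjj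
      have hrow : ∀ p : Fin n,
          (∑ q : Fin n, (if p = i then (if q = i then qii else if q = j then qij else 0)
              else if p = j then (if q = i then qji else if q = j then qjj else 0) else 0))
            = (if p = i then qii + qij else if p = j then qji + qjj else 0) := by
        intro p
        by_cases h1 : p = i
        · simp only [h1, if_true, eq_self_iff_true]
          exact sum_ite_pair hij' _ _
        · by_cases h1' : p = j
          · simp only [h1, h1', if_true, eq_self_iff_true, if_neg hij'.symm, if_false]
            exact sum_ite_pair hij' _ _
          · simp only [if_neg h1, if_neg h1']
            simp
      have htot : (∑ p : Fin n, ∑ q : Fin n,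
          (if p = i then (if q = i then qii else if q = j then qij else 0)
              else if p = j then (if q = i then qji else if q = j then qjj else 0) else 0))
            = (qii + qij) + (qji + qjj) := by
        rw [Finset.sum_congr rfl fun p _ => hrow p]
        exact sum_ite_pair hij' _ _
      rw [htot] at h2
      have eij : qij = -(c ⬝ᵥ ((U i * (U j)⁻¹ * V j * (U i)ᵀ) *ᵥ c)) := by
        rw [hqij, hwdef, mulVec_neg, dotProduct_neg, mulVec_mulVec, hX2]
      have eji : qji = -(c ⬝ᵥ ((U i * (U j)⁻¹ * V j * (U i)ᵀ) *ᵥ c)) := by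
        rw [hqji, hwdef, neg_dotProduct, mv_dot, hKt, mulVec_mulVec, hX3]
      have ejj : qjj = c ⬝ᵥ ((U i * (U j)⁻¹ * V j * (U i)ᵀ) *ᵥ c) := by
        rw [hqjj, hwdef, neg_dotProduct, mulVec_neg, dotProduct_neg, neg_neg, mv_dot, hKt,
            mulVec_mulVec, mulVec_mulVec, hX4]
      rw [eij, eji, ejj] at h2
      rw [sub_mulVec, dotProduct_sub, ← hqii]
      linarith
  · -- backward direction
    rintro ⟨hdiag, hoff⟩
    have hU := hUdet hdiag
    have hVU := hSsym hU
    have hUt : ∀ i : Fin n, IsUnit ((U i)ᵀ).det := by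
      intro i; simpa [det_transpose] using hU i
    have hUinv : ∀ i : Fin n, IsUnit ((U i)⁻¹).det := by
      intro i
      rw [Matrix.det_nonsing_inv]
      exact (hU i).ringInverse
    set S : Fin n → Matrix (Fin d) (Fin d) ℝ := fun i => (U i)⁻¹ * V i with hSdef
    have idS : ∀ i : Fin n, (U i)⁻¹ * (U i * (V i)ᵀ) * ((U i)⁻¹)ᵀ = S i := by
      intro i
      rw [transpose_nonsing_inv, ← mul_assoc, Matrix.nonsing_inv_mul _ (hU i), one_mul, hVU i]
    have idD : ∀ i j : Fin n,
        (U i)⁻¹ * (U i * (V i)ᵀ - U i * (U j)⁻¹ * V j * (U i)ᵀ) * ((U i)⁻¹)ᵀ = S i - S j := by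
      intro i j
      rw [mul_sub, sub_mul, idS i]
      congr 1
      rw [transpose_nonsing_inv]
      rw [show (U i)⁻¹ * (U i * (U j)⁻¹ * V j * (U i)ᵀ) * ((U i)ᵀ)⁻¹
            = ((U i)⁻¹ * U i) * (((U j)⁻¹ * V j) * ((U i)ᵀ * ((U i)ᵀ)⁻¹)) from by noncomm_ring]
      rw [Matrix.nonsing_inv_mul _ (hU i), Matrix.mul_nonsing_inv _ (hUt i), one_mul, mul_one]
    have hS : ∀ i : Fin n, (S i).PosDef := by
      intro i
      rw [← idS i]
      exact posdef_congr (hUinv i) (hdiag i)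
    have hSd : ∀ i j : Fin n, i < j → (S i - S j).PosDef := by
      intro i j h
      rw [← idD i j]
      exact posdef_congr (hUinv i) (hoff i j h)
    set S' : ℕ → Matrix (Fin d) (Fin d) ℝ :=
      fun k => if h : k < n then S ⟨k, h⟩ else 0 with hS'def
    have h0 : S' n = 0 := by simp [hS'def]
    have hT : ∀ k, k < n → (S' k - S' (k+1)).PosDef := by
      intro k hk
      by_cases hk1 : k + 1 < n
      · have e : S' k - S' (k+1) = S ⟨k, hk⟩ - S ⟨k+1, hk1⟩ := by
          simp [hS'def, dif_pos hk, dif_pos hk1]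
        rw [e]
        exact hSd _ _ (by simp [Fin.lt_def])
      · have e : S' k - S' (k+1) = S ⟨k, hk⟩ := by
          simp [hS'def, dif_pos hk, dif_neg hk1]
        rw [e]
        exact hS _
    rw [posDef_iff_dotProduct_mulVec]
    constructor
    · unfold Matrix.IsHermitian
      rw [conjTranspose_eq_transpose_of_trivial]
      ext ⟨i, a⟩ ⟨j, b⟩
      rw [transpose_apply]
      show blockQ n d U V (j, b) (i, a) = blockQ n d U V (i, a) (j, b)
      unfold blockQ
      simp only [of_apply]
      rcases lt_trichotomy i j with h | h | h
      · rw [if_neg (not_le.2 h), if_pos h.le]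
        rw [show U i * (V j)ᵀ = (V j * (U i)ᵀ)ᵀ from by rw [transpose_mul, transpose_transpose],
            transpose_apply]
      · subst h
        rw [if_pos le_rfl, if_pos le_rfl]
        conv_rhs => rw [← hsym i]
        rw [transpose_apply]
      · rw [if_pos h.le, if_neg (not_le.2 h)]
        rw [show V i * (U j)ᵀ = (U j * (V i)ᵀ)ᵀ from by rw [transpose_mul, transpose_transpose],
            transpose_apply]
    · intro x hx
      rw [star_trivial, quadQ]
      set z : Fin n → Fin d → ℝ := fun i => (U i)ᵀ *ᵥ (fun a => x (i, a)) with hzdef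
      have hB : ∀ i j : Fin n,
          (fun a => x (i,a)) ⬝ᵥ ((if i ≤ j then U i * (V j)ᵀ else V i * (U j)ᵀ) *ᵥ (fun b => x (j,b)))
            = z i ⬝ᵥ (S' (max (i:ℕ) (j:ℕ)) *ᵥ z j) := by
        intro i j
        have hS'eval : ∀ p : Fin n, S' (p:ℕ) = (U p)⁻¹ * V p := by
          intro p
          simp only [hS'def, hSdef, p.isLt, dif_pos, Fin.eta]
        have hmid : (if i ≤ j then U i * (V j)ᵀ else V i * (U j)ᵀ)
            = U i * S' (max (i:ℕ) (j:ℕ)) * (U j)ᵀ := by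
          by_cases hle : i ≤ j
          · have hm : max (i:ℕ) (j:ℕ) = (j:ℕ) := max_eq_right (Fin.le_def.1 hle)
            rw [if_pos hle, hm, hS'eval j]
            rw [← hVU j]
            rw [show U i * ((V j)ᵀ * ((U j)ᵀ)⁻¹) * (U j)ᵀ
                  = U i * (V j)ᵀ * (((U j)ᵀ)⁻¹ * (U j)ᵀ) from by noncomm_ring]
            rw [Matrix.nonsing_inv_mul _ (hUt j), mul_one]
          · have hm : max (i:ℕ) (j:ℕ) = (i:ℕ) :=
              max_eq_left (Fin.le_def.1 (le_of_lt (not_le.1 hle)))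
            rw [if_neg hle, hm, hS'eval i]
            rw [show U i * ((U i)⁻¹ * V i) * (U j)ᵀ
                  = (U i * (U i)⁻¹) * (V i * (U j)ᵀ) from by noncomm_ring]
            rw [Matrix.mul_nonsing_inv _ (hU i), one_mul]
        rw [hmid, hzdef]
        rw [← mulVec_mulVec, ← mulVec_mulVec, dotProduct_mulVec, ← mulVec_transpose]
      simp only [hB]
      rw [maxsum n S' h0 z]
      -- now positivity of the telescoped sum
      have hzi : ∃ i : Fin n, z i ≠ 0 := by
        by_contra h
        push_neg at h
        apply hx
        funext p
        have h1 : (fun a => x (p.1, a)) = 0 := by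
          have := congrArg (fun v => ((U p.1)ᵀ)⁻¹ *ᵥ v) (h p.1)
          simpa [hzdef, mulVec_mulVec, Matrix.nonsing_inv_mul _ (hUt p.1)] using this
        have := congrFun h1 p.2
        simpa using this
      set sset : Finset (Fin n) := Finset.univ.filter (fun i => z i ≠ 0) with hsset
      have hne : sset.Nonempty := by
        obtain ⟨i, hi⟩ := hzi
        exact ⟨i, by simp [hsset, hi]⟩
      set i0 : Fin n := sset.min' hne with hi0def
      have hi0mem : i0 ∈ sset := Finset.min'_mem _ _
      have hi0 : z i0 ≠ 0 := by simpa [hsset] using hi0mem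
      have hmin : ∀ i : Fin n, z i ≠ 0 → i0 ≤ i := by
        intro i hi
        exact Finset.min'_le _ _ (by simp [hsset, hi])
      have hy : (∑ i : Fin n, if (i:ℕ) ≤ (i0:ℕ) then z i else 0) = z i0 := by
        rw [Finset.sum_eq_single_of_mem i0 (Finset.mem_univ i0)]
        · rw [if_pos le_rfl]
        · intro b _ hb
          by_cases hzb : z b = 0
          · simp [hzb]
          · rw [if_neg]
            intro hble
            have : b < i0 := lt_of_le_of_ne (Fin.le_def.2 hble) hb
            exact absurd (hmin b hzb) (not_le.2 this)
      apply Finset.sum_pos'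
      · intro k hk
        have := (posSemidef_iff_dotProduct_mulVec.mp (hT k (Finset.mem_range.1 hk)).posSemidef).2
          (∑ i : Fin n, if (i:ℕ) ≤ k then z i else 0)
        simpa [star_trivial] using this
      · refine ⟨(i0:ℕ), Finset.mem_range.2 i0.isLt, ?_⟩
        have hpos := (hT (i0:ℕ) i0.isLt).dotProduct_mulVec_pos (x := ∑ i : Fin n, if (i:ℕ) ≤ (i0:ℕ) then z i else 0)
          (by rw [hy]; exact hi0)
        simpa [star_trivial] using hpos
end
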